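/- arXiv:1205.0092 — 11 statements merged into one kernel-verified Lean document; each statement's English description precedes it below -/
import Mathlib

section
/- For θ₁ > 0, θ₂ > 0, b > 0 and a + b > 0, the integral of (au+b)^{-(θ₁+θ₂)} against the Beta(θ₁,θ₂) distribution on [0,1] equals (a+b)^{-θ₁} b^{-θ₂}. -/
open MeasureTheory

lemma real_betaIntegral {p q : ℝ} (hp : 0 < p) (hq : 0 < q) :
    ∫ x in (0:ℝ)..1, x ^ (p-1) * (1-x) ^ (q-1)
      = Real.Gamma p * Real.Gamma q / Real.Gamma (p+q) := by
  have h := Complex.Gamma_mul_Gamma_eq_betaIntegral (s := (p:ℂ)) (t := (q:ℂ))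
    (by simpa using hp) (by simpa using hq)
  have hbeta : Complex.betaIntegral p q
      = ((∫ x in (0:ℝ)..1, x ^ (p-1) * (1-x) ^ (q-1) : ℝ) : ℂ) := by
    rw [Complex.betaIntegral, ← intervalIntegral.integral_ofReal]
    apply intervalIntegral.integral_congr
    intro x hx
    rw [Set.uIcc_of_le (by norm_num)] at hx
    push_cast
    rw [Complex.ofReal_cpow hx.1, Complex.ofReal_cpow (by linarith [hx.2])]
    push_cast
    ring
  rw [hbeta, ← Complex.ofReal_add, Complex.Gamma_ofReal, Complex.Gamma_ofReal,
    Complex.Gamma_ofReal] at h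
  have hG : Real.Gamma (p+q) ≠ 0 := (Real.Gamma_pos_of_pos (by linarith)).ne'
  have h' : Real.Gamma p * Real.Gamma q
      = Real.Gamma (p+q) * ∫ x in (0:ℝ)..1, x ^ (p-1) * (1-x) ^ (q-1) := by
    exact_mod_cast h
  field_simp [hG]
  linarith [h']

lemma key_alg {θ₁ θ₂ b A D t : ℝ} (hb : 0 < b)
    (hA : 0 < A) (hD : 0 < D) (ht0 : 0 < t) (ht1 : t < 1) :
    (b*A/D^2) * (b*t/D) ^ (θ₁-1) * (A*(1-t)/D) ^ (θ₂-1) * (b*A/D) ^ (-(θ₁+θ₂))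
      = A ^ (-θ₁) * b ^ (-θ₂) * t ^ (θ₁-1) * (1-t) ^ (θ₂-1) := by
  have h1t : 0 < 1 - t := by linarith
  have hL : 0 < (b*A/D^2) * (b*t/D) ^ (θ₁-1) * (A*(1-t)/D) ^ (θ₂-1) * (b*A/D) ^ (-(θ₁+θ₂)) := by
    positivity
  have hR : 0 < A ^ (-θ₁) * b ^ (-θ₂) * t ^ (θ₁-1) * (1-t) ^ (θ₂-1) := by positivity
  apply Real.log_injOn_pos (Set.mem_Ioi.2 hL) (Set.mem_Ioi.2 hR)
  rw [Real.log_mul (by positivity) (by positivity), Real.log_mul (by positivity) (by positivity),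
    Real.log_mul (by positivity) (by positivity), Real.log_mul (by positivity) (by positivity),
    Real.log_mul (by positivity) (by positivity), Real.log_mul (by positivity) (by positivity),
    Real.log_rpow (by positivity), Real.log_rpow (by positivity), Real.log_rpow (by positivity),
    Real.log_rpow (by positivity), Real.log_rpow (by positivity), Real.log_rpow (by positivity),
    Real.log_rpow (by positivity), Real.log_div (by positivity) (by positivity),
    Real.log_div (by positivity) (by positivity), Real.log_div (by positivity) (by positivity),
    Real.log_div (by positivity) (by positivity), Real.log_mul (by positivity) (by positivity),
    Real.log_mul (by positivity) (by positivity), Real.log_mul (by positivity) (by positivity),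
    Real.log_pow]
  push_cast
  ring

/-- Beta(a,b) density on [0,1]. -/
noncomputable def betaDensity (a b u : ℝ) : ℝ :=
  Real.Gamma (a + b) / (Real.Gamma a * Real.Gamma b) * u ^ (a - 1) * (1 - u) ^ (b - 1)

/-- One-dimensional Markov–Krein (Cifarelli–Regazzini) identity. -/
theorem stmt0 (θ₁ θ₂ a b : ℝ) (hθ₁ : 0 < θ₁) (hθ₂ : 0 < θ₂) (hb : 0 < b)
    (hab : 0 < a + b) :
    ∫ u in Set.Icc (0:ℝ) 1, betaDensity θ₁ θ₂ u * (a * u + b) ^ (-(θ₁ + θ₂))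
      = (a + b) ^ (-θ₁) * b ^ (-θ₂) := by
  have hG1 := Real.Gamma_pos_of_pos hθ₁
  have hG2 := Real.Gamma_pos_of_pos hθ₂
  have hG12 := Real.Gamma_pos_of_pos (add_pos hθ₁ hθ₂)
  set C : ℝ := Real.Gamma (θ₁ + θ₂) / (Real.Gamma θ₁ * Real.Gamma θ₂) with hC
  set f : ℝ → ℝ := fun t => b * t / (a + b - a * t) with hf
  have hDpos : ∀ t ∈ Set.Ioo (0:ℝ) 1, 0 < a + b - a * t := by
    intro t ht
    nlinarith [mul_pos (sub_pos.2 ht.2) hab, mul_pos ht.1 hb]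
  have hderiv : ∀ t ∈ Set.Ioo (0:ℝ) 1,
      HasDerivWithinAt f (b * (a+b) / (a + b - a * t)^2) (Set.Ioo (0:ℝ) 1) t := by
    intro t ht
    have hD := hDpos t ht
    have h1 : HasDerivAt (fun t : ℝ => b * t) b t := by
      simpa using (hasDerivAt_id t).const_mul b
    have h2 : HasDerivAt (fun t : ℝ => a + b - a * t) (-a) t := by
      simpa using ((hasDerivAt_id t).const_mul a).const_sub (a + b)
    have h3 := h1.div h2 hD.ne'
    have : HasDerivAt f ((b * (a + b - a * t) - b * t * (-a)) / (a + b - a * t)^2) t := h3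
    have he : (b * (a + b - a * t) - b * t * (-a)) / (a + b - a * t)^2
        = b * (a+b) / (a + b - a * t)^2 := by ring_nf
    rw [he] at this
    exact this.hasDerivWithinAt
  have hinj : Set.InjOn f (Set.Ioo (0:ℝ) 1) := by
    intro t₁ h₁ t₂ h₂ heq
    have hD₁ := hDpos t₁ h₁
    have hD₂ := hDpos t₂ h₂
    simp only [hf] at heq
    field_simp at heq
    rw [div_eq_iff (ne_of_gt (by linarith [mul_comm t₁ a]))] at heq
    have : b * (a+b) * t₁ = b * (a+b) * t₂ := by nlinarith [heq]
    exact mul_left_cancel₀ (by positivity) this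
  have himg : f '' Set.Ioo 0 1 = Set.Ioo 0 1 := by
    ext u
    constructor
    · rintro ⟨t, ht, rfl⟩
      have hD := hDpos t ht
      constructor
      · have : 0 < b * t := mul_pos hb ht.1
        positivity
      · rw [hf]
        simp only
        rw [div_lt_one hD]
        nlinarith [mul_pos (sub_pos.2 ht.2) hab]
    · intro hu
      have haub : 0 < a * u + b := by nlinarith [mul_pos hu.1 hab, mul_pos (sub_pos.2 hu.2) hb]
      refine ⟨(a+b) * u / (a*u + b), ⟨div_pos (mul_pos hab hu.1) haub, ?_⟩, ?_⟩
      · rw [div_lt_one haub]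
        nlinarith [mul_pos (sub_pos.2 hu.2) hb]
      · have ht : (a+b) * u / (a*u + b) ∈ Set.Ioo (0:ℝ) 1 := by
          refine ⟨div_pos (mul_pos hab hu.1) haub, ?_⟩
          rw [div_lt_one haub]; nlinarith [mul_pos (sub_pos.2 hu.2) hb]
        have hD := hDpos _ ht
        rw [hf]
        simp only
        rw [div_eq_iff hD.ne']
        field_simp
        ring
  rw [MeasureTheory.integral_Icc_eq_integral_Ioo]
  calc ∫ u in Set.Ioo (0:ℝ) 1, betaDensity θ₁ θ₂ u * (a * u + b) ^ (-(θ₁ + θ₂))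
      = ∫ u in f '' Set.Ioo (0:ℝ) 1, betaDensity θ₁ θ₂ u * (a * u + b) ^ (-(θ₁ + θ₂)) := by
        rw [himg]
    _ = ∫ t in Set.Ioo (0:ℝ) 1, |b * (a+b) / (a + b - a * t)^2| •
          (betaDensity θ₁ θ₂ (f t) * (a * (f t) + b) ^ (-(θ₁ + θ₂))) :=
        integral_image_eq_integral_abs_deriv_smul measurableSet_Ioo hderiv hinj _
    _ = ∫ t in Set.Ioo (0:ℝ) 1, ((a+b) ^ (-θ₁) * b ^ (-θ₂)) * betaDensity θ₁ θ₂ t := by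
        apply setIntegral_congr_fun measurableSet_Ioo
        intro t ht
        have hD := hDpos t ht
        have hft : f t = b * t / (a + b - a * t) := rfl
        have e1 : 1 - f t = (a+b) * (1-t) / (a + b - a * t) := by
          rw [hft, eq_div_iff hD.ne', sub_mul, div_mul_cancel₀ _ hD.ne']; ring
        have e2 : a * f t + b = b * (a+b) / (a + b - a * t) := by
          rw [hft]; field_simp; ring
        have key := key_alg (θ₁ := θ₁) (θ₂ := θ₂) (D := a + b - a * t)
          hb hab hD ht.1 ht.2
        simp only [betaDensity]; rw [e1, e2]
        simp only [smul_eq_mul, betaDensity, e1, e2, hft,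
          abs_of_pos (show (0:ℝ) < b * (a+b) / (a + b - a * t)^2 by positivity)]
        rw [← hC]
        linear_combination C * key
    _ = ((a+b) ^ (-θ₁) * b ^ (-θ₂)) * ∫ t in Set.Ioo (0:ℝ) 1, betaDensity θ₁ θ₂ t := by
        rw [integral_const_mul]
    _ = (a + b) ^ (-θ₁) * b ^ (-θ₂) := by
        have : ∫ t in Set.Ioo (0:ℝ) 1, betaDensity θ₁ θ₂ t = 1 := by
          have hbi := real_betaIntegral hθ₁ hθ₂
          rw [intervalIntegral.integral_of_le (by norm_num : (0:ℝ) ≤ 1),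
            MeasureTheory.integral_Ioc_eq_integral_Ioo] at hbi
          simp only [betaDensity]
          rw [show (fun t => Real.Gamma (θ₁ + θ₂) / (Real.Gamma θ₁ * Real.Gamma θ₂)
              * t ^ (θ₁ - 1) * (1 - t) ^ (θ₂ - 1))
            = (fun t => Real.Gamma (θ₁ + θ₂) / (Real.Gamma θ₁ * Real.Gamma θ₂)
              * (t ^ (θ₁ - 1) * (1 - t) ^ (θ₂ - 1))) by funext t; ring,
            integral_const_mul, hbi]
          field_simp
        rw [this, mul_one]
end

section
/- Let 0 < α < 1, b > 0, a + b > 0, a' + b > 0 and a ≠ a'. Then ∫₀¹ B_{1-α,1+α}(du) / ((au+b)(a'u+b)) = [(a+b)^α − (a'+b)^α] / (α (a−a') b^{1+α}), where B_{1-α,1+α} is the Beta(1−α, 1+α) distribution. -/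
open MeasureTheory

/-- Pointwise comparison of complex and real beta integrands on `(0,1)`. -/
lemma ofReal_beta_eq (p q : ℝ) {x : ℝ} (hx : x ∈ Set.Ioo (0:ℝ) 1) :
    (x:ℂ) ^ ((p:ℂ) + 1 - 1) * (1 - (x:ℂ)) ^ ((q:ℂ) + 1 - 1)
      = ((x ^ p * (1 - x) ^ q : ℝ) : ℂ) := by
  obtain ⟨h0, h1⟩ := hx
  have e1 : ((x ^ p : ℝ) : ℂ) = (x:ℂ) ^ (p:ℂ) := Complex.ofReal_cpow h0.le p
  have e2 : (((1-x) ^ q : ℝ) : ℂ) = ((1-x : ℝ):ℂ) ^ (q:ℂ) :=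
    Complex.ofReal_cpow (by linarith) q
  push_cast at e1 e2 ⊢
  rw [add_sub_cancel_right, add_sub_cancel_right, ← e1, ← e2]

/-- Integrability of the beta integrand. -/
lemma integrableOn_beta (p q : ℝ) (hp : -1 < p) (hq : -1 < q) :
    IntegrableOn (fun u : ℝ => u ^ p * (1 - u) ^ q) (Set.Ioo (0:ℝ) 1) := by
  have hc := Complex.betaIntegral_convergent (u := (p:ℂ)+1) (v := (q:ℂ)+1)
    (by simp; linarith) (by simp; linarith)
  have h1 : IntegrableOn (fun x : ℝ => (x:ℂ) ^ ((p:ℂ)+1-1) * (1 - (x:ℂ)) ^ ((q:ℂ)+1-1))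
      (Set.Ioo (0:ℝ) 1) := ((intervalIntegrable_iff_integrableOn_Ioc_of_le (by norm_num)).mp
        hc).mono_set Set.Ioo_subset_Ioc_self
  have h2 : IntegrableOn (fun x : ℝ => ((x ^ p * (1 - x) ^ q : ℝ) : ℂ)) (Set.Ioo (0:ℝ) 1) :=
    h1.congr_fun (fun x hx => ofReal_beta_eq p q hx) measurableSet_Ioo
  exact h2.re.congr (Filter.Eventually.of_forall fun x => by simp)

/-- The real Beta integral. -/
lemma realBeta (s t : ℝ) (hs : 0 < s) (ht : 0 < t) :
    ∫ u in Set.Ioo (0:ℝ) 1, u ^ (s - 1) * (1 - u) ^ (t - 1)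
      = Real.Gamma s * Real.Gamma t / Real.Gamma (s + t) := by
  have h := Complex.Gamma_mul_Gamma_eq_betaIntegral (s := (s:ℂ)) (t := (t:ℂ))
    (by simpa using hs) (by simpa using ht)
  have hbeta : Complex.betaIntegral (s:ℂ) (t:ℂ)
      = ((∫ u in Set.Ioo (0:ℝ) 1, u ^ (s - 1) * (1 - u) ^ (t - 1) : ℝ) : ℂ) := by
    rw [Complex.betaIntegral, intervalIntegral.integral_of_le (by norm_num),
      MeasureTheory.integral_Ioc_eq_integral_Ioo]
    trans (∫ x in Set.Ioo (0:ℝ) 1, ((x ^ (s-1) * (1-x) ^ (t-1) : ℝ) : ℂ))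
    · refine setIntegral_congr_fun measurableSet_Ioo (fun x hx => ?_)
      have := ofReal_beta_eq (s-1) (t-1) hx
      push_cast at this ⊢
      convert this using 3 <;> ring
    · exact integral_ofReal
  rw [hbeta, Complex.Gamma_ofReal, Complex.Gamma_ofReal, ← Complex.ofReal_add,
    Complex.Gamma_ofReal, ← Complex.ofReal_mul, ← Complex.ofReal_mul] at h
  have h' := Complex.ofReal_injective h
  have hG : Real.Gamma (s + t) ≠ 0 := (Real.Gamma_pos_of_pos (by linarith)).ne'
  field_simp [h']
  rw [h']; ring

lemma lin_pos {a b v : ℝ} (hb : 0 < b) (hab : 0 < a + b) (h0 : 0 ≤ v) (h1 : v ≤ 1) :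
    0 < a * v + b := by nlinarith [mul_nonneg h0 hab.le, mul_nonneg (sub_nonneg.mpr h1) hb.le]

lemma M_val (α a b : ℝ) (hα : 0 < α) (hα1 : α < 1) (hb : 0 < b) (hab : 0 < a + b) :
    ∫ u in Set.Ioo (0:ℝ) 1, u ^ (-α) * (1 - u) ^ (α - 1) / (a * u + b)
      = Real.Gamma α * Real.Gamma (1 - α) * ((a + b) ^ (α - 1) * b ^ (-α)) := by
  set φ : ℝ → ℝ := fun v => b * (1 - v) / (a * v + b) with hφdef
  have hA : ∀ v ∈ Set.Ioo (0:ℝ) 1, 0 < a * v + b := fun v hv =>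
    lin_pos hb hab hv.1.le hv.2.le
  have h1φ : ∀ v ∈ Set.Ioo (0:ℝ) 1, 1 - φ v = v * (a + b) / (a * v + b) := by
    intro v hv
    have := (hA v hv).ne'
    have : v * a + b ≠ 0 := by rw [mul_comm]; exact this
    simp only [hφdef]
    field_simp
    ring
  have h2φ : ∀ v ∈ Set.Ioo (0:ℝ) 1, a * φ v + b = b * (a + b) / (a * v + b) := by
    intro v hv
    have := (hA v hv).ne'
    simp only [hφdef]
    field_simp
    ring
  have hmem : ∀ v ∈ Set.Ioo (0:ℝ) 1, φ v ∈ Set.Ioo (0:ℝ) 1 := by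
    intro v hv
    obtain ⟨h0, h1⟩ := hv
    have hAv := hA v ⟨h0, h1⟩
    constructor
    · have : 0 < b * (1 - v) := by nlinarith
      exact div_pos this hAv
    · rw [div_lt_one hAv]
      nlinarith
  have hinv : ∀ v ∈ Set.Ioo (0:ℝ) 1, φ (φ v) = v := by
    intro v hv
    have hAv := (hA v hv).ne'
    have e1 := h1φ v hv
    have e2 := h2φ v hv
    show b * (1 - φ v) / (a * φ v + b) = v
    rw [e1, e2]
    have : v * a + b ≠ 0 := by rw [mul_comm]; exact hAv
    field_simp
  have himg : φ '' Set.Ioo (0:ℝ) 1 = Set.Ioo (0:ℝ) 1 := by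
    apply Set.Subset.antisymm
    · rintro _ ⟨v, hv, rfl⟩; exact hmem v hv
    · intro x hx; exact ⟨φ x, hmem x hx, hinv x hx⟩
  have hinj : Set.InjOn φ (Set.Ioo (0:ℝ) 1) := by
    intro x hx y hy h
    rw [← hinv x hx, ← hinv y hy, h]
  have hderiv : ∀ v ∈ Set.Ioo (0:ℝ) 1,
      HasDerivWithinAt φ (-(b * (a + b)) / (a * v + b) ^ 2) (Set.Ioo (0:ℝ) 1) v := by
    intro v hv
    have hAv := hA v hv
    have h1 : HasDerivAt (fun v : ℝ => b * (1 - v)) (-b) v := by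
      simpa using ((hasDerivAt_id v).const_sub 1).const_mul b
    have h2 : HasDerivAt (fun v : ℝ => a * v + b) a v := by
      simpa using ((hasDerivAt_id v).const_mul a).add_const b
    have := h1.div h2 hAv.ne'
    have heq : (-b * (a * v + b) - b * (1 - v) * a) / (a * v + b) ^ 2
        = -(b * (a + b)) / (a * v + b) ^ 2 := by
      field_simp
      ring
    rw [heq] at this
    exact this.hasDerivWithinAt
  calc ∫ u in Set.Ioo (0:ℝ) 1, u ^ (-α) * (1 - u) ^ (α - 1) / (a * u + b)
      = ∫ u in φ '' Set.Ioo (0:ℝ) 1, u ^ (-α) * (1 - u) ^ (α - 1) / (a * u + b) := by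
        rw [himg]
    _ = ∫ v in Set.Ioo (0:ℝ) 1, |(-(b * (a + b)) / (a * v + b) ^ 2)| •
          ((φ v) ^ (-α) * (1 - φ v) ^ (α - 1) / (a * φ v + b)) :=
        integral_image_eq_integral_abs_deriv_smul measurableSet_Ioo hderiv hinj _
    _ = ∫ v in Set.Ioo (0:ℝ) 1,
          ((a + b) ^ (α - 1) * b ^ (-α)) * (v ^ (α - 1) * (1 - v) ^ (-α)) := by
        refine setIntegral_congr_fun measurableSet_Ioo (fun v hv => ?_)
        obtain ⟨h0, h1⟩ := hv
        have hAv := hA v ⟨h0, h1⟩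
        have hw : 0 < 1 - v := by linarith
        have hc : 0 < a + b := hab
        rw [smul_eq_mul, h1φ v ⟨h0, h1⟩, h2φ v ⟨h0, h1⟩]
        rw [show φ v = b * (1 - v) / (a * v + b) from rfl]
        rw [abs_div, abs_neg, abs_of_pos (by positivity), abs_of_pos (by positivity)]
        rw [Real.rpow_neg (by positivity), Real.rpow_neg (by positivity),
          Real.rpow_neg (by positivity),
          Real.rpow_sub (by positivity), Real.rpow_sub (by positivity),
          Real.rpow_sub (by positivity), Real.rpow_one, Real.rpow_one, Real.rpow_one,
          Real.div_rpow (by positivity) hAv.le, Real.div_rpow (by positivity) hAv.le,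
          Real.mul_rpow hb.le hw.le, Real.mul_rpow h0.le hc.le]
        have hbα : (0:ℝ) < b ^ α := Real.rpow_pos_of_pos hb α
        have hwα : (0:ℝ) < (1 - v) ^ α := Real.rpow_pos_of_pos hw α
        have hvα : (0:ℝ) < v ^ α := Real.rpow_pos_of_pos h0 α
        have hAα : (0:ℝ) < (a * v + b) ^ α := Real.rpow_pos_of_pos hAv α
        have hcα : (0:ℝ) < (a + b) ^ α := Real.rpow_pos_of_pos hc α
        field_simp
    _ = Real.Gamma α * Real.Gamma (1 - α) * ((a + b) ^ (α - 1) * b ^ (-α)) := by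
        rw [integral_const_mul]
        have hB : ∫ v in Set.Ioo (0:ℝ) 1, v ^ (α - 1) * (1 - v) ^ (-α)
            = Real.Gamma α * Real.Gamma (1 - α) := by
          have := realBeta α (1 - α) hα (by linarith)
          simpa [show (1 - α) - 1 = -α by ring, show α + (1 - α) = (1:ℝ) by ring,
            Real.Gamma_one] using this
        rw [hB]
        ring

lemma integrableOn_beta_mul (p q : ℝ) (hp : -1 < p) (hq : -1 < q) (r : ℝ → ℝ)
    (hr : ContinuousOn r (Set.Ioo (0:ℝ) 1)) (C : ℝ) (hC : ∀ u ∈ Set.Ioo (0:ℝ) 1, |r u| ≤ C) :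
    IntegrableOn (fun u : ℝ => u ^ p * (1 - u) ^ q * r u) (Set.Ioo (0:ℝ) 1) := by
  have hbeta := integrableOn_beta p q hp hq
  refine Integrable.mono' (hbeta.const_mul C) ?_ ?_
  · refine ContinuousOn.aestronglyMeasurable ?_ measurableSet_Ioo
    refine ContinuousOn.mul (ContinuousOn.mul ?_ ?_) hr
    · intro u hu
      exact (Real.continuousAt_rpow_const u p (Or.inl hu.1.ne')).continuousWithinAt
    · intro u hu
      exact (ContinuousAt.comp (Real.continuousAt_rpow_const (1-u) q
        (Or.inl (by have := hu.2; intro h; linarith [sub_eq_zero.mp h])))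
        (continuous_const.sub continuous_id).continuousAt).continuousWithinAt
  · rw [ae_restrict_iff' measurableSet_Ioo]
    refine Filter.Eventually.of_forall (fun u hu => ?_)
    obtain ⟨h0, h1⟩ := hu
    have hup : (0:ℝ) ≤ u ^ p := Real.rpow_nonneg h0.le p
    have huq : (0:ℝ) ≤ (1-u) ^ q := Real.rpow_nonneg (by linarith) q
    rw [Real.norm_eq_abs, abs_mul, abs_of_nonneg (mul_nonneg hup huq)]
    calc u ^ p * (1-u) ^ q * |r u| ≤ u ^ p * (1-u) ^ q * C := by
          exact mul_le_mul_of_nonneg_left (hC u ⟨h0, h1⟩) (mul_nonneg hup huq)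
      _ = C * (u ^ p * (1-u) ^ q) := by ring

lemma cont_ratio (a b c : ℝ) (hb : 0 < b) (hab : 0 < a + b) :
    ContinuousOn (fun u : ℝ => c / (a * u + b)) (Set.Ioo (0:ℝ) 1) := by
  apply ContinuousOn.div continuousOn_const
  · exact ((continuous_const.mul continuous_id).add continuous_const).continuousOn
  · exact fun u hu => (lin_pos hb hab hu.1.le hu.2.le).ne'

lemma ratio_bound (a b : ℝ) (hb : 0 < b) (hab : 0 < a + b) {c : ℝ} :
    ∀ u ∈ Set.Ioo (0:ℝ) 1, |c / (a * u + b)| ≤ |c| / min b (a + b) := by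
  intro u hu
  have hAu := lin_pos hb hab hu.1.le hu.2.le
  have hm : 0 < min b (a + b) := lt_min hb hab
  have hle : min b (a + b) ≤ a * u + b := by
    rcases le_total a 0 with h | h
    · calc min b (a+b) ≤ a + b := min_le_right _ _
        _ ≤ a * u + b := by nlinarith [hu.2.le]
    · calc min b (a+b) ≤ b := min_le_left _ _
        _ ≤ a * u + b := by nlinarith [hu.1.le]
  rw [abs_div, abs_of_pos hAu]
  gcongr

lemma G_val (α a b : ℝ) (hα : 0 < α) (hα1 : α < 1) (hb : 0 < b) (hab : 0 < a + b) :
    ∫ u in Set.Ioo (0:ℝ) 1, u ^ (-α) * (1 - u) ^ α * (a / (a * u + b))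
      = Real.Gamma α * Real.Gamma (1 - α) * ((a + b) ^ α * b ^ (-α) - 1) := by
  have hI1 : IntegrableOn (fun u : ℝ => u ^ (-α) * (1 - u) ^ (α - 1)) (Set.Ioo (0:ℝ) 1) :=
    integrableOn_beta (-α) (α - 1) (by linarith) (by linarith)
  have hI2 : IntegrableOn (fun u : ℝ => u ^ (-α) * (1 - u) ^ (α - 1) * ((a+b) / (a * u + b)))
      (Set.Ioo (0:ℝ) 1) :=
    integrableOn_beta_mul (-α) (α - 1) (by linarith) (by linarith) _ (cont_ratio a b (a+b) hb hab)
      _ (ratio_bound a b hb hab)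
  have hK : ∫ u in Set.Ioo (0:ℝ) 1, u ^ (-α) * (1 - u) ^ (α - 1)
      = Real.Gamma α * Real.Gamma (1 - α) := by
    have := realBeta (1 - α) α (by linarith) hα
    simpa [show (1 - α) - 1 = -α by ring, show (1 - α) + α = (1:ℝ) by ring,
      Real.Gamma_one, mul_comm] using this
  have hpt : ∀ u ∈ Set.Ioo (0:ℝ) 1,
      u ^ (-α) * (1 - u) ^ α * (a / (a * u + b))
        = u ^ (-α) * (1 - u) ^ (α - 1) * ((a+b) / (a * u + b))
          - u ^ (-α) * (1 - u) ^ (α - 1) := by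
    intro u hu
    obtain ⟨h0, h1⟩ := hu
    have hAu := lin_pos hb hab h0.le h1.le
    have hw : (0:ℝ) < 1 - u := by linarith
    have he : (1 - u) ^ (α - 1) = (1 - u) ^ α / (1 - u) := by
      rw [Real.rpow_sub hw, Real.rpow_one]
    rw [he]
    have : u * a + b ≠ 0 := by linarith
    field_simp
    ring
  rw [setIntegral_congr_fun measurableSet_Ioo hpt, integral_sub hI2 hI1, hK]
  have hM : ∫ u in Set.Ioo (0:ℝ) 1, u ^ (-α) * (1 - u) ^ (α - 1) * ((a+b) / (a * u + b))
      = (a + b) * ∫ u in Set.Ioo (0:ℝ) 1, u ^ (-α) * (1 - u) ^ (α - 1) / (a * u + b) := by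
    rw [← integral_const_mul]
    refine setIntegral_congr_fun measurableSet_Ioo (fun u hu => ?_)
    ring
  rw [hM, M_val α a b hα hα1 hb hab]
  have : (a + b) ^ (α - 1) = (a + b) ^ α / (a + b) := by
    rw [Real.rpow_sub hab, Real.rpow_one]
  rw [this]
  field_simp

theorem stmt1 (α a a' b : ℝ) (hα : 0 < α) (hα1 : α < 1) (hb : 0 < b)
    (hab : 0 < a + b) (hab' : 0 < a' + b) (haa' : a ≠ a') :
    ∫ u in Set.Icc (0:ℝ) 1, betaDensity (1 - α) (1 + α) u / ((a * u + b) * (a' * u + b))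
      = ((a + b) ^ α - (a' + b) ^ α) / (α * (a - a') * b ^ (1 + α)) := by
  rw [integral_Icc_eq_integral_Ioo]
  have hIa : IntegrableOn (fun u : ℝ => u ^ (-α) * (1 - u) ^ α * (a / (a * u + b)))
      (Set.Ioo (0:ℝ) 1) :=
    integrableOn_beta_mul (-α) α (by linarith) (by linarith) _
      (cont_ratio a b a hb hab) _ (ratio_bound a b hb hab)
  have hIa' : IntegrableOn (fun u : ℝ => u ^ (-α) * (1 - u) ^ α * (a' / (a' * u + b)))
      (Set.Ioo (0:ℝ) 1) :=
    integrableOn_beta_mul (-α) α (by linarith) (by linarith) _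
      (cont_ratio a' b a' hb hab') _ (ratio_bound a' b hb hab')
  have hsub : a - a' ≠ 0 := sub_ne_zero_of_ne haa'
  have hΓα : 0 < Real.Gamma α := Real.Gamma_pos_of_pos hα
  have hΓα' : 0 < Real.Gamma (1 - α) := Real.Gamma_pos_of_pos (by linarith)
  have hpt : ∀ u ∈ Set.Ioo (0:ℝ) 1,
      betaDensity (1 - α) (1 + α) u / ((a * u + b) * (a' * u + b))
        = (Real.Gamma 2 / (Real.Gamma (1 - α) * Real.Gamma (1 + α)) * (b * (a - a'))⁻¹) *
          (u ^ (-α) * (1 - u) ^ α * (a / (a * u + b))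
            - u ^ (-α) * (1 - u) ^ α * (a' / (a' * u + b))) := by
    intro u hu
    have hAu := lin_pos hb hab hu.1.le hu.2.le
    have hAu' := lin_pos hb hab' hu.1.le hu.2.le
    rw [betaDensity, show (1 - α) + (1 + α) = (2:ℝ) by ring,
      show (1 - α) - 1 = -α by ring, show (1 + α) - 1 = α by ring]
    rw [div_mul_eq_mul_div, mul_comm]
    have : u * a + b ≠ 0 := by linarith
    have : u * a' + b ≠ 0 := by linarith
    field_simp
    ring
  rw [setIntegral_congr_fun measurableSet_Ioo hpt, integral_const_mul,
    integral_sub hIa hIa', G_val α a b hα hα1 hb hab, G_val α a' b hα hα1 hb hab']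
  rw [Real.Gamma_two, show (1:ℝ) + α = α + 1 by ring, Real.Gamma_add_one hα.ne']
  rw [Real.rpow_add hb, Real.rpow_one, Real.rpow_neg hb.le]
  have hbα : (0:ℝ) < b ^ α := Real.rpow_pos_of_pos hb α
  field_simp
  ring
end

section
/- For any x, u ∈ [0,1] and positive integer n, x((1-u)x+u)^n + (1-x)((1-u)x)^n − x^n = u² · Σ_{k=2}^n C(n,k)(1-u)^{n-k} u^{k-2}(x^{n-k+1} − x^n). -/
theorem stmt3 (x u : ℝ) (hx : x ∈ Set.Icc (0:ℝ) 1) (hu : u ∈ Set.Icc (0:ℝ) 1)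
    (n : ℕ) (hn : 1 ≤ n) :
    x * ((1 - u) * x + u) ^ n + (1 - x) * ((1 - u) * x) ^ n - x ^ n
      = u ^ 2 * ∑ k ∈ Finset.Icc 2 n, (n.choose k : ℝ) * (1 - u) ^ (n - k) * u ^ (k - 2)
          * (x ^ (n - k + 1) - x ^ n) := by
  set f : ℕ → ℝ := fun k => (n.choose k : ℝ) * (1 - u) ^ (n - k) * u ^ k with hf
  have hterm : ∀ k ∈ Finset.Icc 2 n,
      u ^ 2 * ((n.choose k : ℝ) * (1 - u) ^ (n - k) * u ^ (k - 2) * (x ^ (n - k + 1) - x ^ n))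
        = f k * x ^ (n - k + 1) - f k * x ^ n := by
    intro k hk
    obtain ⟨hk2, hkn⟩ := Finset.mem_Icc.mp hk
    have hu2 : u ^ 2 * u ^ (k - 2) = u ^ k := by
      rw [← pow_add]; congr 1; omega
    simp only [hf, ← hu2]; ring
  have hsum1 : ∑ k ∈ Finset.range (n + 1), f k = 1 := by
    calc ∑ k ∈ Finset.range (n + 1), f k
        = ∑ k ∈ Finset.range (n + 1), u ^ k * (1 - u) ^ (n - k) * (n.choose k : ℝ) :=
          Finset.sum_congr rfl (fun k _ => by simp only [hf]; ring)
      _ = (u + (1 - u)) ^ n := (add_pow u (1 - u) n).symm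
      _ = 1 := by norm_num
  have hsum2 : ∑ k ∈ Finset.range (n + 1), f k * x ^ (n - k) = ((1 - u) * x + u) ^ n := by
    calc ∑ k ∈ Finset.range (n + 1), f k * x ^ (n - k)
        = ∑ k ∈ Finset.range (n + 1), u ^ k * ((1 - u) * x) ^ (n - k) * (n.choose k : ℝ) :=
          Finset.sum_congr rfl (fun k _ => by simp only [hf, mul_pow]; ring)
      _ = (u + (1 - u) * x) ^ n := (add_pow u ((1 - u) * x) n).symm
      _ = ((1 - u) * x + u) ^ n := by ring
  have hsplit : ∀ g : ℕ → ℝ, ∑ k ∈ Finset.Icc 2 n, g k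
      = (∑ k ∈ Finset.range (n + 1), g k) - g 0 - g 1 := by
    intro g
    rw [← Finset.Ico_add_one_right_eq_Icc, Finset.sum_Ico_eq_sub _ (by omega : 2 ≤ n + 1)]
    rw [Finset.range_eq_Ico] at *
    simp [Finset.sum_range_succ, Finset.sum_range_one]
    ring
  have key : u ^ 2 * ∑ k ∈ Finset.Icc 2 n, (n.choose k : ℝ) * (1 - u) ^ (n - k) * u ^ (k - 2)
          * (x ^ (n - k + 1) - x ^ n)
      = (∑ k ∈ Finset.Icc 2 n, f k * x ^ (n - k + 1))
        - (∑ k ∈ Finset.Icc 2 n, f k) * x ^ n := by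
    rw [Finset.mul_sum, Finset.sum_congr rfl hterm, Finset.sum_sub_distrib, Finset.sum_mul]
  rw [key, hsplit (fun k => f k * x ^ (n - k + 1)), hsplit f]
  have hA : ∑ k ∈ Finset.range (n + 1), f k * x ^ (n - k + 1)
      = x * ((1 - u) * x + u) ^ n := by
    rw [← hsum2, Finset.mul_sum]
    exact Finset.sum_congr rfl (fun k _ => by rw [pow_succ]; ring)
  rw [hA, hsum1]
  have hf0 : f 0 = (1 - u) ^ n := by simp [hf]
  have hf1 : f 1 = (n : ℝ) * (1 - u) ^ (n - 1) * u := by simp [hf]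
  have h1 : n - 1 + 1 = n := by omega
  have h0 : n - 0 + 1 = n + 1 := by omega
  rw [hf0, hf1, h1, h0]
  have hxp : x ^ (n + 1) = x ^ n * x := pow_succ x n
  have hmp : ((1 - u) * x) ^ n = (1 - u) ^ n * x ^ n := mul_pow _ _ _
  rw [hxp, hmp]
  ring
end

section
/- Let 0 < α < 1, c₁, c₂ > 0, and define A_α G(x) = ∫₀¹ B_{1-α,1+α}(du)/u² · [xG((1-u)x+u) + (1-x)G((1-u)x) − G(x)] + ∫₀¹ B_{1-α,α}(du)/((α+1)u) · [c₁G((1-u)x+u) + c₂G((1-u)x) − (c₁+c₂)G(x)]. Then for every positive integer n, |A_α(x^n)| ≤ (1 + (c₁+c₂)/(α+1)) · 2^n for all x ∈ [0,1]. -/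
open MeasureTheory

/-- Generator of the one-dimensional generalized Fleming–Viot process. -/
noncomputable def genA (α c₁ c₂ : ℝ) (G : ℝ → ℝ) (x : ℝ) : ℝ :=
  (∫ u in Set.Icc (0:ℝ) 1, betaDensity (1 - α) (1 + α) u / u ^ 2
      * (x * G ((1 - u) * x + u) + (1 - x) * G ((1 - u) * x) - G x))
  + ∫ u in Set.Icc (0:ℝ) 1, betaDensity (1 - α) α u / ((α + 1) * u)
      * (c₁ * G ((1 - u) * x + u) + c₂ * G ((1 - u) * x) - (c₁ + c₂) * G x)


lemma complex_eq_real_on (a b : ℝ) : ∀ u ∈ Set.Ioc (0:ℝ) 1,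
    (fun x : ℝ => (x:ℂ) ^ ((a:ℂ) - 1) * (1 - (x:ℂ)) ^ ((b:ℂ) - 1)) u
      = ((u ^ (a-1) * (1-u) ^ (b-1) : ℝ) : ℂ) := by
  intro u hu
  have h1 : (0:ℝ) ≤ u := hu.1.le
  have h2 : (0:ℝ) ≤ 1 - u := by linarith [hu.2]
  simp only
  rw [show ((a:ℂ) - 1) = ((a - 1 : ℝ) : ℂ) by push_cast; ring,
    show ((b:ℂ) - 1) = ((b - 1 : ℝ) : ℂ) by push_cast; ring,
    ← Complex.ofReal_cpow h1, ← Complex.ofReal_one, ← Complex.ofReal_sub,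
    ← Complex.ofReal_cpow h2]
  push_cast
  ring

lemma betaKernel_integrableOn {a b : ℝ} (ha : 0 < a) (hb : 0 < b) :
    IntegrableOn (fun u : ℝ => u ^ (a-1) * (1-u) ^ (b-1)) (Set.Icc 0 1) := by
  have hc : IntervalIntegrable (fun x : ℝ => (x:ℂ) ^ ((a:ℂ) - 1) * (1 - (x:ℂ)) ^ ((b:ℂ) - 1))
      volume 0 1 := Complex.betaIntegral_convergent (by simpa) (by simpa)
  have h1 : IntegrableOn (fun x : ℝ => (x:ℂ) ^ ((a:ℂ) - 1) * (1 - (x:ℂ)) ^ ((b:ℂ) - 1))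
      (Set.Ioc 0 1) := hc.1
  have h2 : IntegrableOn (fun u : ℝ => ((u ^ (a-1) * (1-u) ^ (b-1) : ℝ) : ℂ)) (Set.Ioc 0 1) := by
    refine h1.congr_fun (complex_eq_real_on a b) measurableSet_Ioc
  have h3 : IntegrableOn (fun u : ℝ => u ^ (a-1) * (1-u) ^ (b-1)) (Set.Ioc 0 1) := by
    simpa [IntegrableOn] using h2.re
  exact h3.congr_set_ae Ioc_ae_eq_Icc.symm

lemma betaKernel_integral {a b : ℝ} (ha : 0 < a) (hb : 0 < b) :
    ∫ u in Set.Icc (0:ℝ) 1, u ^ (a-1) * (1-u) ^ (b-1)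
      = Real.Gamma a * Real.Gamma b / Real.Gamma (a + b) := by
  have key : Complex.Gamma a * Complex.Gamma b
      = Complex.Gamma ((a:ℂ) + b) * Complex.betaIntegral a b :=
    Complex.Gamma_mul_Gamma_eq_betaIntegral (by simpa) (by simpa)
  have hIcc : ∫ u in Set.Icc (0:ℝ) 1, u ^ (a-1) * (1-u) ^ (b-1)
      = ∫ u in Set.Ioc (0:ℝ) 1, u ^ (a-1) * (1-u) ^ (b-1) :=
    (setIntegral_congr_set Ioc_ae_eq_Icc).symm
  have hbeta : Complex.betaIntegral a b
      = ((∫ u in Set.Ioc (0:ℝ) 1, u ^ (a-1) * (1-u) ^ (b-1) : ℝ) : ℂ) := by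
    rw [Complex.betaIntegral, intervalIntegral.integral_of_le zero_le_one,
      setIntegral_congr_fun measurableSet_Ioc (complex_eq_real_on a b)]
    exact integral_ofReal
  have hab : (0:ℝ) < Real.Gamma (a + b) := Real.Gamma_pos_of_pos (by linarith)
  rw [hbeta] at key
  rw [show ((a:ℂ) + b) = ((a + b : ℝ) : ℂ) by push_cast; ring] at key
  rw [Complex.Gamma_ofReal, Complex.Gamma_ofReal, Complex.Gamma_ofReal] at key
  have key2 : Real.Gamma a * Real.Gamma b
      = Real.Gamma (a + b) * ∫ u in Set.Ioc (0:ℝ) 1, u ^ (a-1) * (1-u) ^ (b-1) := by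
    exact_mod_cast key
  rw [hIcc]
  field_simp
  linarith [key2]

lemma betaDensity_integrableOn {a b : ℝ} (ha : 0 < a) (hb : 0 < b) :
    IntegrableOn (betaDensity a b) (Set.Icc 0 1) := by
  have h := (betaKernel_integrableOn ha hb).const_mul
    (Real.Gamma (a + b) / (Real.Gamma a * Real.Gamma b))
  exact IntegrableOn.congr_fun h (fun u _ => by simp only [betaDensity]; ring) measurableSet_Icc

lemma betaDensity_integral {a b : ℝ} (ha : 0 < a) (hb : 0 < b) :
    ∫ u in Set.Icc (0:ℝ) 1, betaDensity a b u = 1 := by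
  have h : (fun u : ℝ => betaDensity a b u)
      = fun u => Real.Gamma (a + b) / (Real.Gamma a * Real.Gamma b)
          * (u ^ (a-1) * (1-u) ^ (b-1)) := by
    funext u; simp only [betaDensity]; ring
  rw [h, integral_const_mul, betaKernel_integral ha hb]
  have h1 := Real.Gamma_pos_of_pos ha
  have h2 := Real.Gamma_pos_of_pos hb
  have h3 := Real.Gamma_pos_of_pos (show (0:ℝ) < a + b by linarith)
  field_simp

lemma betaDensity_nonneg {a b : ℝ} (ha : 0 < a) (hb : 0 < b) {u : ℝ} (hu : u ∈ Set.Icc (0:ℝ) 1) :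
    0 ≤ betaDensity a b u := by
  have h1 := Real.Gamma_pos_of_pos ha
  have h2 := Real.Gamma_pos_of_pos hb
  have h3 := Real.Gamma_pos_of_pos (show (0:ℝ) < a + b by linarith)
  have h4 : (0:ℝ) ≤ u ^ (a-1) := Real.rpow_nonneg hu.1 _
  have h5 : (0:ℝ) ≤ (1-u) ^ (b-1) := Real.rpow_nonneg (by linarith [hu.2]) _
  unfold betaDensity
  positivity

lemma betaDensity_zero {a b : ℝ} (ha : a < 1) : betaDensity a b 0 = 0 := by
  simp [betaDensity, Real.zero_rpow (show a - 1 ≠ 0 by linarith)]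

/-- |y^m - x^m| ≤ m |y - x| on [0,1]. -/
lemma pow_diff_bound (m : ℕ) {x y : ℝ} (hx : x ∈ Set.Icc (0:ℝ) 1) (hy : y ∈ Set.Icc (0:ℝ) 1) :
    |y ^ m - x ^ m| ≤ m * |y - x| := by
  obtain ⟨hx0, hx1⟩ := hx; obtain ⟨hy0, hy1⟩ := hy
  induction m with
  | zero => simp
  | succ m ih =>
    have h : y ^ (m+1) - x ^ (m+1) = y * (y ^ m - x ^ m) + (y - x) * x ^ m := by ring
    have h1 : |y * (y ^ m - x ^ m)| ≤ m * |y - x| := by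
      rw [abs_mul, abs_of_nonneg hy0]
      calc y * |y ^ m - x ^ m| ≤ 1 * (m * |y - x|) :=
            mul_le_mul hy1 ih (abs_nonneg _) zero_le_one
        _ = m * |y - x| := one_mul _
    have h2 : |(y - x) * x ^ m| ≤ |y - x| := by
      rw [abs_mul, abs_of_nonneg (show (0:ℝ) ≤ x ^ m by positivity)]
      exact mul_le_of_le_one_right (abs_nonneg _) (pow_le_one₀ hx0 hx1)
    calc |y ^ (m+1) - x ^ (m+1)| ≤ |y * (y ^ m - x ^ m)| + |(y - x) * x ^ m| := by
          rw [h]; exact abs_add_le _ _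
      _ ≤ (↑(m+1)) * |y - x| := by push_cast; linarith

/-- second order Taylor bound for pow on [0,1] -/
lemma pow_taylor_bound (m : ℕ) {x y : ℝ} (hx : x ∈ Set.Icc (0:ℝ) 1) (hy : y ∈ Set.Icc (0:ℝ) 1) :
    |y ^ (m+1) - x ^ (m+1) - (m+1 : ℝ) * x ^ m * (y - x)| ≤ (m+1 : ℝ) * m / 2 * (y - x) ^ 2 := by
  obtain ⟨hx0, hx1⟩ := hx; obtain ⟨hy0, hy1⟩ := hy
  induction m with
  | zero => simp
  | succ m ih =>
    have key : y ^ (m+1+1) - x ^ (m+1+1) - ((m:ℝ)+1+1) * x ^ (m+1) * (y - x)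
        = y * (y ^ (m+1) - x ^ (m+1) - ((m:ℝ)+1) * x ^ m * (y - x))
          + ((m:ℝ)+1) * x ^ m * (y - x) ^ 2 := by ring
    have hxm : x ^ m ≤ 1 := pow_le_one₀ hx0 hx1
    have hxm0 : (0:ℝ) ≤ x ^ m := by positivity
    have h1 : |y * (y ^ (m+1) - x ^ (m+1) - ((m:ℝ)+1) * x ^ m * (y - x))|
        ≤ ((m:ℝ)+1) * m / 2 * (y - x) ^ 2 := by
      rw [abs_mul, abs_of_nonneg hy0]
      have ih' := ih
      push_cast at ih' ⊢
      calc y * |y ^ (m+1) - x ^ (m+1) - ((m:ℝ)+1) * x ^ m * (y - x)|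
          ≤ 1 * (((m:ℝ)+1) * m / 2 * (y - x) ^ 2) :=
            mul_le_mul hy1 ih' (abs_nonneg _) zero_le_one
        _ = ((m:ℝ)+1) * m / 2 * (y - x) ^ 2 := one_mul _
    have h2 : |((m:ℝ)+1) * x ^ m * (y - x) ^ 2| ≤ ((m:ℝ)+1) * (y - x) ^ 2 := by
      rw [abs_of_nonneg (by positivity)]
      nlinarith [mul_le_mul_of_nonneg_left hxm (show (0:ℝ) ≤ ((m:ℝ)+1)*(y-x)^2 by positivity)]
    have habs : |y ^ (m+1+1) - x ^ (m+1+1) - ((m:ℝ)+1+1) * x ^ (m+1) * (y - x)|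
        ≤ ((m:ℝ)+1) * m / 2 * (y - x) ^ 2 + ((m:ℝ)+1) * (y - x) ^ 2 := by
      rw [key]; exact (abs_add_le _ _).trans (by linarith)
    have : ((m:ℝ)+1) * m / 2 * (y - x) ^ 2 + ((m:ℝ)+1) * (y - x) ^ 2
        = ((m:ℝ)+1+1) * ((m:ℝ)+1) / 2 * (y - x) ^ 2 := by ring
    rw [this] at habs
    push_cast
    convert habs using 2 <;> push_cast <;> ring

lemma nat_quad_bound (m : ℕ) : ((m:ℝ)+1) * m ≤ 2 ^ (m + 4) := by
  induction m with
  | zero => norm_num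
  | succ m ih =>
    have hm : (m:ℝ) < 2 ^ m := by exact_mod_cast (Nat.lt_two_pow_self (n := m))
    have hp : (1:ℝ) ≤ 2 ^ m := one_le_pow₀ one_le_two
    have h16 : (2:ℝ) ^ (m+4) = 16 * 2 ^ m := by ring
    have h32 : (2:ℝ) ^ (m+1+4) = 32 * 2 ^ m := by ring
    push_cast
    rw [h32]
    rw [h16] at ih
    nlinarith [ih, hm, hp]

lemma nat_le_two_pow (n : ℕ) : (n : ℝ) ≤ 2 ^ n := by
  exact_mod_cast (Nat.lt_two_pow_self (n := n)).le

lemma mem_Icc_comb {x u : ℝ} (hx : x ∈ Set.Icc (0:ℝ) 1) (hu : u ∈ Set.Icc (0:ℝ) 1) :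
    (1-u)*x+u ∈ Set.Icc (0:ℝ) 1 ∧ (1-u)*x ∈ Set.Icc (0:ℝ) 1 := by
  obtain ⟨hx0, hx1⟩ := hx; obtain ⟨hu0, hu1⟩ := hu
  refine ⟨⟨by nlinarith, by nlinarith⟩, ⟨by nlinarith, by nlinarith⟩⟩

lemma D1_bound (m : ℕ) {x u : ℝ} (hx : x ∈ Set.Icc (0:ℝ) 1) (hu : u ∈ Set.Icc (0:ℝ) 1) :
    |x * ((1-u)*x+u)^(m+1) + (1-x) * ((1-u)*x)^(m+1) - x^(m+1)|
      ≤ ((m:ℝ)+1)*m/8 * u^2 := by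
  obtain ⟨ha', hb'⟩ := mem_Icc_comb hx hu
  have hA := pow_taylor_bound m hx ha'
  have hB := pow_taylor_bound m hx hb'
  obtain ⟨hx0, hx1⟩ := hx
  set K : ℝ := ((m:ℝ)+1)*m/2 with hK
  have hK0 : 0 ≤ K := by positivity
  have key : x * ((1-u)*x+u)^(m+1) + (1-x) * ((1-u)*x)^(m+1) - x^(m+1)
      = x * (((1-u)*x+u)^(m+1) - x^(m+1) - ((m:ℝ)+1) * x^m * (((1-u)*x+u) - x))
        + (1-x) * (((1-u)*x)^(m+1) - x^(m+1) - ((m:ℝ)+1) * x^m * (((1-u)*x) - x)) := by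
    ring
  have h1 : |x * (((1-u)*x+u)^(m+1) - x^(m+1) - ((m:ℝ)+1) * x^m * (((1-u)*x+u) - x))|
      ≤ x * (K * ((1-u)*x+u - x)^2) := by
    rw [abs_mul, abs_of_nonneg hx0]
    exact mul_le_mul_of_nonneg_left hA hx0
  have h2 : |(1-x) * (((1-u)*x)^(m+1) - x^(m+1) - ((m:ℝ)+1) * x^m * (((1-u)*x) - x))|
      ≤ (1-x) * (K * ((1-u)*x - x)^2) := by
    rw [abs_mul, abs_of_nonneg (by linarith)]
    exact mul_le_mul_of_nonneg_left hB (by linarith)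
  have hsum : x * (K * ((1-u)*x+u - x)^2) + (1-x) * (K * ((1-u)*x - x)^2)
      = K * u^2 * (x*(1-x)) := by ring
  have hx14 : x * (1-x) ≤ 1/4 := by nlinarith [sq_nonneg (x - 1/2)]
  calc |x * ((1-u)*x+u)^(m+1) + (1-x) * ((1-u)*x)^(m+1) - x^(m+1)|
      ≤ x * (K * ((1-u)*x+u - x)^2) + (1-x) * (K * ((1-u)*x - x)^2) := by
        rw [key]; exact (abs_add_le _ _).trans (by linarith)
    _ = K * u^2 * (x*(1-x)) := hsum
    _ ≤ K * u^2 * (1/4) := by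
        apply mul_le_mul_of_nonneg_left hx14 (by positivity)
    _ = ((m:ℝ)+1)*m/8 * u^2 := by rw [hK]; ring

lemma D2_bound (n : ℕ) {c₁ c₂ x u : ℝ} (hc₁ : 0 ≤ c₁) (hc₂ : 0 ≤ c₂)
    (hx : x ∈ Set.Icc (0:ℝ) 1) (hu : u ∈ Set.Icc (0:ℝ) 1) :
    |c₁ * ((1-u)*x+u)^n + c₂ * ((1-u)*x)^n - (c₁+c₂) * x^n| ≤ (c₁+c₂) * n * u := by
  obtain ⟨ha', hb'⟩ := mem_Icc_comb hx hu
  have hA := pow_diff_bound n hx ha'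
  have hB := pow_diff_bound n hx hb'
  obtain ⟨hx0, hx1⟩ := hx; obtain ⟨hu0, hu1⟩ := hu
  have hA' : |((1-u)*x+u)^n - x^n| ≤ n * u := by
    refine hA.trans ?_
    have : |(1-u)*x+u - x| = u * (1-x) := by
      rw [show (1-u)*x+u - x = u*(1-x) by ring, abs_of_nonneg (by nlinarith)]
    rw [this]
    have : u * (1-x) ≤ u := by nlinarith
    nlinarith [Nat.cast_nonneg (α := ℝ) n]
  have hB' : |((1-u)*x)^n - x^n| ≤ n * u := by
    refine hB.trans ?_
    have : |(1-u)*x - x| = u * x := by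
      rw [show (1-u)*x - x = -(u*x) by ring, abs_neg, abs_of_nonneg (by nlinarith)]
    rw [this]
    have : u * x ≤ u := by nlinarith
    nlinarith [Nat.cast_nonneg (α := ℝ) n]
  have key : c₁ * ((1-u)*x+u)^n + c₂ * ((1-u)*x)^n - (c₁+c₂) * x^n
      = c₁ * (((1-u)*x+u)^n - x^n) + c₂ * (((1-u)*x)^n - x^n) := by ring
  calc |c₁ * ((1-u)*x+u)^n + c₂ * ((1-u)*x)^n - (c₁+c₂) * x^n|
      ≤ |c₁ * (((1-u)*x+u)^n - x^n)| + |c₂ * (((1-u)*x)^n - x^n)| := by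
        rw [key]; exact abs_add_le _ _
    _ ≤ c₁ * (n * u) + c₂ * (n * u) := by
        rw [abs_mul, abs_mul, abs_of_nonneg hc₁, abs_of_nonneg hc₂]
        exact add_le_add (mul_le_mul_of_nonneg_left hA' hc₁)
          (mul_le_mul_of_nonneg_left hB' hc₂)
    _ = (c₁+c₂) * n * u := by ring

theorem stmt4 (α c₁ c₂ : ℝ) (hα : 0 < α) (hα1 : α < 1) (hc₁ : 0 < c₁) (hc₂ : 0 < c₂)
    (n : ℕ) (hn : 1 ≤ n) (x : ℝ) (hx : x ∈ Set.Icc (0:ℝ) 1) :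
    |genA α c₁ c₂ (fun y => y ^ n) x| ≤ (1 + (c₁ + c₂) / (α + 1)) * 2 ^ n := by
  obtain ⟨m, rfl⟩ : ∃ m, n = m + 1 := ⟨n - 1, (Nat.succ_pred_eq_of_pos hn).symm⟩
  have ha1 : (0:ℝ) < 1 - α := by linarith
  have ha2 : (0:ℝ) < 1 + α := by linarith
  have ha3 : (0:ℝ) < α + 1 := by linarith
  -- first integral bound
  have hbound1 : |∫ u in Set.Icc (0:ℝ) 1, betaDensity (1 - α) (1 + α) u / u ^ 2
      * (x * ((1 - u) * x + u) ^ (m+1) + (1 - x) * ((1 - u) * x) ^ (m+1) - x ^ (m+1))|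
      ≤ ((m:ℝ)+1)*m/8 := by
    have hg : Integrable (fun u => betaDensity (1-α) (1+α) u * (((m:ℝ)+1)*m/8))
        (volume.restrict (Set.Icc (0:ℝ) 1)) :=
      (betaDensity_integrableOn ha1 ha2).mul_const _
    have hae : ∀ᵐ u ∂(volume.restrict (Set.Icc (0:ℝ) 1)),
        ‖betaDensity (1 - α) (1 + α) u / u ^ 2
          * (x * ((1 - u) * x + u) ^ (m+1) + (1 - x) * ((1 - u) * x) ^ (m+1) - x ^ (m+1))‖
        ≤ betaDensity (1-α) (1+α) u * (((m:ℝ)+1)*m/8) := by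
      refine ae_restrict_of_forall_mem measurableSet_Icc (fun u hu => ?_)
      rcases eq_or_lt_of_le hu.1 with h0 | h0
      · rw [← h0, betaDensity_zero (by linarith)]
        simp
      · have hβ := betaDensity_nonneg ha1 ha2 hu
        have hu2 : (0:ℝ) < u ^ 2 := by positivity
        rw [Real.norm_eq_abs, abs_mul, abs_of_nonneg (div_nonneg hβ hu2.le)]
        calc betaDensity (1-α) (1+α) u / u ^ 2
              * |x * ((1 - u) * x + u) ^ (m+1) + (1 - x) * ((1 - u) * x) ^ (m+1) - x ^ (m+1)|
            ≤ betaDensity (1-α) (1+α) u / u ^ 2 * (((m:ℝ)+1)*m/8 * u^2) :=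
              mul_le_mul_of_nonneg_left (D1_bound m hx hu) (div_nonneg hβ hu2.le)
          _ = betaDensity (1-α) (1+α) u * (((m:ℝ)+1)*m/8) := by
              field_simp
    have h := norm_integral_le_of_norm_le hg hae
    rw [Real.norm_eq_abs] at h
    refine h.trans ?_
    rw [integral_mul_const, betaDensity_integral ha1 ha2, one_mul]
  -- second integral bound
  have hbound2 : |∫ u in Set.Icc (0:ℝ) 1, betaDensity (1 - α) α u / ((α + 1) * u)
      * (c₁ * ((1 - u) * x + u) ^ (m+1) + c₂ * ((1 - u) * x) ^ (m+1)
        - (c₁ + c₂) * x ^ (m+1))|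
      ≤ (c₁+c₂) * ((m:ℝ)+1) / (α+1) := by
    have hg : Integrable (fun u => betaDensity (1-α) α u * ((c₁+c₂) * ((m:ℝ)+1) / (α+1)))
        (volume.restrict (Set.Icc (0:ℝ) 1)) :=
      (betaDensity_integrableOn ha1 hα).mul_const _
    have hae : ∀ᵐ u ∂(volume.restrict (Set.Icc (0:ℝ) 1)),
        ‖betaDensity (1 - α) α u / ((α + 1) * u)
          * (c₁ * ((1 - u) * x + u) ^ (m+1) + c₂ * ((1 - u) * x) ^ (m+1)
            - (c₁ + c₂) * x ^ (m+1))‖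
        ≤ betaDensity (1-α) α u * ((c₁+c₂) * ((m:ℝ)+1) / (α+1)) := by
      refine ae_restrict_of_forall_mem measurableSet_Icc (fun u hu => ?_)
      rcases eq_or_lt_of_le hu.1 with h0 | h0
      · rw [← h0, betaDensity_zero (by linarith)]
        simp
      · have hβ := betaDensity_nonneg ha1 hα hu
        have hden : (0:ℝ) < (α+1) * u := by positivity
        rw [Real.norm_eq_abs, abs_mul, abs_of_nonneg (div_nonneg hβ hden.le)]
        have hD := D2_bound (m+1) hc₁.le hc₂.le hx hu
        push_cast at hD
        calc betaDensity (1-α) α u / ((α+1) * u)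
              * |c₁ * ((1 - u) * x + u) ^ (m+1) + c₂ * ((1 - u) * x) ^ (m+1)
                - (c₁ + c₂) * x ^ (m+1)|
            ≤ betaDensity (1-α) α u / ((α+1) * u) * ((c₁+c₂) * ((m:ℝ)+1) * u) :=
              mul_le_mul_of_nonneg_left hD (div_nonneg hβ hden.le)
          _ = betaDensity (1-α) α u * ((c₁+c₂) * ((m:ℝ)+1) / (α+1)) := by
              field_simp
    have h := norm_integral_le_of_norm_le hg hae
    rw [Real.norm_eq_abs] at h
    refine h.trans ?_
    rw [integral_mul_const, betaDensity_integral ha1 hα, one_mul]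
  -- combine
  have hgen : genA α c₁ c₂ (fun y => y ^ (m+1)) x
      = (∫ u in Set.Icc (0:ℝ) 1, betaDensity (1 - α) (1 + α) u / u ^ 2
          * (x * ((1 - u) * x + u) ^ (m+1) + (1 - x) * ((1 - u) * x) ^ (m+1) - x ^ (m+1)))
        + ∫ u in Set.Icc (0:ℝ) 1, betaDensity (1 - α) α u / ((α + 1) * u)
          * (c₁ * ((1 - u) * x + u) ^ (m+1) + c₂ * ((1 - u) * x) ^ (m+1)
            - (c₁ + c₂) * x ^ (m+1)) := rfl
  rw [hgen]
  have htri := abs_add_le (∫ u in Set.Icc (0:ℝ) 1, betaDensity (1 - α) (1 + α) u / u ^ 2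
          * (x * ((1 - u) * x + u) ^ (m+1) + (1 - x) * ((1 - u) * x) ^ (m+1) - x ^ (m+1)))
        (∫ u in Set.Icc (0:ℝ) 1, betaDensity (1 - α) α u / ((α + 1) * u)
          * (c₁ * ((1 - u) * x + u) ^ (m+1) + c₂ * ((1 - u) * x) ^ (m+1)
            - (c₁ + c₂) * x ^ (m+1)))
  have hq := nat_quad_bound m
  have h2m : (2:ℝ) ^ (m+4) = 8 * 2 ^ (m+1) := by ring
  have hfirst : ((m:ℝ)+1)*m/8 ≤ 2 ^ (m+1) := by
    rw [h2m] at hq; linarith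
  have hpow : ((m:ℝ)+1) ≤ 2 ^ (m+1) := by
    have := nat_le_two_pow (m+1); push_cast at this; linarith
  have hsecond : (c₁+c₂) * ((m:ℝ)+1) / (α+1) ≤ (c₁+c₂)/(α+1) * 2 ^ (m+1) := by
    rw [div_mul_eq_mul_div, div_le_div_iff_of_pos_right ha3]
    have : (0:ℝ) ≤ c₁ + c₂ := by linarith
    nlinarith
  have hfin : (1 + (c₁ + c₂) / (α + 1)) * 2 ^ (m+1)
      = 2 ^ (m+1) + (c₁+c₂)/(α+1) * 2 ^ (m+1) := by ring
  rw [hfin]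
  linarith
end

section
/- Let 0 < α < 1, y ∈ [0,1], and let (Y₁,Y₂) have joint law with Laplace transform E[e^{-λ₁Y₁-λ₂Y₂}] = exp(−y λ₁^α − (1-y) λ₂^α) for λ₁,λ₂ ≥ 0. Then for every t ≥ 0, E[(tY₁+Y₂)^{-α}] = 1/(Γ(α+1)(1+(t^α−1)y)). -/
open MeasureTheory Real Set Filter

private lemma stmt6_rpow_meas (r : ℝ) : Measurable fun x : ℝ => x ^ r := by
  measurability

set_option maxHeartbeats 1600000 in
theorem stmt6 (α y : ℝ) (hα : 0 < α) (hα1 : α < 1) (hy : y ∈ Set.Icc (0:ℝ) 1)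
    (μ : Measure (ℝ × ℝ)) [IsProbabilityMeasure μ]
    (hLap : ∀ l₁ l₂ : ℝ, 0 ≤ l₁ → 0 ≤ l₂ →
      ∫ p, Real.exp (-(l₁ * p.1) - l₂ * p.2) ∂μ
        = Real.exp (-(y * l₁ ^ α) - (1 - y) * l₂ ^ α))
    (t : ℝ) (ht : 0 ≤ t) :
    ∫ p, (t * p.1 + p.2) ^ (-α) ∂μ
      = 1 / (Real.Gamma (α + 1) * (1 + (t ^ α - 1) * y)) := by
  obtain ⟨hy0, hy1⟩ := hy
  have hαne : α ≠ 0 := hα.ne'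
  have hΓ : 0 < Real.Gamma α := Real.Gamma_pos_of_pos hα
  set Z : ℝ × ℝ → ℝ := fun p => t * p.1 + p.2 with hZdef
  set c : ℝ := 1 + (t ^ α - 1) * y with hcdef
  have hZm : Measurable Z := by measurability
  have hc0 : 0 ≤ c := by
    have h1 : (0:ℝ) ≤ t ^ α := Real.rpow_nonneg ht α
    rw [hcdef]; nlinarith
  -- Laplace transform of Z
  have lap : ∀ l : ℝ, 0 ≤ l → ∫ p, Real.exp (-(l * Z p)) ∂μ = Real.exp (-(c * l ^ α)) := by
    intro l hl
    have h := hLap (l * t) l (mul_nonneg hl ht) hl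
    have e1 : ∀ p : ℝ × ℝ, -(l * t * p.1) - l * p.2 = -(l * Z p) := fun p => by
      simp only [hZdef]; ring
    simp only [e1] at h
    rw [h]
    congr 1
    rw [Real.mul_rpow hl ht, hcdef]
    ring
  have lapInt : ∀ l : ℝ, 0 ≤ l → Integrable (fun p => Real.exp (-(l * Z p))) μ := by
    intro l hl
    by_contra hI
    have h := lap l hl
    rw [integral_undef hI] at h
    exact (Real.exp_pos _).ne' h.symm
  -- key measure bound
  have key : ∀ ε : ℝ, 0 ≤ ε → ∀ n : ℕ,
      (μ {p | Z p ≤ -ε}).toReal ≤ Real.exp (-(c * (n:ℝ) ^ α)) * (Real.exp ((n:ℝ) * ε))⁻¹ := by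
    intro ε hε n
    have hn : (0:ℝ) ≤ (n:ℝ) := Nat.cast_nonneg n
    have hAm : MeasurableSet {p | Z p ≤ -ε} := hZm measurableSet_Iic
    have h1 : (μ {p | Z p ≤ -ε}).toReal * Real.exp ((n:ℝ) * ε)
        ≤ Real.exp (-(c * (n:ℝ) ^ α)) := by
      have hC : ∫ _ in {p | Z p ≤ -ε}, Real.exp ((n:ℝ) * ε) ∂μ
          = (μ {p | Z p ≤ -ε}).toReal * Real.exp ((n:ℝ) * ε) := by
        rw [setIntegral_const, smul_eq_mul]; rfl
      rw [← hC, ← lap n hn]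
      refine le_trans (setIntegral_mono_on
        (integrableOn_const (measure_ne_top μ _))
        ((lapInt n hn).integrableOn) hAm fun p hp => ?_)
        (setIntegral_le_integral (lapInt n hn)
          (Eventually.of_forall fun p => (Real.exp_pos _).le))
      have hp' : Z p ≤ -ε := hp
      have h2 : (n:ℝ) * Z p ≤ (n:ℝ) * (-ε) := mul_le_mul_of_nonneg_left hp' hn
      exact Real.exp_le_exp.2 (by linarith)
    have hepos : 0 < Real.exp ((n:ℝ) * ε) := Real.exp_pos _
    calc (μ {p | Z p ≤ -ε}).toReal
        = (μ {p | Z p ≤ -ε}).toReal * Real.exp ((n:ℝ) * ε) * (Real.exp ((n:ℝ) * ε))⁻¹ := by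
          field_simp
      _ ≤ Real.exp (-(c * (n:ℝ) ^ α)) * (Real.exp ((n:ℝ) * ε))⁻¹ := by
          exact mul_le_mul_of_nonneg_right h1 (by positivity)
  -- null set helper
  have measZero : ∀ ε : ℝ, 0 ≤ ε →
      Tendsto (fun n : ℕ => Real.exp (-(c * (n:ℝ) ^ α)) * (Real.exp ((n:ℝ) * ε))⁻¹) atTop (nhds 0) →
      μ {p | Z p ≤ -ε} = 0 := by
    intro ε hε hT
    have hle : (μ {p | Z p ≤ -ε}).toReal ≤ 0 :=
      le_of_tendsto_of_tendsto' tendsto_const_nhds hT (key ε hε)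
    have heq : (μ {p | Z p ≤ -ε}).toReal = 0 := le_antisymm hle ENNReal.toReal_nonneg
    rcases (ENNReal.toReal_eq_zero_iff _).1 heq with h | h
    · exact h
    · exact absurd h (measure_ne_top μ _)
  rcases eq_or_lt_of_le hc0 with hczero | hcpos
  · -- degenerate case c = 0 : Z = 0 a.e.
    have hZnn : ∀ᵐ p ∂μ, 0 ≤ Z p := by
      have hnull : μ {p | Z p < 0} = 0 := by
        have hsub : {p | Z p < 0} ⊆ ⋃ k : ℕ, {p | Z p ≤ -(1/((k:ℝ)+1))} := by
          intro p hp
          have hp' : Z p < 0 := hp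
          have hpos : 0 < -Z p := by linarith
          obtain ⟨k, hk⟩ := exists_nat_gt (-Z p)⁻¹
          refine mem_iUnion.2 ⟨k, ?_⟩
          have h1 : 1 < -Z p * ((k:ℝ)+1) := by
            have h2 := mul_lt_mul_of_pos_left hk hpos
            rw [mul_inv_cancel₀ hpos.ne'] at h2
            nlinarith
          have hk1 : (0:ℝ) < (k:ℝ)+1 := by positivity
          show Z p ≤ -(1/((k:ℝ)+1))
          rw [le_neg, div_le_iff₀ hk1]
          nlinarith
        refine measure_mono_null hsub (measure_iUnion_null fun k => ?_)
        refine measZero _ (by positivity) ?_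
        have h1 : Tendsto (fun n : ℕ => (n:ℝ) * (1/((k:ℝ)+1))) atTop atTop :=
          Tendsto.atTop_mul_const (by positivity) tendsto_natCast_atTop_atTop
        have h2 : Tendsto (fun n : ℕ => (Real.exp ((n:ℝ) * (1/((k:ℝ)+1))))⁻¹) atTop (nhds 0) :=
          (Real.tendsto_exp_atTop.comp h1).inv_tendsto_atTop
        have h3 : Tendsto (fun n : ℕ =>
            Real.exp (-(c * (n:ℝ) ^ α)) * (Real.exp ((n:ℝ) * (1/((k:ℝ)+1))))⁻¹) atTop (nhds 0) := by
          have hb : ∀ n : ℕ, Real.exp (-(c * (n:ℝ) ^ α)) ≤ 1 := fun n =>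
            Real.exp_le_one_iff.2 (by nlinarith [Real.rpow_nonneg (Nat.cast_nonneg n : (0:ℝ) ≤ n) α])
          refine squeeze_zero (fun n => by positivity) (fun n => ?_) h2
          exact mul_le_of_le_one_left (by positivity) (hb n)
        exact h3
      rw [ae_iff]
      simpa [not_le] using hnull
    have hZ0 : ∀ᵐ p ∂μ, Z p = 0 := by
      have hint1 := lapInt 1 zero_le_one
      have hval : ∫ p, Real.exp (-(1 * Z p)) ∂μ = 1 := by
        rw [lap 1 zero_le_one, ← hczero]; simp
      have h0 : ∫ p, (1 - Real.exp (-(1 * Z p))) ∂μ = 0 := by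
        rw [integral_sub (integrable_const 1) hint1, hval]
        simp
      have hnn : 0 ≤ᵐ[μ] fun p => 1 - Real.exp (-(1 * Z p)) := by
        filter_upwards [hZnn] with p hp
        have h4 : Real.exp (-(1 * Z p)) ≤ 1 := Real.exp_le_one_iff.2 (by linarith)
        simp only [Pi.zero_apply]
        linarith
      have := (integral_eq_zero_iff_of_nonneg_ae hnn ((integrable_const 1).sub hint1)).1 h0
      filter_upwards [this] with p hp
      simp only [Pi.zero_apply] at hp
      have h1 : Real.exp (-(1 * Z p)) = 1 := by linarith
      have h5 := (Real.exp_eq_one_iff _).1 h1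
      linarith
    have hlhs : ∫ p, Z p ^ (-α) ∂μ = 0 := by
      have : (fun p => Z p ^ (-α)) =ᵐ[μ] fun _ => (0:ℝ) := by
        filter_upwards [hZ0] with p hp
        rw [hp]
        exact Real.zero_rpow (neg_ne_zero.2 hαne)
      rw [integral_congr_ae this, integral_zero]
    rw [hlhs, ← hczero]
    simp
  · -- main case c > 0
    have hZpos : ∀ᵐ p ∂μ, 0 < Z p := by
      have hnull : μ {p | Z p ≤ 0} = 0 := by
        have h1 : Tendsto (fun n : ℕ => c * (n:ℝ) ^ α) atTop atTop := by
          refine Tendsto.const_mul_atTop hcpos ?_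
          exact (tendsto_rpow_atTop hα).comp tendsto_natCast_atTop_atTop
        have h2 : Tendsto (fun n : ℕ => Real.exp (-(c * (n:ℝ) ^ α))) atTop (nhds 0) := by
          simpa using h1
        have h3 : Tendsto (fun n : ℕ =>
            Real.exp (-(c * (n:ℝ) ^ α)) * (Real.exp ((n:ℝ) * 0))⁻¹) atTop (nhds 0) := by
          simpa using h2
        have := measZero 0 le_rfl h3
        simpa using this
      rw [ae_iff]
      simpa [not_lt] using hnull
    have mpow1 : Measurable fun x : ℝ => x ^ (-α) := stmt6_rpow_meas _
    have hmeasμ : AEStronglyMeasurable (fun p => Z p ^ (-α)) μ :=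
      (mpow1.comp hZm).aestronglyMeasurable
    have hnn : 0 ≤ᵐ[μ] fun p => Z p ^ (-α) :=
      hZpos.mono fun p hp => Real.rpow_nonneg hp.le _
    rw [integral_eq_lintegral_of_nonneg_ae hnn hmeasμ]
    have hCne : (ENNReal.ofReal (Real.Gamma α))⁻¹ ≠ ⊤ :=
      ENNReal.inv_ne_top.2 (ENNReal.ofReal_pos.2 hΓ).ne'
    -- pointwise Gamma representation
    have step1 : ∀ᵐ p ∂μ, ENNReal.ofReal (Z p ^ (-α))
        = (ENNReal.ofReal (Real.Gamma α))⁻¹ *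
          ∫⁻ v in Ioi (0:ℝ), ENNReal.ofReal (v ^ (α - 1) * Real.exp (-(Z p * v))) := by
      filter_upwards [hZpos] with p hp
      have hint : IntegrableOn (fun v : ℝ => v ^ (α - 1) * Real.exp (-(Z p * v))) (Ioi 0) := by
        have := integrableOn_rpow_mul_exp_neg_mul_rpow
          (show (-1:ℝ) < α - 1 by linarith) zero_lt_one hp
        simpa [Real.rpow_one, neg_mul] using this
      have hnn' : 0 ≤ᵐ[volume.restrict (Ioi (0:ℝ))]
          fun v : ℝ => v ^ (α - 1) * Real.exp (-(Z p * v)) := by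
        filter_upwards [ae_restrict_mem measurableSet_Ioi] with v hv
        have : (0:ℝ) < v := hv
        positivity
      rw [← ofReal_integral_eq_lintegral_ofReal hint hnn',
        Real.integral_rpow_mul_exp_neg_mul_Ioi hα hp,
        ← ENNReal.ofReal_inv_of_pos hΓ,
        ← ENNReal.ofReal_mul (by positivity)]
      congr 1
      rw [Real.rpow_neg hp.le, ← Real.inv_rpow hp.le, ← one_div]
      field_simp
    rw [lintegral_congr_ae step1, lintegral_const_mul' _ _ hCne]
    have hswap : ∫⁻ p, (∫⁻ v in Ioi (0:ℝ),
          ENNReal.ofReal (v ^ (α - 1) * Real.exp (-(Z p * v)))) ∂μ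
        = ∫⁻ v in Ioi (0:ℝ),
          (∫⁻ p, ENNReal.ofReal (v ^ (α - 1) * Real.exp (-(Z p * v))) ∂μ) := by
      have mpow2 : Measurable fun x : ℝ => x ^ (α - 1) := stmt6_rpow_meas _
      have hm : Measurable fun q : (ℝ × ℝ) × ℝ =>
          ENNReal.ofReal (q.2 ^ (α - 1) * Real.exp (-(Z q.1 * q.2))) :=
        ENNReal.measurable_ofReal.comp
          ((mpow2.comp measurable_snd).mul
            (Real.measurable_exp.comp (((hZm.comp measurable_fst).mul measurable_snd).neg)))
      exact lintegral_lintegral_swap (f := fun (p : ℝ × ℝ) (v : ℝ) =>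
        ENNReal.ofReal (v ^ (α - 1) * Real.exp (-(Z p * v)))) hm.aemeasurable
    rw [hswap]
    have step2 : ∫⁻ v in Ioi (0:ℝ),
          (∫⁻ p, ENNReal.ofReal (v ^ (α - 1) * Real.exp (-(Z p * v))) ∂μ)
        = ∫⁻ v in Ioi (0:ℝ), ENNReal.ofReal (v ^ (α - 1) * Real.exp (-(c * v ^ α))) := by
      refine setLIntegral_congr_fun measurableSet_Ioi (fun v hv => ?_)
      have hv0 : (0:ℝ) < v := hv
      have e2 : ∀ p : ℝ × ℝ, -(Z p * v) = -(v * Z p) := fun p => by ring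
      have hint : Integrable (fun p => v ^ (α - 1) * Real.exp (-(v * Z p))) μ :=
        (lapInt v hv0.le).const_mul _
      calc ∫⁻ p, ENNReal.ofReal (v ^ (α - 1) * Real.exp (-(Z p * v))) ∂μ
          = ∫⁻ p, ENNReal.ofReal (v ^ (α - 1) * Real.exp (-(v * Z p))) ∂μ := by
            simp only [e2]
        _ = ENNReal.ofReal (∫ p, v ^ (α - 1) * Real.exp (-(v * Z p)) ∂μ) := by
            rw [ofReal_integral_eq_lintegral_ofReal hint
              (Eventually.of_forall fun p => by positivity)]
        _ = ENNReal.ofReal (v ^ (α - 1) * Real.exp (-(c * v ^ α))) := by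
            rw [integral_const_mul, lap v hv0.le]
    rw [step2]
    have hintc : IntegrableOn (fun v : ℝ => v ^ (α - 1) * Real.exp (-(c * v ^ α))) (Ioi 0) := by
      have h1 : IntegrableOn (fun u : ℝ => Real.exp (-(c * u))) (Ioi 0) := by
        simpa [neg_mul] using exp_neg_integrableOn_Ioi 0 hcpos
      have := (integrableOn_Ioi_comp_rpow_iff' (fun u : ℝ => Real.exp (-(c * u))) hαne).2 h1
      simpa [smul_eq_mul] using this
    have hnnc : 0 ≤ᵐ[volume.restrict (Ioi (0:ℝ))]
        fun v : ℝ => v ^ (α - 1) * Real.exp (-(c * v ^ α)) := by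
      filter_upwards [ae_restrict_mem measurableSet_Ioi] with v hv
      have : (0:ℝ) < v := hv
      positivity
    rw [← ofReal_integral_eq_lintegral_ofReal hintc hnnc]
    have hval : ∫ v in Ioi (0:ℝ), v ^ (α - 1) * Real.exp (-(c * v ^ α)) = c⁻¹ * α⁻¹ := by
      have h := integral_rpow_mul_exp_neg_mul_rpow hα (show (-1:ℝ) < α - 1 by linarith) hcpos
      have e3 : ∀ v : ℝ, -(c * v ^ α) = -c * v ^ α := fun v => by ring
      simp only [e3]
      rw [h]
      have : -(α - 1 + 1) / α = -1 := by field_simp; ring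
      rw [this, show (α - 1 + 1) / α = 1 by field_simp; ring, Real.Gamma_one, Real.rpow_neg_one]
      ring
    rw [hval, ENNReal.toReal_mul, ENNReal.toReal_inv, ENNReal.toReal_ofReal hΓ.le,
      ENNReal.toReal_ofReal (by positivity), Real.Gamma_add_one hαne]
    field_simp
end

section
/- Let 0 < α < 1, y ∈ [0,1] and (Y₁,Y₂) with Laplace transform E[e^{-λ₁Y₁-λ₂Y₂}] = exp(−yλ₁^α − (1-y)λ₂^α). Then Γ(α+1) E[(Y₁+Y₂)^{-α}] = 1, so that Γ(α+1) E[(Y₁+Y₂)^{-α}; Y₁/(Y₁+Y₂) ∈ ·] defines a probability measure on [0,1]. -/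
open MeasureTheory

section Aux

open Real Set Filter

variable {α y : ℝ} {μ : Measure (ℝ × ℝ)} [IsProbabilityMeasure μ]

lemma aux_lap_sum (hα : 0 < α)
    (hLap : ∀ l₁ l₂ : ℝ, 0 ≤ l₁ → 0 ≤ l₂ →
      ∫ p, Real.exp (-(l₁ * p.1) - l₂ * p.2) ∂μ
        = Real.exp (-(y * l₁ ^ α) - (1 - y) * l₂ ^ α)) (t : ℝ) (ht : 0 ≤ t) :
    ∫ p, Real.exp (-(t * (p.1 + p.2))) ∂μ = Real.exp (-t ^ α) := by
  have h := hLap t t ht ht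
  have h1 : ∀ p : ℝ × ℝ, Real.exp (-(t * p.1) - t * p.2) = Real.exp (-(t * (p.1 + p.2))) := by
    intro p; ring_nf
  simp_rw [h1] at h
  rw [h]; ring_nf

lemma aux_integrable_exp (hα : 0 < α)
    (hLap : ∀ l₁ l₂ : ℝ, 0 ≤ l₁ → 0 ≤ l₂ →
      ∫ p, Real.exp (-(l₁ * p.1) - l₂ * p.2) ∂μ
        = Real.exp (-(y * l₁ ^ α) - (1 - y) * l₂ ^ α)) (t : ℝ) (ht : 0 ≤ t) :
    Integrable (fun p : ℝ × ℝ => Real.exp (-(t * (p.1 + p.2)))) μ := by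
  by_contra hni
  have h := aux_lap_sum hα hLap t ht
  rw [integral_undef hni] at h
  exact (Real.exp_pos _).ne' h.symm

/-- the sum is a.e. positive -/
lemma aux_ae_pos (hα : 0 < α)
    (hLap : ∀ l₁ l₂ : ℝ, 0 ≤ l₁ → 0 ≤ l₂ →
      ∫ p, Real.exp (-(l₁ * p.1) - l₂ * p.2) ∂μ
        = Real.exp (-(y * l₁ ^ α) - (1 - y) * l₂ ^ α)) :
    ∀ᵐ p ∂μ, 0 < p.1 + p.2 := by
  have hmeas : MeasurableSet {p : ℝ × ℝ | p.1 + p.2 ≤ 0} :=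
    measurableSet_le (measurable_fst.add measurable_snd) measurable_const
  have key : ∀ n : ℕ, (μ {p : ℝ × ℝ | p.1 + p.2 ≤ 0}).toReal ≤ Real.exp (-(n : ℝ) ^ α) := by
    intro n
    have hint := aux_integrable_exp hα hLap n (Nat.cast_nonneg n)
    have hnn : 0 ≤ᵐ[μ] fun p : ℝ × ℝ => Real.exp (-((n : ℝ) * (p.1 + p.2))) :=
      Filter.Eventually.of_forall fun p => (Real.exp_pos _).le
    have h1 : (μ {p : ℝ × ℝ | p.1 + p.2 ≤ 0}).toReal
        ≤ ∫ p in {p : ℝ × ℝ | p.1 + p.2 ≤ 0}, Real.exp (-((n : ℝ) * (p.1 + p.2))) ∂μ := by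
      have heq : (μ {p : ℝ × ℝ | p.1 + p.2 ≤ 0}).toReal
          = ∫ _ in {p : ℝ × ℝ | p.1 + p.2 ≤ 0}, (1 : ℝ) ∂μ := by
        simp [Measure.restrict_apply_univ]
        rfl
      rw [heq]
      refine setIntegral_mono_on (integrableOn_const (measure_ne_top _ _))
        hint.integrableOn hmeas fun p hp => ?_
      rw [← Real.exp_zero]
      apply Real.exp_le_exp.2
      simp only [Set.mem_setOf_eq] at hp
      have : (n : ℝ) * (p.1 + p.2) ≤ 0 := mul_nonpos_of_nonneg_of_nonpos (Nat.cast_nonneg n) hp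
      linarith
    have h2 : ∫ p in {p : ℝ × ℝ | p.1 + p.2 ≤ 0}, Real.exp (-((n : ℝ) * (p.1 + p.2))) ∂μ
        ≤ ∫ p, Real.exp (-((n : ℝ) * (p.1 + p.2))) ∂μ := setIntegral_le_integral hint hnn
    rw [aux_lap_sum hα hLap n (Nat.cast_nonneg n)] at h2
    linarith
  have hlim : Tendsto (fun n : ℕ => Real.exp (-(n : ℝ) ^ α)) atTop (nhds 0) := by
    apply Real.tendsto_exp_atBot.comp
    exact (tendsto_neg_atBot_iff.2 ((tendsto_rpow_atTop hα).comp
      tendsto_natCast_atTop_atTop))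
  have hle : (μ {p : ℝ × ℝ | p.1 + p.2 ≤ 0}).toReal ≤ 0 :=
    ge_of_tendsto' hlim key
  have hz : μ {p : ℝ × ℝ | p.1 + p.2 ≤ 0} = 0 := by
    have := ENNReal.toReal_nonneg (a := μ {p : ℝ × ℝ | p.1 + p.2 ≤ 0})
    have h0 : (μ {p : ℝ × ℝ | p.1 + p.2 ≤ 0}).toReal = 0 := le_antisymm hle this
    exact (ENNReal.toReal_eq_zero_iff _).1 h0 |>.resolve_right (measure_ne_top μ _)
  filter_upwards [measure_eq_zero_iff_ae_notMem.1 hz] with p hp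
  simpa using lt_of_not_ge hp

lemma aux_gamma_eq (hα : 0 < α) {s : ℝ} (hs : 0 < s) :
    ∫⁻ t in Set.Ioi (0:ℝ), ENNReal.ofReal (t ^ (α - 1) * Real.exp (-(s * t)))
      = ENNReal.ofReal (Real.Gamma α * s ^ (-α)) := by
  have hint : IntegrableOn (fun t : ℝ => t ^ (α - 1) * Real.exp (-(s * t))) (Set.Ioi 0) := by
    have := integrableOn_rpow_mul_exp_neg_mul_rpow (p := 1) (s := α - 1) (b := s)
      (by linarith) one_pos hs
    simpa [Real.rpow_one, neg_mul] using this
  have hnn : 0 ≤ᵐ[volume.restrict (Set.Ioi (0:ℝ))]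
      fun t : ℝ => t ^ (α - 1) * Real.exp (-(s * t)) := by
    refine (ae_restrict_iff' measurableSet_Ioi).2 (Filter.Eventually.of_forall fun t ht => ?_)
    have h0 : (0:ℝ) < t := ht
    positivity
  rw [← ofReal_integral_eq_lintegral_ofReal hint hnn,
    Real.integral_rpow_mul_exp_neg_mul_Ioi hα hs]
  congr 1
  rw [one_div, Real.inv_rpow hs.le, ← Real.rpow_neg hs.le, mul_comm]

lemma aux_t_int (hα : 0 < α) :
    ∫⁻ t in Set.Ioi (0:ℝ), ENNReal.ofReal (t ^ (α - 1) * Real.exp (-t ^ α))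
      = ENNReal.ofReal (1 / α) := by
  have h1 : IntegrableOn (fun u : ℝ => Real.exp (-u)) (Set.Ioi 0) := by
    have := exp_neg_integrableOn_Ioi 0 (one_pos (α := ℝ))
    simpa [neg_mul] using this
  have hint : IntegrableOn (fun t : ℝ => t ^ (α - 1) * Real.exp (-t ^ α)) (Set.Ioi 0) := by
    have := (integrableOn_Ioi_comp_rpow_iff' (fun u : ℝ => Real.exp (-u)) hα.ne').2 h1
    simpa [smul_eq_mul] using this
  have hnn : 0 ≤ᵐ[volume.restrict (Set.Ioi (0:ℝ))]
      fun t : ℝ => t ^ (α - 1) * Real.exp (-t ^ α) := by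
    refine (ae_restrict_iff' measurableSet_Ioi).2 (Filter.Eventually.of_forall fun t ht => ?_)
    have h0 : (0:ℝ) < t := ht
    positivity
  rw [← ofReal_integral_eq_lintegral_ofReal hint hnn,
    integral_rpow_mul_exp_neg_rpow hα (by linarith : (-1:ℝ) < α - 1)]
  congr 1
  rw [show (α - 1 + 1) / α = 1 by field_simp; ring, Real.Gamma_one, mul_one]

lemma aux_lint_exp (hα : 0 < α)
    (hLap : ∀ l₁ l₂ : ℝ, 0 ≤ l₁ → 0 ≤ l₂ →
      ∫ p, Real.exp (-(l₁ * p.1) - l₂ * p.2) ∂μ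
        = Real.exp (-(y * l₁ ^ α) - (1 - y) * l₂ ^ α)) (t : ℝ) (ht : 0 ≤ t) :
    ∫⁻ p, ENNReal.ofReal (Real.exp (-(t * (p.1 + p.2)))) ∂μ
      = ENNReal.ofReal (Real.exp (-t ^ α)) := by
  rw [← ofReal_integral_eq_lintegral_ofReal (aux_integrable_exp hα hLap t ht)
    (Filter.Eventually.of_forall fun p => (Real.exp_pos _).le),
    aux_lap_sum hα hLap t ht]

lemma aux_A (hα : 0 < α)
    (hLap : ∀ l₁ l₂ : ℝ, 0 ≤ l₁ → 0 ≤ l₂ →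
      ∫ p, Real.exp (-(l₁ * p.1) - l₂ * p.2) ∂μ
        = Real.exp (-(y * l₁ ^ α) - (1 - y) * l₂ ^ α)) :
    ∫⁻ p, ENNReal.ofReal ((p.1 + p.2) ^ (-α)) ∂μ
      = ENNReal.ofReal (Real.Gamma (α + 1))⁻¹ := by
  have hG : 0 < Real.Gamma α := Real.Gamma_pos_of_pos hα
  have hmeas : Measurable fun q : (ℝ × ℝ) × ℝ =>
      ENNReal.ofReal (q.2 ^ (α - 1) * Real.exp (-((q.1.1 + q.1.2) * q.2))) := by
    apply Measurable.ennreal_ofReal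
    exact (measurable_snd.pow measurable_const).mul
      (((measurable_fst.fst.add measurable_fst.snd).mul measurable_snd).neg.exp)
  have step1 : ENNReal.ofReal (Real.Gamma α)
        * ∫⁻ p, ENNReal.ofReal ((p.1 + p.2) ^ (-α)) ∂μ
      = ∫⁻ p, ∫⁻ t in Set.Ioi (0:ℝ),
          ENNReal.ofReal (t ^ (α - 1) * Real.exp (-((p.1 + p.2) * t))) ∂volume ∂μ := by
    rw [← lintegral_const_mul' _ _ ENNReal.ofReal_ne_top]
    refine lintegral_congr_ae ?_
    filter_upwards [aux_ae_pos hα hLap] with p hp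
    rw [← ENNReal.ofReal_mul hG.le, aux_gamma_eq hα hp]
  have step2 : (∫⁻ p, ∫⁻ t in Set.Ioi (0:ℝ),
        ENNReal.ofReal (t ^ (α - 1) * Real.exp (-((p.1 + p.2) * t))) ∂volume ∂μ)
      = ∫⁻ t in Set.Ioi (0:ℝ),
          ∫⁻ p, ENNReal.ofReal (t ^ (α - 1) * Real.exp (-((p.1 + p.2) * t))) ∂μ ∂volume :=
    lintegral_lintegral_swap hmeas.aemeasurable
  have step3 : (∫⁻ t in Set.Ioi (0:ℝ),
        ∫⁻ p, ENNReal.ofReal (t ^ (α - 1) * Real.exp (-((p.1 + p.2) * t))) ∂μ ∂volume)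
      = ∫⁻ t in Set.Ioi (0:ℝ), ENNReal.ofReal (t ^ (α - 1) * Real.exp (-t ^ α)) ∂volume := by
    refine setLIntegral_congr_fun measurableSet_Ioi (fun t ht => ?_)
    have ht' : (0:ℝ) < t := ht
    have h1 : ∀ p : ℝ × ℝ, ENNReal.ofReal (t ^ (α - 1) * Real.exp (-((p.1 + p.2) * t)))
        = ENNReal.ofReal (t ^ (α - 1)) * ENNReal.ofReal (Real.exp (-(t * (p.1 + p.2)))) := by
      intro p
      rw [← ENNReal.ofReal_mul (Real.rpow_nonneg ht'.le _), mul_comm (p.1 + p.2) t]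
    simp_rw [h1]
    rw [lintegral_const_mul' _ _ ENNReal.ofReal_ne_top, aux_lint_exp hα hLap t ht'.le,
      ← ENNReal.ofReal_mul (Real.rpow_nonneg ht'.le _)]
  have key : ENNReal.ofReal (Real.Gamma α)
        * ∫⁻ p, ENNReal.ofReal ((p.1 + p.2) ^ (-α)) ∂μ = ENNReal.ofReal (1 / α) := by
    rw [step1, step2, step3, aux_t_int hα]
  have hne : ENNReal.ofReal (Real.Gamma α) ≠ 0 := by
    simp [ENNReal.ofReal_eq_zero, not_le, hG]
  have hA : ∫⁻ p, ENNReal.ofReal ((p.1 + p.2) ^ (-α)) ∂μ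
      = ENNReal.ofReal (1 / α) / ENNReal.ofReal (Real.Gamma α) :=
    (ENNReal.eq_div_iff hne ENNReal.ofReal_ne_top).2 key
  rw [hA, ← ENNReal.ofReal_div_of_pos hG]
  congr 1
  rw [Real.Gamma_add_one hα.ne']
  field_simp


end Aux

theorem stmt7 (α y : ℝ) (hα : 0 < α) (hα1 : α < 1) (hy : y ∈ Set.Icc (0:ℝ) 1)
    (μ : Measure (ℝ × ℝ)) [IsProbabilityMeasure μ]
    (hLap : ∀ l₁ l₂ : ℝ, 0 ≤ l₁ → 0 ≤ l₂ →
      ∫ p, Real.exp (-(l₁ * p.1) - l₂ * p.2) ∂μ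
        = Real.exp (-(y * l₁ ^ α) - (1 - y) * l₂ ^ α)) :
    Real.Gamma (α + 1) * ∫ p, (p.1 + p.2) ^ (-α) ∂μ = 1 ∧
    IsProbabilityMeasure
      ((μ.withDensity
          (fun p => ENNReal.ofReal (Real.Gamma (α + 1) * (p.1 + p.2) ^ (-α)))).map
        (fun p => p.1 / (p.1 + p.2))) := by
  have hG1 : 0 < Real.Gamma (α + 1) := Real.Gamma_pos_of_pos (by linarith)
  have hA := aux_A hα hLap
  have hmeasf : Measurable fun p : ℝ × ℝ => (p.1 + p.2) ^ (-α) :=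
    (measurable_fst.add measurable_snd).pow measurable_const
  have hnn : 0 ≤ᵐ[μ] fun p : ℝ × ℝ => (p.1 + p.2) ^ (-α) := by
    filter_upwards [aux_ae_pos hα hLap] with p hp
    exact Real.rpow_nonneg hp.le _
  have h1 : ∫ p, (p.1 + p.2) ^ (-α) ∂μ = (Real.Gamma (α + 1))⁻¹ := by
    rw [integral_eq_lintegral_of_nonneg_ae hnn hmeasf.aestronglyMeasurable, hA,
      ENNReal.toReal_ofReal (inv_nonneg.2 hG1.le)]
  have htot : ∫⁻ p, ENNReal.ofReal (Real.Gamma (α + 1) * (p.1 + p.2) ^ (-α)) ∂μ = 1 := by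
    simp_rw [ENNReal.ofReal_mul hG1.le]
    rw [lintegral_const_mul' _ _ ENNReal.ofReal_ne_top, hA,
      ← ENNReal.ofReal_mul hG1.le, mul_inv_cancel₀ hG1.ne', ENNReal.ofReal_one]
  have hprob : IsProbabilityMeasure
      (μ.withDensity fun p => ENNReal.ofReal (Real.Gamma (α + 1) * (p.1 + p.2) ^ (-α))) := by
    constructor
    rw [withDensity_apply _ MeasurableSet.univ, Measure.restrict_univ]
    exact htot
  refine ⟨by rw [h1, mul_inv_cancel₀ hG1.ne'], ?_⟩
  exact Measure.isProbabilityMeasure_map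
    ((measurable_fst.div (measurable_fst.add measurable_snd)).aemeasurable)
end

section
/- Let 0 < α < 1, y ∈ [0,1], t ≥ 0 and (Y₁,Y₂) as above. Then 1/(1 + ((1+t)^α − 1)y) = Γ(α+1) ∫₀¹ (1+tx)^{-α} E_{α,y}[(Y₁+Y₂)^{-α}; Y₁/(Y₁+Y₂) ∈ dx], i.e., the biased projection of (Y₁,Y₂) to the ratio Y₁/(Y₁+Y₂) has generalized Stieltjes transform of order α equal to (1+((1+t)^α−1)y)^{-1}. -/
open MeasureTheory

lemma helper_meas_bound {β : Type*} {m : MeasurableSpace β} (μ : Measure β) {g : β → ℝ}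
    (hInt : Integrable g μ) (hg : ∀ x, 0 ≤ g x) {A : Set β} (hA : MeasurableSet A)
    {b : ℝ} (hm : ∀ x ∈ A, b ≤ g x) :
    ENNReal.ofReal b * μ A ≤ ENNReal.ofReal (∫ x, g x ∂μ) := by
  rw [ofReal_integral_eq_lintegral_ofReal hInt (Filter.Eventually.of_forall hg)]
  calc ENNReal.ofReal b * μ A = ∫⁻ _ in A, ENNReal.ofReal b ∂μ := by
        rw [setLIntegral_const]
    _ ≤ ∫⁻ x in A, ENNReal.ofReal (g x) ∂μ := by
        refine lintegral_mono_ae ((ae_restrict_iff' hA).2 ?_)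
        exact Filter.Eventually.of_forall fun x hx => ENNReal.ofReal_le_ofReal (hm x hx)
    _ ≤ ∫⁻ x, ENNReal.ofReal (g x) ∂μ := setLIntegral_le_lintegral _ _

theorem stmt8 (α y t : ℝ) (hα : 0 < α) (hα1 : α < 1) (hy : y ∈ Set.Icc (0:ℝ) 1)
    (ht : 0 ≤ t) (μ : Measure (ℝ × ℝ)) [IsProbabilityMeasure μ]
    (hLap : ∀ l₁ l₂ : ℝ, 0 ≤ l₁ → 0 ≤ l₂ →
      ∫ p, Real.exp (-(l₁ * p.1) - l₂ * p.2) ∂μ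
        = Real.exp (-(y * l₁ ^ α) - (1 - y) * l₂ ^ α)) :
    1 / (1 + ((1 + t) ^ α - 1) * y)
      = Real.Gamma (α + 1)
          * ∫ p, (1 + t * (p.1 / (p.1 + p.2))) ^ (-α) * (p.1 + p.2) ^ (-α) ∂μ := by
  obtain ⟨hy0, hy1⟩ := hy
  set c : ℝ := 1 + ((1 + t) ^ α - 1) * y with hc_def
  have h1t : (1:ℝ) ≤ (1 + t) ^ α := by
    have h := Real.rpow_le_rpow zero_le_one (by linarith : (1:ℝ) ≤ 1 + t) hα.le
    rwa [Real.one_rpow] at h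
  have hc : 0 < c := by nlinarith [mul_nonneg (sub_nonneg.2 h1t) hy0]
  have hΓ : 0 < Real.Gamma (α + 1) := Real.Gamma_pos_of_pos (by linarith)
  -- Integrability of the Laplace integrands
  have hIntExp : ∀ l₁ l₂ : ℝ, 0 ≤ l₁ → 0 ≤ l₂ →
      Integrable (fun p : ℝ × ℝ => Real.exp (-(l₁ * p.1) - l₂ * p.2)) μ := by
    intro l₁ l₂ h1 h2
    by_contra h
    have := hLap l₁ l₂ h1 h2
    rw [integral_undef h] at this
    exact Real.exp_ne_zero _ this.symm
  have hLint : ∀ l₁ l₂ : ℝ, 0 ≤ l₁ → 0 ≤ l₂ →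
      ∫⁻ p, ENNReal.ofReal (Real.exp (-(l₁ * p.1) - l₂ * p.2)) ∂μ
        = ENNReal.ofReal (Real.exp (-(y * l₁ ^ α) - (1 - y) * l₂ ^ α)) := by
    intro l₁ l₂ h1 h2
    rw [← ofReal_integral_eq_lintegral_ofReal (hIntExp l₁ l₂ h1 h2)
      (Filter.Eventually.of_forall fun p => (Real.exp_pos _).le), hLap l₁ l₂ h1 h2]
  -- a.e. nonnegativity of first coordinate
  have key1 : ∀ ε : ℝ, 0 < ε → μ {p : ℝ × ℝ | p.1 ≤ -ε} = 0 := by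
    intro ε hε
    have hA : MeasurableSet {p : ℝ × ℝ | p.1 ≤ -ε} :=
      measurableSet_le measurable_fst measurable_const
    have bound : ∀ n : ℕ, μ {p : ℝ × ℝ | p.1 ≤ -ε} ≤ ENNReal.ofReal (Real.exp (-((n:ℝ) * ε))) := by
      intro n
      have h1 := helper_meas_bound μ (hIntExp (n:ℝ) 0 (Nat.cast_nonneg n) le_rfl)
        (fun p => (Real.exp_pos _).le) hA
        (b := Real.exp ((n:ℝ) * ε)) (fun p hp => by
          apply Real.exp_le_exp.2
          have : p.1 ≤ -ε := hp
          nlinarith [Nat.cast_nonneg (α := ℝ) n])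
      rw [hLap (n:ℝ) 0 (Nat.cast_nonneg n) le_rfl] at h1
      have h2 : Real.exp (-(y * (n:ℝ) ^ α) - (1 - y) * (0:ℝ) ^ α) ≤ 1 := by
        rw [Real.zero_rpow hα.ne']
        apply Real.exp_le_one_iff.2
        have : 0 ≤ y * (n:ℝ) ^ α := mul_nonneg hy0 (Real.rpow_nonneg (Nat.cast_nonneg n) α)
        linarith
      have h3 : ENNReal.ofReal (Real.exp ((n:ℝ) * ε)) * μ {p : ℝ × ℝ | p.1 ≤ -ε} ≤ 1 := by
        refine h1.trans ?_
        simpa using ENNReal.ofReal_le_ofReal h2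
      have h4 : μ {p : ℝ × ℝ | p.1 ≤ -ε} ≤ (ENNReal.ofReal (Real.exp ((n:ℝ) * ε)))⁻¹ :=
        ENNReal.le_inv_iff_mul_le.2 (by rwa [mul_comm] at h3)
      rwa [Real.exp_neg, ENNReal.ofReal_inv_of_pos (Real.exp_pos _)]
    have tendsto0 : Filter.Tendsto (fun n : ℕ => ENNReal.ofReal (Real.exp (-((n:ℝ) * ε))))
        Filter.atTop (nhds 0) := by
      rw [← ENNReal.ofReal_zero]
      apply ENNReal.tendsto_ofReal
      apply Real.tendsto_exp_atBot.comp
      apply Filter.tendsto_neg_atBot_iff.2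
      exact Filter.Tendsto.atTop_mul_const hε tendsto_natCast_atTop_atTop
    have := ge_of_tendsto' tendsto0 bound
    exact le_antisymm this (by simp)
  have hae1 : ∀ᵐ p ∂μ, 0 ≤ p.1 := by
    rw [ae_iff]
    have hsub : {p : ℝ × ℝ | ¬ 0 ≤ p.1} ⊆ ⋃ n : ℕ, {p : ℝ × ℝ | p.1 ≤ -(1/((n:ℝ)+1))} := by
      intro p hp
      have hp' : p.1 < 0 := not_le.1 hp
      obtain ⟨n, hn⟩ := exists_nat_one_div_lt (neg_pos.2 hp')
      exact Set.mem_iUnion.2 ⟨n, by simp only [Set.mem_setOf_eq]; linarith⟩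
    exact measure_mono_null hsub (measure_iUnion_null fun n => key1 _ (by positivity))
  -- a.e. positivity of the sum
  have key3 : μ {p : ℝ × ℝ | p.1 + p.2 ≤ 0} = 0 := by
    have hA : MeasurableSet {p : ℝ × ℝ | p.1 + p.2 ≤ 0} :=
      measurableSet_le (measurable_fst.add measurable_snd) measurable_const
    have bound : ∀ n : ℕ, μ {p : ℝ × ℝ | p.1 + p.2 ≤ 0}
        ≤ ENNReal.ofReal (Real.exp (-(n:ℝ) ^ α)) := by
      intro n
      have h1 := helper_meas_bound μ (hIntExp (n:ℝ) (n:ℝ) (Nat.cast_nonneg n) (Nat.cast_nonneg n))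
        (fun p => (Real.exp_pos _).le) hA (b := 1) (fun p hp => by
          rw [show (1:ℝ) = Real.exp 0 by simp]
          apply Real.exp_le_exp.2
          have : p.1 + p.2 ≤ 0 := hp
          nlinarith [Nat.cast_nonneg (α := ℝ) n])
      rw [hLap (n:ℝ) (n:ℝ) (Nat.cast_nonneg n) (Nat.cast_nonneg n)] at h1
      have he : -(y * (n:ℝ) ^ α) - (1 - y) * (n:ℝ) ^ α = -(n:ℝ) ^ α := by ring
      rw [he] at h1
      simpa using h1
    have tendsto0 : Filter.Tendsto (fun n : ℕ => ENNReal.ofReal (Real.exp (-(n:ℝ) ^ α)))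
        Filter.atTop (nhds 0) := by
      rw [← ENNReal.ofReal_zero]
      apply ENNReal.tendsto_ofReal
      apply Real.tendsto_exp_atBot.comp
      apply Filter.tendsto_neg_atBot_iff.2
      exact (tendsto_rpow_atTop hα).comp tendsto_natCast_atTop_atTop
    have := ge_of_tendsto' tendsto0 bound
    exact le_antisymm this (by simp)
  have hae3 : ∀ᵐ p ∂μ, 0 < p.1 + p.2 := by
    rw [ae_iff]
    have : {p : ℝ × ℝ | ¬ 0 < p.1 + p.2} = {p : ℝ × ℝ | p.1 + p.2 ≤ 0} := by
      ext p; simp [not_lt]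
    rw [this]; exact key3
  -- the linear functional S
  set S : ℝ × ℝ → ℝ := fun p => (1 + t) * p.1 + p.2 with hS_def
  have hSmeas : Measurable S := by fun_prop
  have hSpos : ∀ᵐ p ∂μ, 0 < S p := by
    filter_upwards [hae1, hae3] with p h1 h3
    simp only [hS_def]
    nlinarith [mul_nonneg ht h1]
  -- Gamma integral representation
  have hGammaInt : ∀ s : ℝ, 0 < s →
      ∫⁻ v in Set.Ioi (0:ℝ), ENNReal.ofReal (Real.exp (-(s * v ^ (1/α))))
        = ENNReal.ofReal (Real.Gamma (α + 1) * s ^ (-α)) := by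
    intro s hs
    have hp1 : (1:ℝ) ≤ 1/α := one_le_one_div hα hα1.le
    have hint : IntegrableOn (fun v : ℝ => Real.exp (-(s * v ^ (1/α)))) (Set.Ioi 0) := by
      have := integrableOn_rpow_mul_exp_neg_mul_rpow (p := 1/α) (s := 0) (b := s)
        (by norm_num) (by positivity) hs
      simpa [neg_mul] using this
    rw [← ofReal_integral_eq_lintegral_ofReal hint
      (Filter.Eventually.of_forall fun v => (Real.exp_pos _).le)]
    congr 1
    have hval := integral_rpow_mul_exp_neg_mul_rpow (p := 1/α) (q := 0) (b := s)
      (by positivity) (by norm_num) hs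
    simp only [Real.rpow_zero, one_mul] at hval
    rw [show (fun v : ℝ => Real.exp (-(s * v ^ (1/α)))) = fun v : ℝ => Real.exp (-s * v ^ (1/α))
      by funext v; rw [neg_mul]]
    rw [hval]
    rw [Real.Gamma_add_one hα.ne']
    rw [show -(0 + 1) / (1/α) = -α by field_simp; norm_num]
    rw [show (0 + 1) / (1/α) = α by field_simp; norm_num]
    rw [one_div (1/α), one_div α, inv_inv]
    ring
  -- exponential integral
  have hExpInt : ∫⁻ v in Set.Ioi (0:ℝ), ENNReal.ofReal (Real.exp (-(c * v)))
      = ENNReal.ofReal (1/c) := by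
    have hint : IntegrableOn (fun v : ℝ => Real.exp (-(c * v))) (Set.Ioi 0) := by
      have := integrableOn_rpow_mul_exp_neg_mul_rpow (p := 1) (s := 0) (b := c)
        (by norm_num) one_pos hc
      simpa [Real.rpow_zero, Real.rpow_one, one_mul, neg_mul] using this
    rw [← ofReal_integral_eq_lintegral_ofReal hint
      (Filter.Eventually.of_forall fun v => (Real.exp_pos _).le)]
    congr 1
    have hval := Real.integral_rpow_mul_exp_neg_mul_Ioi (a := 1) (r := c) one_pos hc
    simp only [sub_self, Real.rpow_zero, one_mul, Real.Gamma_one, mul_one, Real.rpow_one] at hval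
    rw [hval]
  -- measurability of the kernel
  have hkermeas : AEMeasurable
      (Function.uncurry fun (p : ℝ × ℝ) (v : ℝ) => ENNReal.ofReal (Real.exp (-(S p * v ^ (1/α)))))
      (μ.prod (volume.restrict (Set.Ioi (0:ℝ)))) := by
    apply Measurable.aemeasurable
    have hm : Measurable (fun q : (ℝ × ℝ) × ℝ => ENNReal.ofReal (Real.exp (-(S q.1 * q.2 ^ (1/α))))) := by
      fun_prop
    exact hm
  -- main lintegral computation
  have hL : ENNReal.ofReal (Real.Gamma (α + 1)) * ∫⁻ p, ENNReal.ofReal (S p ^ (-α)) ∂μ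
      = ENNReal.ofReal (1/c) := by
    rw [← lintegral_const_mul' _ _ ENNReal.ofReal_ne_top]
    calc ∫⁻ p, ENNReal.ofReal (Real.Gamma (α + 1)) * ENNReal.ofReal (S p ^ (-α)) ∂μ
        = ∫⁻ p, (∫⁻ v in Set.Ioi (0:ℝ), ENNReal.ofReal (Real.exp (-(S p * v ^ (1/α))))) ∂μ := by
          refine lintegral_congr_ae (hSpos.mono fun p hp => ?_)
          show ENNReal.ofReal (Real.Gamma (α + 1)) * ENNReal.ofReal (S p ^ (-α))
            = ∫⁻ v in Set.Ioi (0:ℝ), ENNReal.ofReal (Real.exp (-(S p * v ^ (1/α))))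
          rw [← ENNReal.ofReal_mul hΓ.le, hGammaInt (S p) hp]
      _ = ∫⁻ v in Set.Ioi (0:ℝ), (∫⁻ p, ENNReal.ofReal (Real.exp (-(S p * v ^ (1/α)))) ∂μ) :=
          lintegral_lintegral_swap hkermeas
      _ = ∫⁻ v in Set.Ioi (0:ℝ), ENNReal.ofReal (Real.exp (-(c * v))) := by
          refine setLIntegral_congr_fun measurableSet_Ioi
            (fun v hv => ?_)
          set w : ℝ := v ^ (1/α) with hw_def
          have hw : 0 < w := Real.rpow_pos_of_pos hv _
          have hrw : ∀ p : ℝ × ℝ, -(S p * w) = -(((1 + t) * w) * p.1) - w * p.2 := by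
            intro p; simp only [hS_def]; ring
          have h1 : ∫⁻ p, ENNReal.ofReal (Real.exp (-(S p * w))) ∂μ
              = ENNReal.ofReal (Real.exp (-(y * ((1 + t) * w) ^ α) - (1 - y) * w ^ α)) := by
            simp_rw [hrw]
            exact hLint _ _ (by positivity) hw.le
          rw [h1]
          congr 2
          have hwα : w ^ α = v := by
            rw [hw_def, one_div, Real.rpow_inv_rpow (le_of_lt hv) hα.ne']
          rw [Real.mul_rpow (by linarith) hw.le, hwα, hc_def]
          ring
      _ = ENNReal.ofReal (1/c) := hExpInt
  have hL2 : ∫⁻ p, ENNReal.ofReal (S p ^ (-α)) ∂μ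
      = ENNReal.ofReal (1/(Real.Gamma (α + 1) * c)) := by
    have h0 : ENNReal.ofReal (Real.Gamma (α + 1)) ≠ 0 := by
      simp [ENNReal.ofReal_eq_zero, not_le, hΓ]
    have hrhs : ENNReal.ofReal (Real.Gamma (α + 1))
        * ENNReal.ofReal (1/(Real.Gamma (α + 1) * c)) = ENNReal.ofReal (1/c) := by
      rw [← ENNReal.ofReal_mul hΓ.le]
      congr 1
      field_simp
    calc ∫⁻ p, ENNReal.ofReal (S p ^ (-α)) ∂μ
        = (ENNReal.ofReal (Real.Gamma (α + 1)))⁻¹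
          * (ENNReal.ofReal (Real.Gamma (α + 1)) * ∫⁻ p, ENNReal.ofReal (S p ^ (-α)) ∂μ) := by
          rw [← mul_assoc, ENNReal.inv_mul_cancel h0 ENNReal.ofReal_ne_top, one_mul]
      _ = (ENNReal.ofReal (Real.Gamma (α + 1)))⁻¹
          * (ENNReal.ofReal (Real.Gamma (α + 1))
            * ENNReal.ofReal (1/(Real.Gamma (α + 1) * c))) := by rw [hL, hrhs]
      _ = ENNReal.ofReal (1/(Real.Gamma (α + 1) * c)) := by
          rw [← mul_assoc, ENNReal.inv_mul_cancel h0 ENNReal.ofReal_ne_top, one_mul]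
  -- back to Bochner integrals
  have hInt2 : ∫ p, S p ^ (-α) ∂μ = 1/(Real.Gamma (α + 1) * c) := by
    rw [integral_eq_lintegral_of_nonneg_ae
      (hSpos.mono fun p hp => Real.rpow_nonneg hp.le _)
      ((by fun_prop : Measurable (fun p : ℝ × ℝ => S p ^ (-α))).aestronglyMeasurable)]
    rw [hL2, ENNReal.toReal_ofReal (by positivity)]
  have hcongr : ∫ p, (1 + t * (p.1 / (p.1 + p.2))) ^ (-α) * (p.1 + p.2) ^ (-α) ∂μ
      = ∫ p, S p ^ (-α) ∂μ := by
    refine integral_congr_ae ?_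
    filter_upwards [hae1, hae3] with p h1 h3
    have ha : (0:ℝ) ≤ 1 + t * (p.1 / (p.1 + p.2)) := by
      have : 0 ≤ p.1 / (p.1 + p.2) := div_nonneg h1 h3.le
      nlinarith
    rw [← Real.mul_rpow ha h3.le]
    congr 1
    simp only [hS_def]
    field_simp
    ring
  rw [hcongr, hInt2]
  field_simp
end

section
/- Let c₁, c₂ > 0 and let T : [0,∞) → ℝ be twice continuously differentiable satisfying the hypergeometric equation u(1+u)T''(u) + [(c₁+c₂) + (c₁+2)u]T'(u) + c₁T(u) = 0 for u > 0, with T(0) = 1 and T'(0) = −c₁/(c₁+c₂). Then T(u) = ∫₀¹ B_{c₁,c₂}(dy)/(1+uy) for all u ≥ 0, where B_{c₁,c₂} is the Beta(c₁,c₂) distribution. -/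
open MeasureTheory

open MeasureTheory Set Filter

namespace Stmt9Aux

lemma cont_rpow {c : ℝ} (hc : 0 < c) : Continuous fun y : ℝ => y ^ c :=
  continuous_iff_continuousAt.2 fun x => Real.continuousAt_rpow_const x c (Or.inr hc.le)

lemma f0_cast {a b y : ℝ} (hy : y ∈ Set.Icc (0:ℝ) 1) :
    (y : ℂ) ^ ((a:ℂ) - 1) * (1 - (y : ℂ)) ^ ((b:ℂ) - 1)
      = ((y ^ (a-1) * (1-y) ^ (b-1) : ℝ) : ℂ) := by
  rw [Complex.ofReal_mul, Complex.ofReal_cpow hy.1, Complex.ofReal_cpow (by linarith [hy.2] : (0:ℝ) ≤ 1 - y)]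
  push_cast
  ring

lemma f0_integrableOn {a b : ℝ} (ha : 0 < a) (hb : 0 < b) :
    IntegrableOn (fun y : ℝ => y ^ (a-1) * (1-y) ^ (b-1)) (Set.Icc 0 1) := by
  have hc := Complex.betaIntegral_convergent (u := (a:ℂ)) (v := (b:ℂ)) (by simpa) (by simpa)
  rw [intervalIntegrable_iff_integrableOn_Ioc_of_le zero_le_one] at hc
  rw [integrableOn_Icc_iff_integrableOn_Ioc]
  have := hc.re
  refine (IntegrableOn.congr_fun this ?_ measurableSet_Ioc)
  intro y hy
  have : (y : ℂ) ^ ((a:ℂ) - 1) * (1 - (y : ℂ)) ^ ((b:ℂ) - 1)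
      = ((y ^ (a-1) * (1-y) ^ (b-1) : ℝ) : ℂ) := f0_cast ⟨hy.1.le, hy.2⟩
  simp [this]

lemma beta_integral_real {a b : ℝ} (ha : 0 < a) (hb : 0 < b) :
    ∫ y in Set.Icc (0:ℝ) 1, y ^ (a-1) * (1-y) ^ (b-1)
      = Real.Gamma a * Real.Gamma b / Real.Gamma (a+b) := by
  have key := Complex.Gamma_mul_Gamma_eq_betaIntegral (s := (a:ℂ)) (t := (b:ℂ))
    (by simpa) (by simpa)
  have hval : Complex.betaIntegral a b = ((∫ y in (0:ℝ)..1, y ^ (a-1) * (1-y) ^ (b-1) : ℝ) : ℂ) := by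
    rw [Complex.betaIntegral]
    rw [intervalIntegral.integral_congr (g := fun y : ℝ => ((y ^ (a-1) * (1-y) ^ (b-1) : ℝ) : ℂ))
      (by intro y hy; exact f0_cast (by simpa [Set.uIcc_of_le (zero_le_one' ℝ)] using hy))]
    exact RCLike.intervalIntegral_ofReal (𝕜 := ℂ)
  rw [hval, ← Complex.ofReal_add, Complex.Gamma_ofReal, Complex.Gamma_ofReal,
    Complex.Gamma_ofReal, ← Complex.ofReal_mul, ← Complex.ofReal_mul] at key
  have key2 : Real.Gamma a * Real.Gamma b
      = Real.Gamma (a+b) * ∫ y in (0:ℝ)..1, y ^ (a-1) * (1-y) ^ (b-1) := by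
    exact_mod_cast key
  have hG : 0 < Real.Gamma (a+b) := Real.Gamma_pos_of_pos (by linarith)
  rw [MeasureTheory.integral_Icc_eq_integral_Ioc,
    ← intervalIntegral.integral_of_le zero_le_one]
  field_simp [key2]
  rw [key2]; ring


noncomputable def Cg (c₁ c₂ : ℝ) : ℝ := Real.Gamma (c₁+c₂) / (Real.Gamma c₁ * Real.Gamma c₂)

noncomputable def betaD (c₁ c₂ u : ℝ) : ℝ := Cg c₁ c₂ * u ^ (c₁ - 1) * (1 - u) ^ (c₂ - 1)

lemma Cg_pos {c₁ c₂ : ℝ} (hc₁ : 0 < c₁) (hc₂ : 0 < c₂) : 0 < Cg c₁ c₂ := by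
  have := Real.Gamma_pos_of_pos hc₁
  have := Real.Gamma_pos_of_pos hc₂
  have := Real.Gamma_pos_of_pos (by linarith : 0 < c₁ + c₂)
  exact div_pos ‹0 < Real.Gamma (c₁+c₂)› (by positivity)

lemma betaD_nonneg {c₁ c₂ : ℝ} (hc₁ : 0 < c₁) (hc₂ : 0 < c₂) {y : ℝ} (hy : y ∈ Set.Icc (0:ℝ) 1) :
    0 ≤ betaD c₁ c₂ y := by
  have h1 : (0:ℝ) ≤ y ^ (c₁ - 1) := Real.rpow_nonneg hy.1 _
  have h2 : (0:ℝ) ≤ (1-y) ^ (c₂ - 1) := Real.rpow_nonneg (by linarith [hy.2]) _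
  have := Cg_pos hc₁ hc₂
  unfold betaD; positivity

lemma betaD_eq (c₁ c₂ : ℝ) : betaD c₁ c₂ = fun y => Cg c₁ c₂ * (y ^ (c₁-1) * (1-y) ^ (c₂-1)) := by
  funext y; rw [betaD]; ring

lemma betaD_integrableOn {c₁ c₂ : ℝ} (hc₁ : 0 < c₁) (hc₂ : 0 < c₂) :
    IntegrableOn (betaD c₁ c₂) (Set.Icc 0 1) := by
  rw [betaD_eq]
  exact (f0_integrableOn hc₁ hc₂).const_mul (Cg c₁ c₂)

lemma betaD_integral {c₁ c₂ : ℝ} (hc₁ : 0 < c₁) (hc₂ : 0 < c₂) :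
    ∫ y in Set.Icc (0:ℝ) 1, betaD c₁ c₂ y = 1 := by
  have h := beta_integral_real hc₁ hc₂
  have : ∫ y in Set.Icc (0:ℝ) 1, betaD c₁ c₂ y
      = Cg c₁ c₂ * ∫ y in Set.Icc (0:ℝ) 1, y ^ (c₁-1) * (1-y) ^ (c₂-1) := by
    rw [← MeasureTheory.integral_const_mul]
    simp [betaD, mul_assoc]
  rw [this, h]
  have h1 := Real.Gamma_pos_of_pos hc₁
  have h2 := Real.Gamma_pos_of_pos hc₂
  have h3 := Real.Gamma_pos_of_pos (by linarith : 0 < c₁ + c₂)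
  unfold Cg
  field_simp

lemma aesm_of_contOn {g : ℝ → ℝ} (h : ContinuousOn g (Set.Ioo 0 1)) :
    AEStronglyMeasurable g (volume.restrict (Set.Icc (0:ℝ) 1)) := by
  rw [← Measure.restrict_congr_set Ioo_ae_eq_Icc]
  exact h.aestronglyMeasurable measurableSet_Ioo

lemma contOn_f0 {c₁ c₂ : ℝ} :
    ContinuousOn (fun y : ℝ => y ^ (c₁-1) * (1-y) ^ (c₂-1)) (Set.Ioo 0 1) := by
  intro y hy
  exact ((Real.continuousAt_rpow_const y _ (Or.inl hy.1.ne')).mul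
    ((Real.continuousAt_rpow_const (1-y) _ (Or.inl (by simp only [ne_eq, sub_eq_zero]; intro h; linarith [hy.2] : (1:ℝ)-y ≠ 0))).comp
      ((continuous_const.sub continuous_id).continuousAt))).continuousWithinAt

lemma contOn_betaD {c₁ c₂ : ℝ} : ContinuousOn (betaD c₁ c₂) (Set.Ioo 0 1) := by
  rw [betaD_eq]
  exact continuousOn_const.mul contOn_f0

lemma integrable_dom {c₁ c₂ : ℝ} (hc₁ : 0 < c₁) (hc₂ : 0 < c₂) {g : ℝ → ℝ} {M : ℝ}
    (hm : AEStronglyMeasurable g (volume.restrict (Set.Icc (0:ℝ) 1)))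
    (hb : ∀ y ∈ Set.Icc (0:ℝ) 1, ‖g y‖ ≤ M * betaD c₁ c₂ y) :
    IntegrableOn g (Set.Icc 0 1) :=
  ((betaD_integrableOn hc₁ hc₂).const_mul M).mono' hm
    ((ae_restrict_iff' measurableSet_Icc).2 (Filter.Eventually.of_forall hb))

lemma den_half {u₀ u y : ℝ} (hu₀ : 0 ≤ u₀) (hu : u ∈ Metric.ball u₀ (1/2))
    (hy : y ∈ Set.Icc (0:ℝ) 1) : 1/2 ≤ 1 + u * y := by
  rw [Metric.mem_ball, Real.dist_eq, abs_lt] at hu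
  nlinarith [mul_nonneg (by linarith [hu.1] : (0:ℝ) ≤ u + 1/2) hy.1, hy.1, hy.2]

lemma G_hasDeriv {c₁ c₂ : ℝ} (hc₁ : 0 < c₁) (hc₂ : 0 < c₂) {u₀ : ℝ} (hu₀ : 0 ≤ u₀) :
    IntegrableOn (fun y => -(betaD c₁ c₂ y * y / (1+u₀*y)^2)) (Set.Icc 0 1) ∧
    HasDerivAt (fun u => ∫ y in Set.Icc (0:ℝ) 1, betaD c₁ c₂ y / (1+u*y))
      (∫ y in Set.Icc (0:ℝ) 1, -(betaD c₁ c₂ y * y / (1+u₀*y)^2)) u₀ := by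
  have key := hasDerivAt_integral_of_dominated_loc_of_deriv_le
    (μ := volume.restrict (Set.Icc (0:ℝ) 1))
    (F := fun u y => betaD c₁ c₂ y / (1+u*y))
    (F' := fun u y => -(betaD c₁ c₂ y * y / (1+u*y)^2))
    (x₀ := u₀) (bound := fun y => 4 * betaD c₁ c₂ y)
    (s := Metric.ball u₀ (1/2)) (Metric.ball_mem_nhds u₀ (by norm_num))
    ?hFmeas ?hFint ?hF'meas ?hbound ?hboundint ?hdiff
  · exact key
  case hFmeas =>
    filter_upwards [Metric.ball_mem_nhds u₀ (by norm_num : (0:ℝ) < 1/2)] with u hu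
    apply aesm_of_contOn
    apply ContinuousOn.div (contOn_betaD)
      (((continuous_const.add (continuous_const.mul continuous_id)).continuousOn))
    intro y hy
    have := den_half hu₀ hu (Set.mem_Icc_of_Ioo hy)
    simp only [Pi.add_apply, Pi.mul_apply, Pi.pow_apply, id]
    intro h; rw [h] at this; norm_num at this
  case hFint =>
    apply integrable_dom hc₁ hc₂ (M := 2)
    · apply aesm_of_contOn
      apply ContinuousOn.div (contOn_betaD)
        (((continuous_const.add (continuous_const.mul continuous_id)).continuousOn))
      intro y hy
      have := den_half hu₀ (Metric.mem_ball_self (by norm_num)) (Set.mem_Icc_of_Ioo hy)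
      simp only [Pi.add_apply, Pi.mul_apply, Pi.pow_apply, id]; intro h; rw [h] at this; norm_num at this
    · intro y hy
      have ht := den_half hu₀ (Metric.mem_ball_self (by norm_num)) hy
      have hβ := betaD_nonneg hc₁ hc₂ hy
      rw [Real.norm_eq_abs, abs_of_nonneg (div_nonneg hβ (by linarith))]
      rw [div_le_iff₀ (by linarith)]
      nlinarith [mul_le_mul_of_nonneg_left ht (by linarith : (0:ℝ) ≤ 2 * betaD c₁ c₂ y)]
  case hF'meas =>
    apply aesm_of_contOn
    apply ContinuousOn.neg
    apply ContinuousOn.div (contOn_betaD.mul (continuous_id.continuousOn))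
      ((((continuous_const.add (continuous_const.mul continuous_id)).pow 2).continuousOn))
    intro y hy
    have := den_half hu₀ (Metric.mem_ball_self (by norm_num)) (Set.mem_Icc_of_Ioo hy)
    simp only [Pi.add_apply, Pi.mul_apply, Pi.pow_apply, id]
    positivity
  case hbound =>
    rw [ae_restrict_iff' measurableSet_Icc]
    apply Filter.Eventually.of_forall
    intro y hy u hu
    have ht := den_half hu₀ hu hy
    have hβ := betaD_nonneg hc₁ hc₂ hy
    rw [norm_neg, Real.norm_eq_abs,
      abs_of_nonneg (div_nonneg (mul_nonneg hβ hy.1) (by positivity))]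
    rw [div_le_iff₀ (by positivity)]
    show betaD c₁ c₂ y * y ≤ 4 * betaD c₁ c₂ y * (1+u*y)^2
    have h4 : (1:ℝ)/4 ≤ (1+u*y)^2 := by nlinarith
    have h5 : betaD c₁ c₂ y * y ≤ betaD c₁ c₂ y := by
      nlinarith [mul_nonneg hβ (by linarith [hy.2] : (0:ℝ) ≤ 1 - y)]
    nlinarith [mul_le_mul_of_nonneg_left h4 (by linarith : (0:ℝ) ≤ 4 * betaD c₁ c₂ y)]
  case hboundint =>
    exact (betaD_integrableOn hc₁ hc₂).const_mul 4
  case hdiff =>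
    rw [ae_restrict_iff' measurableSet_Icc]
    apply Filter.Eventually.of_forall
    intro y hy u hu
    have ht := den_half hu₀ hu hy
    have hne : 1 + u*y ≠ 0 := by intro h; rw [h] at ht; norm_num at ht
    have hden : HasDerivAt (fun u : ℝ => 1 + u*y) y u := by
      simpa using ((hasDerivAt_id u).mul_const y).const_add 1
    have h := (hden.inv hne).const_mul (betaD c₁ c₂ y)
    have hfun : (fun u : ℝ => betaD c₁ c₂ y * (1+u*y)⁻¹)
        = fun u : ℝ => betaD c₁ c₂ y / (1+u*y) := by
      funext v; rw [div_eq_mul_inv]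
    simp only [Pi.inv_apply] at h
    rw [hfun] at h
    refine h.congr_deriv ?_
    ring

lemma f0_integrable_dom {c₁ c₂ : ℝ} (hc₁ : 0 < c₁) (hc₂ : 0 < c₂) {g : ℝ → ℝ} {M : ℝ}
    (hm : AEStronglyMeasurable g (volume.restrict (Set.Icc (0:ℝ) 1)))
    (hb : ∀ y ∈ Set.Icc (0:ℝ) 1, ‖g y‖ ≤ M * (y ^ (c₁-1) * (1-y) ^ (c₂-1))) :
    IntegrableOn g (Set.Icc 0 1) :=
  ((f0_integrableOn hc₁ hc₂).const_mul M).mono' hm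
    ((ae_restrict_iff' measurableSet_Icc).2 (Filter.Eventually.of_forall hb))

lemma g2_integrable {c₁ c₂ : ℝ} (hc₁ : 0 < c₁) (hc₂ : 0 < c₂) {u : ℝ} (hu : 0 ≤ u) :
    IntegrableOn (fun y => betaD c₁ c₂ y / (1+u*y)) (Set.Icc 0 1) := by
  apply integrable_dom hc₁ hc₂ (M := 2)
  · apply aesm_of_contOn
    apply ContinuousOn.div (contOn_betaD)
      (((continuous_const.add (continuous_const.mul continuous_id)).continuousOn))
    intro y hy
    have := den_half hu (Metric.mem_ball_self (by norm_num)) (Set.mem_Icc_of_Ioo hy)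
    simp only [Pi.add_apply, Pi.mul_apply, Pi.pow_apply, id]; intro h; rw [h] at this; norm_num at this
  · intro y hy
    have ht := den_half hu (Metric.mem_ball_self (by norm_num)) hy
    have hβ := betaD_nonneg hc₁ hc₂ hy
    rw [Real.norm_eq_abs, abs_of_nonneg (div_nonneg hβ (by linarith))]
    rw [div_le_iff₀ (by linarith)]
    nlinarith [mul_le_mul_of_nonneg_left ht (by linarith : (0:ℝ) ≤ 2 * betaD c₁ c₂ y)]

lemma star_G {c₁ c₂ : ℝ} (hc₁ : 0 < c₁) (hc₂ : 0 < c₂) {u : ℝ} (hu : 0 < u) :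
    u*(1+u) * (∫ y in Set.Icc (0:ℝ) 1, -(betaD c₁ c₂ y * y / (1+u*y)^2))
      + (c₁*u + (c₁+c₂-1)) * (∫ y in Set.Icc (0:ℝ) 1, betaD c₁ c₂ y / (1+u*y))
      = c₁+c₂-1 := by
  set a : ℝ := c₁+c₂-1 with ha
  set Q : ℝ → ℝ := fun y =>
    -(u*(1+u)*y/(1+u*y)^2) + (c₁*u + a)/(1+u*y) - a with hQ
  set φ : ℝ → ℝ := fun x => (u * (x ^ c₁ * (1-x) ^ c₂)) / (1+u*x) with hφ
  have htpos : ∀ y ∈ Set.Icc (0:ℝ) 1, (1:ℝ) ≤ 1 + u*y := by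
    intro y hy
    nlinarith [mul_nonneg hu.le hy.1]
  -- derivative of φ
  have hφd : ∀ y ∈ Set.Ioo (0:ℝ) 1,
      HasDerivAt φ (y ^ (c₁-1) * (1-y) ^ (c₂-1) * Q y) y := by
    intro y hy
    have hy0 : 0 < y := hy.1
    have h1y : 0 < 1 - y := by linarith [hy.2]
    have hne : 1 + u*y ≠ 0 := by
      have := htpos y ⟨hy0.le, hy.2.le⟩; intro h; rw [h] at this; norm_num at this
    have hp : HasDerivAt (fun x : ℝ => x ^ c₁) (c₁ * y ^ (c₁-1)) y :=
      Real.hasDerivAt_rpow_const (Or.inl hy0.ne')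
    have hqin : HasDerivAt (fun x : ℝ => 1 - x) (-1) y := (hasDerivAt_id y).const_sub 1
    have hq : HasDerivAt (fun x : ℝ => (1-x) ^ c₂) (c₂ * (1-y) ^ (c₂-1) * (-1)) y :=
      (Real.hasDerivAt_rpow_const (x := 1-y) (p := c₂) (Or.inl h1y.ne')).comp y hqin
    have hnum : HasDerivAt (fun x : ℝ => u * (x ^ c₁ * (1-x) ^ c₂))
        (u * (c₁ * y ^ (c₁-1) * (1-y) ^ c₂ + y ^ c₁ * (c₂ * (1-y) ^ (c₂-1) * (-1)))) y :=
      (hp.mul hq).const_mul u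
    have hden : HasDerivAt (fun x : ℝ => 1 + u*x) u y := by
      simpa using ((hasDerivAt_id y).const_mul u).const_add 1
    have hraw := hnum.div hden hne
    refine hraw.congr_deriv ?_
    have h1 : y ^ c₁ = y * y ^ (c₁ - 1) := by
      have h := Real.rpow_add hy0 1 (c₁ - 1)
      rw [Real.rpow_one] at h
      rw [← h]; congr 1; ring
    have h2 : (1-y) ^ c₂ = (1-y) * (1-y) ^ (c₂ - 1) := by
      have h := Real.rpow_add h1y 1 (c₂ - 1)
      rw [Real.rpow_one] at h
      rw [← h]; congr 1; ring
    rw [hQ, h1, h2]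
    field_simp
    ring
  -- continuity of φ on Icc
  have hφc : ContinuousOn φ (Set.Icc (0:ℝ) 1) := by
    apply ContinuousOn.div
    · exact (continuous_const.mul ((cont_rpow hc₁).mul
        ((cont_rpow hc₂).comp (continuous_const.sub continuous_id)))).continuousOn
    · exact (continuous_const.add (continuous_const.mul continuous_id)).continuousOn
    · intro y hy
      have := htpos y hy
      intro h; rw [h] at this; norm_num at this
  -- bound on Q
  set Mq : ℝ := u*(1+u) + (c₁*u + |a|) + |a| with hMq
  have hQb : ∀ y ∈ Set.Icc (0:ℝ) 1, |Q y| ≤ Mq := by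
    intro y hy
    have ht := htpos y hy
    have e1 : |(-(u*(1+u)*y/(1+u*y)^2))| ≤ u*(1+u) := by
      rw [abs_neg, abs_of_nonneg (div_nonneg (by nlinarith [hy.1] : (0:ℝ) ≤ u*(1+u)*y) (by positivity))]
      rw [div_le_iff₀ (by positivity)]
      have ht2 : (1:ℝ) ≤ (1+u*y)^2 := by nlinarith
      nlinarith [mul_le_mul_of_nonneg_left (le_trans hy.2 ht2)
        (by positivity : (0:ℝ) ≤ u*(1+u))]
    have e2 : |(c₁*u + a)/(1+u*y)| ≤ c₁*u + |a| := by
      rw [abs_div, abs_of_nonneg (by linarith : (0:ℝ) ≤ 1+u*y)]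
      have : |c₁*u + a| ≤ c₁*u + |a| := by
        refine (abs_add_le _ _).trans ?_
        rw [abs_of_nonneg (by positivity : (0:ℝ) ≤ c₁*u)]
      exact le_trans (div_le_self (abs_nonneg _) ht) this
    calc |Q y| ≤ |(-(u*(1+u)*y/(1+u*y)^2)) + (c₁*u + a)/(1+u*y)| + |a| := by
            rw [hQ]; exact abs_sub _ _
      _ ≤ |(-(u*(1+u)*y/(1+u*y)^2))| + |(c₁*u + a)/(1+u*y)| + |a| := by
            gcongr; exact abs_add_le _ _
      _ ≤ Mq := by rw [hMq]; gcongr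
  -- integrability of φ'
  have hf0nn : ∀ y ∈ Set.Icc (0:ℝ) 1, (0:ℝ) ≤ y ^ (c₁-1) * (1-y) ^ (c₂-1) := by
    intro y hy
    exact mul_nonneg (Real.rpow_nonneg hy.1 _) (Real.rpow_nonneg (by linarith [hy.2]) _)
  have hdenne : ∀ y ∈ Set.Ioo (0:ℝ) 1, 1 + u*y ≠ 0 := by
    intro y hy
    have := htpos y (Set.mem_Icc_of_Ioo hy)
    intro h; rw [h] at this; norm_num at this
  have htc : Continuous (fun y : ℝ => 1 + u*y) :=
    continuous_const.add (continuous_const.mul continuous_id)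
  have hQcont : ContinuousOn Q (Set.Ioo (0:ℝ) 1) := by
    rw [hQ]
    apply ContinuousOn.sub _ continuousOn_const
    apply ContinuousOn.add
    · apply ContinuousOn.neg
      apply ContinuousOn.div (continuous_const.mul continuous_id).continuousOn
        (htc.pow 2).continuousOn
      intro y hy
      exact pow_ne_zero 2 (hdenne y hy)
    · exact ContinuousOn.div continuousOn_const htc.continuousOn hdenne
  have hφ'intOn : IntegrableOn (fun y => y ^ (c₁-1) * (1-y) ^ (c₂-1) * Q y) (Set.Icc 0 1) := by
    apply f0_integrable_dom hc₁ hc₂ (M := Mq) (aesm_of_contOn (contOn_f0.mul hQcont))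
    intro y hy
    rw [Real.norm_eq_abs, Pi.mul_apply, abs_mul, abs_of_nonneg (hf0nn y hy)]
    nlinarith [mul_le_mul_of_nonneg_left (hQb y hy) (hf0nn y hy)]
  have hFTC : ∫ y in (0:ℝ)..1, (y ^ (c₁-1) * (1-y) ^ (c₂-1) * Q y) = φ 1 - φ 0 := by
    apply intervalIntegral.integral_eq_sub_of_hasDeriv_right_of_le zero_le_one hφc
      (fun y hy => (hφd y hy).hasDerivWithinAt)
    rw [intervalIntegrable_iff_integrableOn_Ioc_of_le zero_le_one]
    exact hφ'intOn.mono_set Set.Ioc_subset_Icc_self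
  have hφ10 : φ 1 - φ 0 = 0 := by
    rw [hφ]
    norm_num [Real.zero_rpow hc₁.ne', Real.zero_rpow hc₂.ne', Real.one_rpow]
  have hIcc0 : ∫ y in Set.Icc (0:ℝ) 1, (y ^ (c₁-1) * (1-y) ^ (c₂-1) * Q y) = 0 := by
    rw [MeasureTheory.integral_Icc_eq_integral_Ioc,
      ← intervalIntegral.integral_of_le zero_le_one, hFTC, hφ10]
  have hbQ0 : ∫ y in Set.Icc (0:ℝ) 1, betaD c₁ c₂ y * Q y = 0 := by
    have heq : (fun y => betaD c₁ c₂ y * Q y)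
        = fun y => Cg c₁ c₂ * (y ^ (c₁-1) * (1-y) ^ (c₂-1) * Q y) := by
      funext y; rw [betaD]; ring
    rw [heq, MeasureTheory.integral_const_mul, hIcc0, mul_zero]
  have h1int := (G_hasDeriv hc₁ hc₂ hu.le).1
  have h2int := g2_integrable hc₁ hc₂ hu.le
  have h3int := betaD_integrableOn hc₁ hc₂
  have hsplit : (fun y => betaD c₁ c₂ y * Q y) = fun y =>
      (u*(1+u)) * (-(betaD c₁ c₂ y * y / (1+u*y)^2))
      + ((c₁*u + a) * (betaD c₁ c₂ y / (1+u*y)) + (-a) * betaD c₁ c₂ y) := by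
    funext y; rw [hQ]; ring
  rw [hsplit] at hbQ0
  have e1 : ∫ y in Set.Icc (0:ℝ) 1,
      (u*(1+u) * -(betaD c₁ c₂ y * y / (1+u*y)^2)
        + ((c₁*u + a) * (betaD c₁ c₂ y / (1+u*y)) + -a * betaD c₁ c₂ y))
      = (∫ y in Set.Icc (0:ℝ) 1, u*(1+u) * -(betaD c₁ c₂ y * y / (1+u*y)^2))
        + ∫ y in Set.Icc (0:ℝ) 1,
            ((c₁*u + a) * (betaD c₁ c₂ y / (1+u*y)) + -a * betaD c₁ c₂ y) :=
    MeasureTheory.integral_add (h1int.const_mul _)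
      ((h2int.const_mul _).add (h3int.const_mul _))
  have e2 : ∫ y in Set.Icc (0:ℝ) 1,
      ((c₁*u + a) * (betaD c₁ c₂ y / (1+u*y)) + -a * betaD c₁ c₂ y)
      = (∫ y in Set.Icc (0:ℝ) 1, (c₁*u + a) * (betaD c₁ c₂ y / (1+u*y)))
        + ∫ y in Set.Icc (0:ℝ) 1, -a * betaD c₁ c₂ y :=
    MeasureTheory.integral_add (h2int.const_mul _) (h3int.const_mul _)
  rw [e1, e2, MeasureTheory.integral_const_mul, MeasureTheory.integral_const_mul,
    MeasureTheory.integral_const_mul, betaD_integral hc₁ hc₂] at hbQ0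
  linarith [hbQ0]

lemma const_on_Ioi {g : ℝ → ℝ} (hgd : ∀ u > (0:ℝ), HasDerivAt g 0 u) :
    ∀ x > (0:ℝ), ∀ y > (0:ℝ), g x = g y := by
  have key : ∀ x y : ℝ, 0 < x → x ≤ y → g y = g x := by
    intro x y hx hxy
    exact constant_of_has_deriv_right_zero
      (fun u hu => (hgd u (lt_of_lt_of_le hx hu.1)).continuousAt.continuousWithinAt)
      (fun u hu => (hgd u (lt_of_lt_of_le hx hu.1)).hasDerivWithinAt) y ⟨hxy, le_refl y⟩
  intro x hx y hy
  rcases le_total x y with h | h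
  · exact (key x y hx h).symm
  · exact key y x hy h

lemma const_on_Ici {g : ℝ → ℝ} (hgc : ContinuousOn g (Set.Ici 0))
    (hgd : ∀ u > (0:ℝ), HasDerivAt g 0 u) : ∀ v ≥ (0:ℝ), g v = g 0 := by
  intro v hv
  rcases eq_or_lt_of_le hv with h | h
  · rw [← h]
  · have h1 : Filter.Tendsto g (nhdsWithin 0 (Set.Ioi 0)) (nhds (g 0)) :=
      (hgc 0 Set.self_mem_Ici).tendsto.mono_left (nhdsWithin_mono _ Set.Ioi_subset_Ici_self)
    have h2 : Filter.Tendsto g (nhdsWithin 0 (Set.Ioi 0)) (nhds (g v)) := by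
      apply Filter.Tendsto.congr' _ tendsto_const_nhds
      filter_upwards [Ioc_mem_nhdsGT_of_mem ⟨le_refl (0:ℝ), h⟩] with x hx
      exact const_on_Ioi hgd v h x hx.1
    exact tendsto_nhds_unique h2 h1

lemma betaD_eq_betaDensity' (c₁ c₂ : ℝ) :
    betaD c₁ c₂ = fun u => Real.Gamma (c₁ + c₂) / (Real.Gamma c₁ * Real.Gamma c₂)
      * u ^ (c₁ - 1) * (1 - u) ^ (c₂ - 1) := rfl

end Stmt9Aux

namespace Stmt9Aux
theorem stmt9aux (c₁ c₂ : ℝ) (hc₁ : 0 < c₁) (hc₂ : 0 < c₂) (T : ℝ → ℝ)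
    (hT : ContDiffOn ℝ 2 T (Set.Ici 0))
    (hODE : ∀ u > (0:ℝ),
      u * (1 + u) * derivWithin (derivWithin T (Set.Ici 0)) (Set.Ici 0) u
        + ((c₁ + c₂) + (c₁ + 2) * u) * derivWithin T (Set.Ici 0) u + c₁ * T u = 0)
    (hT0 : T 0 = 1)
    (hT'0 : derivWithin T (Set.Ici 0) 0 = -c₁ / (c₁ + c₂)) :
    ∀ u ≥ (0:ℝ), T u = ∫ y in Set.Icc (0:ℝ) 1, betaD c₁ c₂ y / (1 + u * y) := by
  set a : ℝ := c₁ + c₂ - 1 with ha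
  set b : ℝ := c₁ - a with hb
  set T' : ℝ → ℝ := derivWithin T (Set.Ici 0) with hT'def
  set G : ℝ → ℝ := fun u => ∫ y in Set.Icc (0:ℝ) 1, betaD c₁ c₂ y / (1 + u * y) with hGdef
  set G' : ℝ → ℝ := fun u => ∫ y in Set.Icc (0:ℝ) 1, -(betaD c₁ c₂ y * y / (1 + u * y)^2)
    with hG'def
  have huD : UniqueDiffOn ℝ (Set.Ici (0:ℝ)) := uniqueDiffOn_Ici 0
  have hTd : DifferentiableOn ℝ T (Set.Ici 0) := hT.differentiableOn (by norm_num)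
  have hT'c : ContinuousOn T' (Set.Ici 0) := hT.continuousOn_derivWithin huD (by norm_num)
  have hT'1 : ContDiffOn ℝ 1 T' (Set.Ici 0) :=
    hT.derivWithin huD (show (1:WithTop ℕ∞)+1 ≤ 2 by norm_num)
  have hT'd : DifferentiableOn ℝ T' (Set.Ici 0) := hT'1.differentiableOn (by norm_num)
  have hTat : ∀ v > (0:ℝ), HasDerivAt T (T' v) v := fun v hv =>
    ((hTd v hv.le).hasDerivWithinAt).hasDerivAt (Ici_mem_nhds hv)
  have hT'at : ∀ v > (0:ℝ), HasDerivAt T' (derivWithin T' (Set.Ici 0) v) v := fun v hv =>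
    ((hT'd v hv.le).hasDerivWithinAt).hasDerivAt (Ici_mem_nhds hv)
  have hGat : ∀ v ≥ (0:ℝ), HasDerivAt G (G' v) v := fun v hv => (G_hasDeriv hc₁ hc₂ hv).2
  have hG0 : G 0 = 1 := by
    show (∫ y in Set.Icc (0:ℝ) 1, betaD c₁ c₂ y / (1 + 0 * y)) = 1
    simp only [zero_mul, add_zero, div_one]
    exact betaD_integral hc₁ hc₂
  -- the first-order equation for T
  set F : ℝ → ℝ := fun v => v * (1+v) * T' v + (a + c₁*v) * T v - a with hFdef
  have hFd : ∀ v > (0:ℝ), HasDerivAt F 0 v := by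
    intro v hv
    have h1 : HasDerivAt (fun v : ℝ => v * (1+v)) (1*(1+v) + v*1) v :=
      (hasDerivAt_id v).mul ((hasDerivAt_id v).const_add 1)
    have h2 := h1.mul (hT'at v hv)
    have h3 : HasDerivAt (fun v : ℝ => a + c₁*v) (c₁*1) v :=
      ((hasDerivAt_id v).const_mul c₁).const_add a
    have h4 := h3.mul (hTat v hv)
    have h5 := (h2.add h4).sub_const a
    refine h5.congr_deriv ?_
    have hO := hODE v hv
    rw [ha]
    linear_combination hO
  have hFc : ContinuousOn F (Set.Ici 0) := by
    apply ContinuousOn.sub _ continuousOn_const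
    exact ((continuous_id.mul (continuous_const.add continuous_id)).continuousOn.mul hT'c).add
      ((continuous_const.add (continuous_const.mul continuous_id)).continuousOn.mul
        (hT.continuousOn))
  have hF0 : F 0 = 0 := by
    show 0 * (1+0) * T' 0 + (a + c₁*0) * T 0 - a = 0
    rw [hT0]; ring
  have star_T : ∀ v > (0:ℝ), v * (1+v) * T' v + (a + c₁*v) * T v = a := by
    intro v hv
    have h := const_on_Ici hFc hFd v hv.le
    rw [hF0] at h
    have h2 : v * (1+v) * T' v + (a + c₁*v) * T v - a = 0 := h
    linarith
  -- the difference satisfies the same first-order equation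
  have hrel : ∀ v > (0:ℝ),
      v * (1+v) * (T' v - G' v) + (a + c₁*v) * (T v - G v) = 0 := by
    intro v hv
    have h1 := star_T v hv
    have h2 : v * (1+v) * G' v + (c₁*v + (c₁+c₂-1)) * G v = c₁+c₂-1 := star_G hc₁ hc₂ hv
    rw [ha] at h1 ⊢
    linear_combination h1 - h2
  -- integrating factor
  set E : ℝ → ℝ := fun v => (T v - G v) * (v ^ a * (1+v) ^ b) with hEdef
  have hEd : ∀ v > (0:ℝ), HasDerivAt E 0 v := by
    intro v hv
    have h1v : (0:ℝ) < 1 + v := by linarith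
    have hDat : HasDerivAt (fun v => T v - G v) (T' v - G' v) v :=
      (hTat v hv).sub (hGat v hv.le)
    have hw1 : HasDerivAt (fun v : ℝ => v ^ a) (a * v ^ (a-1)) v :=
      Real.hasDerivAt_rpow_const (Or.inl hv.ne')
    have hw2 : HasDerivAt (fun v : ℝ => (1+v) ^ b) (b * (1+v) ^ (b-1) * 1) v :=
      (Real.hasDerivAt_rpow_const (x := 1+v) (p := b) (Or.inl h1v.ne')).comp v
        ((hasDerivAt_id v).const_add 1)
    have hE := hDat.mul (hw1.mul hw2)
    refine hE.congr_deriv ?_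
    simp only [Pi.mul_apply]
    have hva : v ^ a = v * v ^ (a-1) := by
      have h := Real.rpow_add hv 1 (a-1)
      rw [Real.rpow_one] at h
      rw [← h]; congr 1; ring
    have hvb : (1+v) ^ b = (1+v) * (1+v) ^ (b-1) := by
      have h := Real.rpow_add h1v 1 (b-1)
      rw [Real.rpow_one] at h
      rw [← h]; congr 1; ring
    have hr := hrel v hv
    rw [hva, hvb]
    rw [ha] at hr
    rw [hb, ha]
    linear_combination ((v ^ (c₁+c₂-1-1) * (1+v) ^ (c₁-(c₁+c₂-1)-1)) * hr)
  have hEconst : ∀ v > (0:ℝ), E v = E 1 := fun v hv => const_on_Ioi hEd v hv 1 one_pos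
  -- show E 1 = 0
  have hK : E 1 = 0 := by
    by_contra hK
    have hd0 : HasDerivWithinAt (fun v => T v - G v) (T' 0 - G' 0) (Set.Ici 0) 0 :=
      ((hTd 0 Set.self_mem_Ici).hasDerivWithinAt).sub ((hGat 0 le_rfl).hasDerivWithinAt)
    have hslope := hasDerivWithinAt_iff_tendsto_slope.1 hd0
    have hmono : nhdsWithin (0:ℝ) (Set.Ioi 0) ≤ nhdsWithin 0 (Set.Ici 0 \ {0}) :=
      nhdsWithin_mono 0 (fun x hx => ⟨Set.mem_Ici.2 (le_of_lt hx), ne_of_gt hx⟩)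
    have hslope' : Filter.Tendsto (slope (fun v => T v - G v) 0) (nhdsWithin 0 (Set.Ioi 0))
        (nhds (T' 0 - G' 0)) := hslope.mono_left hmono
    set W : ℝ → ℝ := fun v => v ^ (c₁+c₂) * (1+v) ^ b with hWdef
    have hWpos : ∀ v > (0:ℝ), 0 < W v := by
      intro v hv
      exact mul_pos (Real.rpow_pos_of_pos hv _) (Real.rpow_pos_of_pos (by linarith) _)
    have hWto : Filter.Tendsto W (nhdsWithin 0 (Set.Ioi 0)) (nhdsWithin 0 (Set.Ioi 0)) := by
      apply tendsto_nhdsWithin_of_tendsto_nhds_of_eventually_within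
      · have hcW : ContinuousAt W 0 := by
          apply ContinuousAt.mul
          · exact Real.continuousAt_rpow_const 0 _ (Or.inr (by positivity))
          · exact ((Real.continuousAt_rpow_const ((1:ℝ)+0) b (Or.inl (by norm_num))).comp
              ((continuous_const.add continuous_id).continuousAt))
        have hW0 : W 0 = 0 := by
          show (0:ℝ) ^ (c₁+c₂) * ((1:ℝ)+0) ^ b = 0
          rw [Real.zero_rpow (by positivity : c₁+c₂ ≠ 0)]
          ring
        have h := hcW.tendsto
        rw [hW0] at h
        exact h.mono_left nhdsWithin_le_nhds
      · filter_upwards [self_mem_nhdsWithin] with v hv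
        exact hWpos v hv
    have hWinv : Filter.Tendsto (fun v => (W v)⁻¹) (nhdsWithin 0 (Set.Ioi 0)) Filter.atTop :=
      tendsto_inv_nhdsGT_zero.comp hWto
    have habs : Filter.Tendsto (fun v => |E 1| * (W v)⁻¹) (nhdsWithin 0 (Set.Ioi 0))
        Filter.atTop := hWinv.const_mul_atTop (abs_pos.2 hK)
    have hD0 : T 0 - G 0 = 0 := by rw [hT0, hG0]; ring
    have heq : ∀ v > (0:ℝ), |slope (fun v => T v - G v) 0 v| = |E 1| * (W v)⁻¹ := by
      intro v hv
      have h1v : (0:ℝ) < 1 + v := by linarith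
      have hwpos : 0 < v ^ a * (1+v) ^ b :=
        mul_pos (Real.rpow_pos_of_pos hv _) (Real.rpow_pos_of_pos h1v _)
      have hDv : (T v - G v) * (v ^ a * (1+v) ^ b) = E 1 := hEconst v hv
      have hDev : T v - G v = E 1 / (v ^ a * (1+v) ^ b) := by
        rw [eq_div_iff hwpos.ne']; exact hDv
      have hWv : W v = v * (v ^ a * (1+v) ^ b) := by
        show v ^ (c₁+c₂) * (1+v) ^ b = v * (v ^ a * (1+v) ^ b)
        rw [show c₁+c₂ = 1 + a by rw [ha]; ring, Real.rpow_add hv, Real.rpow_one]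
        ring
      rw [slope_def_field, hD0, sub_zero, sub_zero, hDev, hWv, div_div, abs_div,
        abs_of_pos (by positivity : (0:ℝ) < v ^ a * (1+v) ^ b * v), div_eq_mul_inv]
      congr 2
      ring
    have hatop : Filter.Tendsto (fun v => |slope (fun v => T v - G v) 0 v|)
        (nhdsWithin 0 (Set.Ioi 0)) Filter.atTop := by
      apply Filter.Tendsto.congr' _ habs
      filter_upwards [self_mem_nhdsWithin] with v hv
      exact (heq v hv).symm
    exact not_tendsto_nhds_of_tendsto_atTop hatop _ hslope'.abs
  -- conclude
  intro u hu
  rcases eq_or_lt_of_le hu with h | h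
  · rw [← h, hT0]
    exact hG0.symm
  · have hE1 := hEconst u h
    rw [hK] at hE1
    have h1v : (0:ℝ) < 1 + u := by linarith
    have hwpos : 0 < u ^ a * (1+u) ^ b :=
      mul_pos (Real.rpow_pos_of_pos h _) (Real.rpow_pos_of_pos h1v _)
    have hE2 : (T u - G u) * (u ^ a * (1+u) ^ b) = 0 := hE1
    have hTG : T u - G u = 0 := by
      rcases mul_eq_zero.1 hE2 with h' | h'
      · exact h'
      · exact absurd h' hwpos.ne'
    show T u = G u
    linarith

end Stmt9Aux

theorem stmt9 (c₁ c₂ : ℝ) (hc₁ : 0 < c₁) (hc₂ : 0 < c₂) (T : ℝ → ℝ)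
    (hT : ContDiffOn ℝ 2 T (Set.Ici 0))
    (hODE : ∀ u > (0:ℝ),
      u * (1 + u) * derivWithin (derivWithin T (Set.Ici 0)) (Set.Ici 0) u
        + ((c₁ + c₂) + (c₁ + 2) * u) * derivWithin T (Set.Ici 0) u + c₁ * T u = 0)
    (hT0 : T 0 = 1)
    (hT'0 : derivWithin T (Set.Ici 0) 0 = -c₁ / (c₁ + c₂)) :
    ∀ u ≥ (0:ℝ), T u = ∫ y in Set.Icc (0:ℝ) 1, betaDensity c₁ c₂ y / (1 + u * y) := by
  intro u hu
  exact Stmt9Aux.stmt9aux c₁ c₂ hc₁ hc₂ T hT hODE hT0 hT'0 u hu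
end

section
/- Let 0 < α < 1 and c > 1. If Z is a nonnegative random variable with Laplace transform E[e^{-λZ}] = exp(−c log(1+λ^α)) for λ ≥ 0, then E[Z^{-α}] = 1/(Γ(α+1)(c−1)). -/
open MeasureTheory Set Filter Real Topology

open scoped ENNReal

theorem stmt10 (α c : ℝ) (hα : 0 < α) (hα1 : α < 1) (hc : 1 < c)
    (μ : Measure ℝ) [IsProbabilityMeasure μ] (hpos : ∀ᵐ z ∂μ, 0 ≤ z)
    (hLap : ∀ l : ℝ, 0 ≤ l →
      ∫ z, Real.exp (-(l * z)) ∂μ = Real.exp (-(c * Real.log (1 + l ^ α)))) :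
    ∫ z, z ^ (-α) ∂μ = 1 / (Real.Gamma (α + 1) * (c - 1)) := by
  have hα0 : α ≠ 0 := hα.ne'
  have hc1 : (0:ℝ) < c - 1 := by linarith
  set R : ℝ := 1 / (α * (c - 1)) with hR
  set f : ℝ → ℝ → ℝ≥0∞ :=
    fun z v => ENNReal.ofReal (v ^ (α - 1) * Real.exp (-(v * z))) with hfdef
  have hfmeas : Measurable (Function.uncurry f) := by
    apply Measurable.ennreal_ofReal
    exact (measurable_snd.pow measurable_const).mul
      ((measurable_snd.mul measurable_fst).neg.exp)
  -- integrability of the Laplace kernel w.r.t. μ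
  have hexp_int : ∀ v : ℝ, 0 ≤ v → Integrable (fun z => Real.exp (-(v * z))) μ := by
    intro v hv
    refine Integrable.mono' (integrable_const 1) ?_ ?_
    · exact (Real.continuous_exp.comp (continuous_const.mul continuous_id).neg).aestronglyMeasurable
    · filter_upwards [hpos] with z hz
      rw [Real.norm_eq_abs, abs_of_pos (Real.exp_pos _)]
      exact Real.exp_le_one_iff.mpr (neg_nonpos.mpr (mul_nonneg hv hz))
  -- inner μ-integral
  have hA : ∀ v : ℝ, v ∈ Ioi (0:ℝ) →
      ∫⁻ z, f z v ∂μ = ENNReal.ofReal (v ^ (α - 1) * (1 + v ^ α) ^ (-c)) := by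
    intro v hv
    rw [mem_Ioi] at hv
    have hv1 : (0:ℝ) < 1 + v ^ α := by positivity
    have h1 : ∀ z : ℝ, f z v
        = ENNReal.ofReal (v ^ (α - 1)) * ENNReal.ofReal (Real.exp (-(v * z))) := fun z => by
      rw [hfdef, ← ENNReal.ofReal_mul (rpow_nonneg hv.le _)]
    simp_rw [h1]
    rw [lintegral_const_mul' _ _ ENNReal.ofReal_ne_top,
      ← ofReal_integral_eq_lintegral_ofReal (hexp_int v hv.le)
        (Eventually.of_forall fun z => (Real.exp_pos _).le),
      hLap v hv.le, ← ENNReal.ofReal_mul (rpow_nonneg hv.le _)]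
    congr 2
    rw [Real.rpow_def_of_pos hv1]
    ring_nf
  -- integrability of φ on Ioi 0
  have hφmeas : Measurable fun v : ℝ => v ^ (α - 1) * (1 + v ^ α) ^ (-c) := by
    exact (measurable_id.pow measurable_const).mul
      ((measurable_const.add (measurable_id.pow measurable_const)).pow measurable_const)
  have hφint : IntegrableOn (fun v : ℝ => v ^ (α - 1) * (1 + v ^ α) ^ (-c)) (Ioi (0:ℝ)) := by
    rw [← Ioc_union_Ioi_eq_Ioi (zero_le_one : (0:ℝ) ≤ 1), integrableOn_union]
    constructor
    · refine Integrable.mono'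
        ((intervalIntegrable_iff_integrableOn_Ioc_of_le zero_le_one).mp
          (intervalIntegral.intervalIntegrable_rpow' (by linarith : (-1:ℝ) < α - 1)))
        hφmeas.aestronglyMeasurable ?_
      filter_upwards [ae_restrict_mem measurableSet_Ioc] with v hv
      have hv0 : (0:ℝ) < v := hv.1
      have h1 : (0:ℝ) ≤ 1 + v ^ α := by positivity
      rw [Real.norm_eq_abs, abs_of_nonneg (mul_nonneg (rpow_nonneg hv0.le _) (rpow_nonneg h1 _))]
      refine mul_le_of_le_one_right (rpow_nonneg hv0.le _) ?_
      exact Real.rpow_le_one_of_one_le_of_nonpos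
        (le_add_of_nonneg_right (rpow_nonneg hv0.le _)) (by linarith)
    · refine Integrable.mono'
        (integrableOn_Ioi_rpow_of_lt (show α - 1 + α * (-c) < -1 by nlinarith) one_pos)
        hφmeas.aestronglyMeasurable ?_
      filter_upwards [ae_restrict_mem measurableSet_Ioi] with v hv
      rw [mem_Ioi] at hv
      have hv0 : (0:ℝ) < v := lt_trans one_pos hv
      have h1 : (0:ℝ) ≤ 1 + v ^ α := by positivity
      rw [Real.norm_eq_abs, abs_of_nonneg (mul_nonneg (rpow_nonneg hv0.le _) (rpow_nonneg h1 _))]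
      have h2 : (1 + v ^ α) ^ (-c) ≤ (v ^ α) ^ (-c) :=
        Real.rpow_le_rpow_of_nonpos (Real.rpow_pos_of_pos hv0 α) (by linarith) (by linarith)
      calc v ^ (α - 1) * (1 + v ^ α) ^ (-c) ≤ v ^ (α - 1) * (v ^ α) ^ (-c) :=
            mul_le_mul_of_nonneg_left h2 (rpow_nonneg hv0.le _)
        _ = v ^ (α - 1 + α * (-c)) := by
            rw [← Real.rpow_mul hv0.le, ← Real.rpow_add hv0]
  -- value of the v-integral via FTC
  have hJ : ∫ v in Ioi (0:ℝ), v ^ (α - 1) * (1 + v ^ α) ^ (-c) = R := by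
    have hderiv : ∀ v ∈ Ioi (0:ℝ),
        HasDerivAt (fun v : ℝ => (1 + v ^ α) ^ (1 - c) / (α * (1 - c)))
          (v ^ (α - 1) * (1 + v ^ α) ^ (-c)) v := by
      intro v hv
      rw [mem_Ioi] at hv
      have hv1 : (0:ℝ) < 1 + v ^ α := by positivity
      have h1 : HasDerivAt (fun v : ℝ => 1 + v ^ α) (α * v ^ (α - 1)) v :=
        (Real.hasDerivAt_rpow_const (Or.inl hv.ne')).const_add 1
      have h2 := (h1.rpow_const (p := 1 - c) (Or.inl hv1.ne')).div_const (α * (1 - c))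
      refine h2.congr_deriv ?_
      rw [show (1:ℝ) - c - 1 = -c by ring]
      have h1c : (1:ℝ) - c ≠ 0 := by linarith
      field_simp
    have hcont : ContinuousWithinAt (fun v : ℝ => (1 + v ^ α) ^ (1 - c) / (α * (1 - c)))
        (Ici (0:ℝ)) 0 := by
      apply ContinuousAt.continuousWithinAt
      have h1 : ContinuousAt (fun v : ℝ => v ^ α) 0 :=
        Real.continuousAt_rpow_const 0 α (Or.inr hα.le)
      have h2 : ContinuousAt (fun v : ℝ => 1 + v ^ α) 0 := continuousAt_const.add h1
      refine (h2.rpow_const ?_).div_const _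
      left
      norm_num [Real.zero_rpow hα0]
    have htends : Tendsto (fun v : ℝ => (1 + v ^ α) ^ (1 - c) / (α * (1 - c)))
        atTop (𝓝 0) := by
      have h1 : Tendsto (fun v : ℝ => 1 + v ^ α) atTop atTop :=
        tendsto_atTop_add_const_left _ 1 (tendsto_rpow_atTop hα)
      have h2 : Tendsto (fun x : ℝ => x ^ (1 - c)) atTop (𝓝 0) := by
        simpa [show -(c - 1) = 1 - c by ring] using tendsto_rpow_neg_atTop hc1
      simpa using (h2.comp h1).div_const (α * (1 - c))
    rw [integral_Ioi_of_hasDerivAt_of_tendsto hcont hderiv hφint htends]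
    rw [Real.zero_rpow hα0, add_zero, Real.one_rpow, hR, zero_sub]
    have h1c : (1:ℝ) - c ≠ 0 := by linarith
    have hcc : c - 1 ≠ 0 := hc1.ne'
    rw [show α * (1 - c) = -(α * (c - 1)) by ring, div_neg, neg_neg]
  -- lintegral version of the v-integral
  have hK : ∫⁻ v in Ioi (0:ℝ), ENNReal.ofReal (v ^ (α - 1) * (1 + v ^ α) ^ (-c))
      = ENNReal.ofReal R := by
    rw [← ofReal_integral_eq_lintegral_ofReal hφint ?_, hJ]
    filter_upwards [ae_restrict_mem measurableSet_Ioi] with v hv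
    rw [mem_Ioi] at hv
    have h1 : (0:ℝ) ≤ 1 + v ^ α := by positivity
    exact mul_nonneg (rpow_nonneg hv.le _) (rpow_nonneg h1 _)
  -- Tonelli
  have hswap : ∫⁻ z, (∫⁻ v in Ioi (0:ℝ), f z v) ∂μ = ENNReal.ofReal R := by
    rw [lintegral_lintegral_swap hfmeas.aemeasurable, ← hK]
    exact setLIntegral_congr_fun measurableSet_Ioi hA
  have hgmeas : Measurable fun z => ∫⁻ v in Ioi (0:ℝ), f z v :=
    Measurable.lintegral_prod_right hfmeas
  -- inner v-lintegral is infinite at z = 0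
  have hg0 : (∫⁻ v in Ioi (0:ℝ), f 0 v) = ∞ := by
    by_contra h
    refine not_integrableOn_Ioi_rpow (α - 1) ?_
    refine ⟨(measurable_id.pow measurable_const).aestronglyMeasurable, ?_⟩
    rw [hasFiniteIntegral_iff_ofReal ?_]
    · have heq : ∀ᵐ v ∂(volume.restrict (Ioi (0:ℝ))),
          ENNReal.ofReal (v ^ (α - 1)) = f 0 v := by
        filter_upwards [] with v
        rw [hfdef]
        norm_num
      rw [lintegral_congr_ae heq]
      exact lt_top_iff_ne_top.mpr h
    · filter_upwards [ae_restrict_mem measurableSet_Ioi] with v hv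
      exact rpow_nonneg (le_of_lt hv) _
  -- inner v-lintegral for z > 0
  have hgz : ∀ z : ℝ, 0 < z →
      (∫⁻ v in Ioi (0:ℝ), f z v) = ENNReal.ofReal (Real.Gamma α * z ^ (-α)) := by
    intro z hz
    have hint : IntegrableOn (fun v : ℝ => v ^ (α - 1) * Real.exp (-(v * z))) (Ioi 0) := by
      have h1 := integrableOn_rpow_mul_exp_neg_mul_rpow
        (by linarith : (-1:ℝ) < α - 1) (zero_lt_one : (0:ℝ) < 1) hz
      refine h1.congr ?_
      filter_upwards [] with x
      rw [Real.rpow_one]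
      ring_nf
    have hnn : 0 ≤ᵐ[volume.restrict (Ioi (0:ℝ))]
        fun v : ℝ => v ^ (α - 1) * Real.exp (-(v * z)) := by
      filter_upwards [ae_restrict_mem measurableSet_Ioi] with v hv
      exact mul_nonneg (rpow_nonneg (le_of_lt hv) _) (Real.exp_pos _).le
    rw [hfdef]
    rw [← ofReal_integral_eq_lintegral_ofReal hint hnn]
    congr 1
    have heq : ∀ v : ℝ, v ^ (α - 1) * Real.exp (-(v * z)) = v ^ (α - 1) * Real.exp (-(z * v)) :=
      fun v => by rw [mul_comm v z]
    simp_rw [heq]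
    rw [integral_rpow_mul_exp_neg_mul_Ioi hα hz, one_div, Real.inv_rpow hz.le,
      ← Real.rpow_neg hz.le, mul_comm]
  -- identify the z-integrand a.e.
  have hIval : ∫⁻ z, ENNReal.ofReal (Real.Gamma α * z ^ (-α)) ∂μ = ENNReal.ofReal R := by
    rw [← hswap]
    apply lintegral_congr_ae
    have hlt : ∀ᵐ z ∂μ, (∫⁻ v in Ioi (0:ℝ), f z v) < ∞ :=
      ae_lt_top hgmeas (by rw [hswap]; exact ENNReal.ofReal_ne_top)
    filter_upwards [hpos, hlt] with z hz hfin
    rcases eq_or_lt_of_le hz with hz0 | hz'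
    · exfalso
      rw [← hz0, hg0] at hfin
      exact lt_irrefl _ hfin
    · exact (hgz z hz').symm
  -- split off the Gamma constant
  have hΓpos : 0 < Real.Gamma α := Real.Gamma_pos_of_pos hα
  have hsplit : ∫⁻ z, ENNReal.ofReal (Real.Gamma α * z ^ (-α)) ∂μ
      = ENNReal.ofReal (Real.Gamma α) * ∫⁻ z, ENNReal.ofReal (z ^ (-α)) ∂μ := by
    simp_rw [ENNReal.ofReal_mul hΓpos.le]
    rw [lintegral_const_mul' _ _ ENNReal.ofReal_ne_top]
  have hL : ENNReal.ofReal (Real.Gamma α) * ∫⁻ z, ENNReal.ofReal (z ^ (-α)) ∂μ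
      = ENNReal.ofReal R := by rw [← hsplit, hIval]
  have hLval : ∫⁻ z, ENNReal.ofReal (z ^ (-α)) ∂μ = ENNReal.ofReal (R / Real.Gamma α) := by
    rw [ENNReal.ofReal_div_of_pos hΓpos]
    exact (ENNReal.eq_div_iff (by simp [ENNReal.ofReal_eq_zero, not_le, hΓpos])
      ENNReal.ofReal_ne_top).mpr hL
  -- conclude
  have hnn2 : 0 ≤ᵐ[μ] fun z : ℝ => z ^ (-α) := by
    filter_upwards [hpos] with z hz
    exact rpow_nonneg hz _
  rw [integral_eq_lintegral_of_nonneg_ae hnn2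
    (measurable_id.pow measurable_const).aestronglyMeasurable]
  rw [hLval, ENNReal.toReal_ofReal (by positivity)]
  rw [Real.Gamma_add_one hα0, hR]
  have hΓ : Real.Gamma α ≠ 0 := hΓpos.ne'
  field_simp
end

section
/- Let 0 < α < 1, λ ≥ 0 and let ψ(t,λ) = e^{-t/α}λ/[1+(1−e^{-t})λ^α]^{1/α}. Then d/dt log(1 + ψ(t,λ)^α) = −ψ(t,λ)^α for all t > 0, and consequently ∫₀^∞ ψ(t,λ)^α dt = log(1+λ^α). -/
open MeasureTheory

theorem stmt12 (α lam : ℝ) (hα : 0 < α) (hα1 : α < 1) (hlam : 0 ≤ lam) :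
    let ψ : ℝ → ℝ := fun t =>
      Real.exp (-t / α) * lam / (1 + (1 - Real.exp (-t)) * lam ^ α) ^ (1 / α)
    (∀ t > (0:ℝ),
      HasDerivAt (fun s => Real.log (1 + ψ s ^ α)) (-(ψ t ^ α)) t) ∧
    ∫ t in Set.Ioi (0:ℝ), ψ t ^ α = Real.log (1 + lam ^ α) := by
  intro ψ
  set c : ℝ := lam ^ α with hc
  have hc0 : 0 ≤ c := Real.rpow_nonneg hlam α
  have hα0 : α ≠ 0 := ne_of_gt hα
  set D : ℝ → ℝ := fun t => 1 + (1 - Real.exp (-t)) * c with hD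
  have hDpos : ∀ t : ℝ, 0 ≤ t → 0 < D t := by
    intro t ht
    have h1 : Real.exp (-t) ≤ 1 := Real.exp_le_one_iff.mpr (by linarith)
    have : 0 ≤ (1 - Real.exp (-t)) * c := mul_nonneg (by linarith) hc0
    simp only [hD]; linarith
  -- key: ψ t ^ α = exp(-t) * c / D t for t ≥ 0
  have hkey : ∀ t : ℝ, 0 ≤ t → ψ t ^ α = Real.exp (-t) * c / D t := by
    intro t ht
    have hDt := hDpos t ht
    have hnum : 0 ≤ Real.exp (-t / α) * lam := mul_nonneg (Real.exp_pos _).le hlam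
    have h1 : (Real.exp (-t / α) * lam) ^ α = Real.exp (-t) * c := by
      rw [Real.mul_rpow (Real.exp_pos _).le hlam, ← Real.exp_one_rpow (-t / α),
        ← Real.rpow_mul (Real.exp_pos 1).le, Real.exp_one_rpow]
      congr 1
      · congr 1; field_simp
    have h2 : ((D t) ^ (1 / α)) ^ α = D t := by
      rw [← Real.rpow_mul hDt.le, one_div, inv_mul_cancel₀ hα0, Real.rpow_one]
    show (Real.exp (-t / α) * lam / (D t) ^ (1 / α)) ^ α = _
    rw [Real.div_rpow hnum (Real.rpow_nonneg hDt.le _), h1, h2]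
  have hlog : ∀ t : ℝ, 0 ≤ t →
      Real.log (1 + ψ t ^ α) = Real.log (1 + c) - Real.log (D t) := by
    intro t ht
    have hDt := hDpos t ht
    rw [hkey t ht]
    have : 1 + Real.exp (-t) * c / D t = (1 + c) / D t := by
      field_simp; simp only [hD]; ring
    rw [this, Real.log_div (by positivity) hDt.ne']
  -- derivative of D
  have hDderiv : ∀ t : ℝ, HasDerivAt D (Real.exp (-t) * c) t := by
    intro t
    have h1 : HasDerivAt (fun s : ℝ => Real.exp (-s)) (-Real.exp (-t)) t := by
      simpa [Function.comp_def] using (Real.hasDerivAt_exp (-t)).comp t (hasDerivAt_neg t)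
    have h2 : HasDerivAt (fun s : ℝ => 1 - Real.exp (-s)) (Real.exp (-t)) t := by
      simpa [Pi.sub_def] using (hasDerivAt_const t (1:ℝ)).sub h1
    simpa [hD] using ((h2.mul_const c).const_add 1)
  have hFderiv : ∀ t : ℝ, 0 < t →
      HasDerivAt (fun s => Real.log (D s)) (Real.exp (-t) * c / D t) t := by
    intro t ht
    exact (hDderiv t).log (hDpos t ht.le).ne'
  constructor
  · -- derivative statement
    intro t ht
    have heq : (fun s => Real.log (1 + ψ s ^ α)) =ᶠ[nhds t]
        (fun s => Real.log (1 + c) - Real.log (D s)) := by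
      filter_upwards [Ioi_mem_nhds ht] with s hs
      exact hlog s (le_of_lt hs)
    have h1 : HasDerivAt (fun s => Real.log (1 + c) - Real.log (D s))
        (-(Real.exp (-t) * c / D t)) t := by
      simpa using (hFderiv t ht).const_sub (Real.log (1 + c))
    have := h1.congr_of_eventuallyEq heq
    rwa [← hkey t ht.le] at this
  · -- integral
    have hint : ∫ t in Set.Ioi (0:ℝ), ψ t ^ α
        = ∫ t in Set.Ioi (0:ℝ), Real.exp (-t) * c / D t := by
      apply setIntegral_congr_fun measurableSet_Ioi
      intro t ht
      exact hkey t (le_of_lt ht)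
    rw [hint]
    have hcont : ContinuousWithinAt (fun s => Real.log (D s)) (Set.Ici 0) 0 := by
      apply ContinuousAt.continuousWithinAt
      exact (Real.continuousAt_log (hDpos 0 le_rfl).ne').comp (by fun_prop)
    have hpos : ∀ x ∈ Set.Ioi (0:ℝ), 0 ≤ Real.exp (-x) * c / D x := by
      intro x hx
      exact div_nonneg (mul_nonneg (Real.exp_pos _).le hc0) (hDpos x hx.out.le).le
    have htend : Filter.Tendsto (fun s => Real.log (D s)) Filter.atTop
        (nhds (Real.log (1 + c))) := by
      have h1 : Filter.Tendsto D Filter.atTop (nhds (1 + c)) := by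
        have : Filter.Tendsto (fun s : ℝ => 1 + (1 - Real.exp (-s)) * c)
            Filter.atTop (nhds (1 + (1 - 0) * c)) := by
          exact (((tendsto_const_nhds.sub
            Real.tendsto_exp_neg_atTop_nhds_zero).mul tendsto_const_nhds).const_add 1)
        simpa using this
      exact (Real.continuousAt_log (by positivity)).tendsto.comp h1
    have := integral_Ioi_of_hasDerivAt_of_nonneg hcont
      (fun x hx => hFderiv x hx) hpos htend
    rw [this]
    simp [hD]
end

section
/- Let 0 < α < 1, c₁ + c₂ > 1 with c₁, c₂ > 0, and t ≥ 0. Then ∫₀¹ B_{1,c₁+c₂-1}(dy)·[1 + ((1+t)^α − 1)y]^{-c₁} = ∫₀¹ B_{c₁,c₂}(dy)·[1 + ((1+t)^α − 1)y]^{-1}, where B_{a,b} denotes the Beta(a,b) distribution on [0,1]. -/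
open MeasureTheory

open Set

lemma beta_intOn {p q : ℝ} (hp : 0 < p) (hq : 0 < q) :
    IntegrableOn (fun x : ℝ => x ^ (p-1) * (1-x) ^ (q-1)) (Ioo 0 1) := by
  have h := (Complex.betaIntegral_convergent (u := p) (v := q) (by simpa using hp)
    (by simpa using hq)).1
  have h2 : IntegrableOn (fun x : ℝ =>
      ‖(x:ℂ) ^ ((p:ℂ)-1) * (1-(x:ℂ)) ^ ((q:ℂ)-1)‖) (Ioo 0 1) :=
    (h.mono_set Ioo_subset_Ioc_self).norm
  refine h2.congr_fun (fun x hx => ?_) measurableSet_Ioo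
  have hx0 : 0 < x := hx.1
  have hx1 : 0 < 1 - x := by linarith [hx.2]
  have e1 : ((1:ℂ) - x) = ((1 - x : ℝ) : ℂ) := by push_cast; ring
  beta_reduce
  rw [norm_mul, e1,
    Complex.norm_cpow_eq_rpow_re_of_pos hx0,
    Complex.norm_cpow_eq_rpow_re_of_pos hx1]
  norm_num

lemma beta_val {p q : ℝ} (hp : 0 < p) (hq : 0 < q) :
    ∫ x in Ioo (0:ℝ) 1, x ^ (p-1) * (1-x) ^ (q-1)
      = Real.Gamma p * Real.Gamma q / Real.Gamma (p+q) := by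
  have key := Complex.Gamma_mul_Gamma_eq_betaIntegral (s := p) (t := q)
    (by simpa using hp) (by simpa using hq)
  have hI : Complex.betaIntegral p q
      = ((∫ x in Ioo (0:ℝ) 1, x ^ (p-1) * (1-x) ^ (q-1) : ℝ) : ℂ) := by
    rw [Complex.betaIntegral, intervalIntegral.integral_of_le zero_le_one,
      MeasureTheory.integral_Ioc_eq_integral_Ioo]
    rw [show ((∫ x in Ioo (0:ℝ) 1, x ^ (p-1) * (1-x) ^ (q-1) : ℝ) : ℂ)
        = ∫ x in Ioo (0:ℝ) 1, ((x ^ (p-1) * (1-x) ^ (q-1) : ℝ) : ℂ) from (integral_ofReal).symm]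
    refine setIntegral_congr_fun measurableSet_Ioo (fun x hx => ?_)
    have hx0 : (0:ℝ) ≤ x := hx.1.le
    have hx1 : (0:ℝ) ≤ 1 - x := by linarith [hx.2.le]
    rw [Complex.ofReal_mul, Complex.ofReal_cpow hx0, Complex.ofReal_cpow hx1]
    push_cast
    ring
  rw [hI] at key
  have hG : Real.Gamma (p+q) ≠ 0 := (Real.Gamma_pos_of_pos (by linarith)).ne'
  have h2 : ((Real.Gamma p * Real.Gamma q : ℝ) : ℂ)
      = ((Real.Gamma (p+q) * ∫ x in Ioo (0:ℝ) 1, x ^ (p-1) * (1-x) ^ (q-1) : ℝ) : ℂ) := by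
    push_cast
    rw [show ((p:ℂ) + q) = ((p + q : ℝ) : ℂ) by push_cast; ring] at key
    simp only [← Complex.Gamma_ofReal]
    exact key
  have h3 := Complex.ofReal_inj.mp h2
  field_simp
  linarith [h3]

lemma lemA {c a : ℝ} (hc : 1 < c) (ha : 0 ≤ a) :
    ∫ y in Ioo (0:ℝ) 1, (c-1) * (1-y)^(c-2) * (1+a*y)^(-c) = (1+a)⁻¹ := by
  have ha1 : (0:ℝ) < 1 + a := by linarith
  set F : ℝ → ℝ := fun y => -(1+a)⁻¹ * ((1-y)^(c-1) * (1+a*y)^(1-c)) with hF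
  have hcont : ContinuousOn F (Icc 0 1) := by
    apply ContinuousOn.mul continuousOn_const
    apply ContinuousOn.mul
    · apply ContinuousOn.rpow_const (by fun_prop)
      exact fun x _ => Or.inr (by linarith)
    · apply ContinuousOn.rpow_const (by fun_prop)
      intro x hx
      have : 0 < 1 + a * x := by nlinarith [hx.1]
      exact Or.inl this.ne'
  have hint : IntervalIntegrable (fun y => (c-1) * (1-y)^(c-2) * (1+a*y)^(-c)) volume 0 1 := by
    have h1 : IntervalIntegrable (fun x : ℝ => x ^ (c-2)) volume 0 1 :=
      intervalIntegral.intervalIntegrable_rpow' (by linarith)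
    have h2 : IntervalIntegrable (fun x : ℝ => (1 - x) ^ (c-2)) volume 0 1 := by
      simpa using (h1.comp_sub_left 1).symm
    have h3 := (h2.const_mul (c-1)).mul_continuousOn (g := fun y => (1+a*y)^(-c)) ?_
    · simpa [mul_comm, mul_assoc, mul_left_comm] using h3
    · apply ContinuousOn.rpow_const (by fun_prop)
      intro x hx
      rw [uIcc_of_le zero_le_one] at hx
      have : 0 < 1 + a * x := by nlinarith [hx.1]
      exact Or.inl this.ne'
  have hderiv : ∀ y ∈ Ioo (0:ℝ) 1,
      HasDerivWithinAt F ((c-1) * (1-y)^(c-2) * (1+a*y)^(-c)) (Ioi y) y := by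
    intro y hy
    have hy1 : 0 < 1 - y := by linarith [hy.2]
    have hy2 : 0 < 1 + a * y := by nlinarith [hy.1]
    have d1 : HasDerivAt (fun x : ℝ => (1-x)^(c-1)) ((c-1) * (1-y)^(c-1-1) * (-1)) y := by
      have h := ((hasDerivAt_id y).const_sub 1).rpow_const (p := c-1) (Or.inl hy1.ne')
      convert h using 1 <;> simp <;> ring
    have d2 : HasDerivAt (fun x : ℝ => (1+a*x)^(1-c)) ((1-c) * (1+a*y)^(1-c-1) * a) y := by
      have : HasDerivAt (fun x : ℝ => 1 + a * x) a y := by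
        simpa using ((hasDerivAt_id y).const_mul a).const_add 1
      have h := this.rpow_const (p := 1-c) (Or.inl hy2.ne')
      convert h using 1
      ring
    have hD := ((d1.mul d2).const_mul (-(1+a)⁻¹))
    refine (HasDerivAt.hasDerivWithinAt ?_)
    convert hD using 1
    · rfl
    · rfl
    have e1 : (1-y)^(c-1) = (1-y)^(c-2) * (1-y) := by
      rw [show c-1 = (c-2) + 1 by ring, Real.rpow_add hy1, Real.rpow_one]
    have e2 : (1+a*y)^(1-c) = (1+a*y)^(-c) * (1+a*y) := by
      rw [show 1-c = (-c) + 1 by ring, Real.rpow_add hy2, Real.rpow_one]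
    rw [show c-1-1 = c-2 by ring, show 1-c-1 = -c by ring, e1, e2]
    have hne : (1+a:ℝ) ≠ 0 := ha1.ne'
    field_simp
    ring
  have key := intervalIntegral.integral_eq_sub_of_hasDeriv_right_of_le zero_le_one hcont hderiv hint
  rw [intervalIntegral.integral_of_le zero_le_one, MeasureTheory.integral_Ioc_eq_integral_Ioo] at key
  rw [key, hF]
  simp only [sub_self, sub_zero, mul_zero, mul_one]
  rw [Real.zero_rpow (by linarith : c-1 ≠ 0), Real.one_rpow]
  simp [Real.one_rpow]

lemma lemB {c₁ c₂ w : ℝ} (hc₁ : 0 < c₁) (hc₂ : 0 < c₂) (hw : 0 ≤ w) :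
    ∫ x in Ioo (0:ℝ) 1, x^(c₁-1) * (1-x)^(c₂-1) * (1+w*x)^(-(c₁+c₂))
      = (1+w)^(-c₁) * ∫ u in Ioo (0:ℝ) 1, u^(c₁-1) * (1-u)^(c₂-1) := by
  have hw1 : (0:ℝ) < 1 + w := by linarith
  set f : ℝ → ℝ := fun u => u / (1 + w - w * u) with hf
  have hD : ∀ u : ℝ, u < 1 → 0 < 1 + w - w * u := by intro u hu; nlinarith
  have hder : ∀ u ∈ Ioo (0:ℝ) 1,
      HasDerivWithinAt f ((1+w) / (1 + w - w * u)^2) (Ioo (0:ℝ) 1) u := by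
    intro u hu
    have h1 : HasDerivAt (fun u : ℝ => u) 1 u := hasDerivAt_id u
    have h2 : HasDerivAt (fun u : ℝ => 1 + w - w * u) (-w) u := by
      simpa using (((hasDerivAt_id u).const_mul w).const_sub (1+w))
    have h := h1.div h2 (hD u hu.2).ne'
    refine (HasDerivAt.hasDerivWithinAt ?_)
    convert h using 1
    · rfl
    · rfl
    field_simp
    ring
  have hinj : InjOn f (Ioo 0 1) := by
    intro u₁ h₁ u₂ h₂ he
    have d₁ := (hD u₁ h₁.2).ne'
    have d₂ := (hD u₂ h₂.2).ne'
    rw [hf] at he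
    field_simp at he
    rw [div_eq_iff (by rwa [mul_comm u₁ w])] at he
    nlinarith [he]
  have himg : f '' (Ioo 0 1) = Ioo 0 1 := by
    ext x
    constructor
    · rintro ⟨u, hu, rfl⟩
      have hDu := hD u hu.2
      constructor
      · exact div_pos hu.1 hDu
      · rw [div_lt_one hDu]; nlinarith [hu.1, hu.2]
    · intro hx
      refine ⟨(1+w) * x / (1 + w * x), ⟨?_, ?_⟩, ?_⟩
      · have : 0 < 1 + w * x := by nlinarith [hx.1]
        exact div_pos (mul_pos hw1 hx.1) this
      · rw [div_lt_one (by nlinarith [hx.1])]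
        nlinarith [hx.2]
      · have hx1 : 0 < 1 + w * x := by nlinarith [hx.1]
        have h0 : (1+w) ≠ 0 := hw1.ne'
        have hden : 1 + w - w * ((1+w) * x / (1 + w * x)) = (1+w)/(1+w*x) := by
          field_simp; ring
        show (1+w) * x / (1 + w * x) / (1 + w - w * ((1+w) * x / (1 + w * x))) = x
        rw [hden, div_div_div_cancel_right₀]
        · field_simp
        · exact hx1.ne'
  have key := MeasureTheory.integral_image_eq_integral_abs_deriv_smul measurableSet_Ioo hder hinj
    (fun x => x^(c₁-1) * (1-x)^(c₂-1) * (1+w*x)^(-(c₁+c₂)))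
  rw [himg] at key
  rw [key, ← MeasureTheory.integral_const_mul]
  refine setIntegral_congr_fun measurableSet_Ioo (fun u hu => ?_)
  have hu0 := hu.1
  have hu1 : 0 < 1 - u := by linarith [hu.2]
  have hDu := hD u hu.2
  have e1 : f u = u / (1 + w - w * u) := rfl
  have e2 : 1 - f u = (1+w) * (1-u) / (1 + w - w * u) := by
    rw [e1, eq_div_iff hDu.ne', sub_mul, div_mul_cancel₀ _ hDu.ne']; ring
  have e3 : 1 + w * f u = (1+w) / (1 + w - w * u) := by
    rw [e1]; field_simp; ring
  have habs : |(1+w) / (1 + w - w * u)^2| = (1+w) / (1 + w - w * u)^2 := by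
    rw [abs_of_pos]; positivity
  rw [smul_eq_mul, habs, e1, e2, e3,
    Real.div_rpow hu0.le hDu.le,
    Real.div_rpow (by positivity) hDu.le, Real.mul_rpow hw1.le hu1.le,
    Real.div_rpow hw1.le hDu.le]
  rw [Real.rpow_neg hw1.le (c₁+c₂), Real.rpow_neg hDu.le (c₁+c₂), Real.rpow_neg hw1.le c₁]
  have eD : (1 + w - w*u)^(c₁+c₂) = (1 + w - w*u)^(c₁-1) * (1 + w - w*u)^(c₂-1) * (1 + w - w*u)^2 := by
    rw [← Real.rpow_natCast (1 + w - w*u) 2, ← Real.rpow_add hDu, ← Real.rpow_add hDu]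
    congr 1
    push_cast
    ring
  have eW : (1 + w)^(c₁+c₂) = (1 + w)^(c₂-1) * (1 + w)^(c₁) * (1 + w) := by
    have h2 : (1 + w)^(c₁+c₂) = (1 + w)^(c₂-1) * (1 + w)^(c₁) * (1 + w)^(1:ℝ) := by
      rw [← Real.rpow_add hw1, ← Real.rpow_add hw1]
      congr 1
      ring
    rw [h2, Real.rpow_one]
  rw [eD, eW]
  have p1 : (0:ℝ) < u^(c₁-1) := Real.rpow_pos_of_pos hu0 _
  have p2 : (0:ℝ) < (1-u)^(c₂-1) := Real.rpow_pos_of_pos hu1 _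
  have p3 : (0:ℝ) < (1+w)^(c₂-1) := Real.rpow_pos_of_pos hw1 _
  have p4 : (0:ℝ) < (1+w)^(c₁:ℝ) := Real.rpow_pos_of_pos hw1 _
  have p5 : (0:ℝ) < (1 + w - w*u)^(c₁-1) := Real.rpow_pos_of_pos hDu _
  have p6 : (0:ℝ) < (1 + w - w*u)^(c₂-1) := Real.rpow_pos_of_pos hDu _
  field_simp

theorem stmt15 (α c₁ c₂ t : ℝ) (hα : 0 < α) (hα1 : α < 1) (hc₁ : 0 < c₁) (hc₂ : 0 < c₂)
    (hsum : 1 < c₁ + c₂) (ht : 0 ≤ t) :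
    ∫ y in Set.Icc (0:ℝ) 1,
        betaDensity 1 (c₁ + c₂ - 1) y * (1 + ((1 + t) ^ α - 1) * y) ^ (-c₁)
      = ∫ y in Set.Icc (0:ℝ) 1,
          betaDensity c₁ c₂ y * (1 + ((1 + t) ^ α - 1) * y)⁻¹ := by
  set s : ℝ := (1 + t) ^ α - 1 with hs_def
  have hs : 0 ≤ s := by
    have h1 : (1:ℝ) ≤ (1 + t) ^ α := by
      calc (1:ℝ) = 1 ^ α := (Real.one_rpow α).symm
      _ ≤ (1 + t) ^ α := Real.rpow_le_rpow zero_le_one (by linarith) hα.le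
    simp [hs_def]; linarith
  set c : ℝ := c₁ + c₂ with hc_def
  have hc : 1 < c := hsum
  have hΓc1 : (0:ℝ) < Real.Gamma (c - 1) := Real.Gamma_pos_of_pos (by linarith)
  have hΓc : (0:ℝ) < Real.Gamma c := Real.Gamma_pos_of_pos (by linarith)
  have hΓ1 : (0:ℝ) < Real.Gamma c₁ := Real.Gamma_pos_of_pos hc₁
  have hΓ2 : (0:ℝ) < Real.Gamma c₂ := Real.Gamma_pos_of_pos hc₂
  -- the beta normalizing integral
  set B : ℝ := ∫ u in Ioo (0:ℝ) 1, u^(c₁-1) * (1-u)^(c₂-1) with hB_def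
  have hBval : B = Real.Gamma c₁ * Real.Gamma c₂ / Real.Gamma c := beta_val hc₁ hc₂
  have hBpos : 0 < B := by rw [hBval]; positivity
  -- rewrite LHS
  have hL : ∫ y in Set.Icc (0:ℝ) 1,
        betaDensity 1 (c₁ + c₂ - 1) y * (1 + s * y) ^ (-c₁)
      = ∫ y in Ioo (0:ℝ) 1, (c-1) * (1-y)^(c-2) * (1+s*y)^(-c₁) := by
    rw [MeasureTheory.integral_Icc_eq_integral_Ioo]
    refine setIntegral_congr_fun measurableSet_Ioo (fun y hy => ?_)
    rw [betaDensity]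
    rw [show (1:ℝ) + (c₁ + c₂ - 1) = c by rw [hc_def]; ring,
      show c₁ + c₂ - 1 - 1 = c - 2 by rw [hc_def]; ring]
    rw [Real.Gamma_one, sub_self, Real.rpow_zero]
    have hGamma : Real.Gamma c = (c-1) * Real.Gamma (c-1) := by
      conv_lhs => rw [show c = (c-1) + 1 by ring]
      rw [Real.Gamma_add_one (by linarith : c - 1 ≠ 0)]
    rw [hGamma]
    rw [← hc_def]
    field_simp
  -- rewrite RHS
  have hR : ∫ y in Set.Icc (0:ℝ) 1, betaDensity c₁ c₂ y * (1 + s * y)⁻¹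
      = B⁻¹ * ∫ x in Ioo (0:ℝ) 1, x^(c₁-1) * (1-x)^(c₂-1) * (1+s*x)⁻¹ := by
    rw [MeasureTheory.integral_Icc_eq_integral_Ioo, ← MeasureTheory.integral_const_mul]
    refine setIntegral_congr_fun measurableSet_Ioo (fun y hy => ?_)
    rw [betaDensity, hBval]
    rw [show Real.Gamma c₁ * Real.Gamma c₂ / Real.Gamma c = (Real.Gamma c / (Real.Gamma c₁ * Real.Gamma c₂))⁻¹ by
      rw [inv_div]]
    rw [inv_inv]
    rw [← hc_def]
    ring
  rw [hL, hR]
  -- integrability ingredients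
  have hint1 : IntegrableOn (fun y : ℝ => (c-1) * (1-y)^(c-2)) (Ioo 0 1) := by
    have h : IntegrableOn (fun x : ℝ => (c-1) * (x ^ ((1:ℝ)-1) * (1-x) ^ (c-1-1))) (Ioo 0 1) :=
      (beta_intOn (p := 1) (q := c-1) one_pos (by linarith)).const_mul (c-1)
    refine h.congr_fun (fun y hy => ?_) measurableSet_Ioo
    beta_reduce
    rw [sub_self, Real.rpow_zero, show c-1-1 = c-2 by ring]
    ring
  have hint2 : IntegrableOn (fun x : ℝ => x^(c₁-1) * (1-x)^(c₂-1)) (Ioo 0 1) :=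
    beta_intOn hc₁ hc₂
  -- the two-variable function (y first, x second)
  set F : ℝ → ℝ → ℝ := fun y x =>
    (c-1) * (1-y)^(c-2) * (x^(c₁-1) * (1-x)^(c₂-1) * (1+s*x*y)^(-c)) with hF_def
  have hFmeas : AEStronglyMeasurable (Function.uncurry F)
      ((volume.restrict (Ioo (0:ℝ) 1)).prod (volume.restrict (Ioo (0:ℝ) 1))) := by
    apply Measurable.aestronglyMeasurable
    fun_prop
  have hFint : Integrable (Function.uncurry F)
      ((volume.restrict (Ioo (0:ℝ) 1)).prod (volume.restrict (Ioo (0:ℝ) 1))) := by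
    have hG : Integrable (fun z : ℝ × ℝ =>
        ((c-1) * (1-z.1)^(c-2)) * (z.2^(c₁-1) * (1-z.2)^(c₂-1)))
        ((volume.restrict (Ioo (0:ℝ) 1)).prod (volume.restrict (Ioo (0:ℝ) 1))) :=
      hint1.mul_prod hint2
    refine hG.mono hFmeas ?_
    rw [Measure.prod_restrict]
    filter_upwards [ae_restrict_mem (measurableSet_Ioo.prod measurableSet_Ioo)] with z hz
    obtain ⟨hz1, hz2⟩ := hz
    have hy0 : 0 < z.1 := hz1.1
    have hy1 : 0 < 1 - z.1 := by linarith [hz1.2]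
    have hx0 : 0 < z.2 := hz2.1
    have hx1 : 0 < 1 - z.2 := by linarith [hz2.2]
    have hbase : (1:ℝ) ≤ 1 + s * z.2 * z.1 := by
      have := mul_nonneg (mul_nonneg hs hx0.le) hy0.le
      linarith
    have hfac : (1 + s * z.2 * z.1) ^ (-c) ≤ 1 :=
      Real.rpow_le_one_of_one_le_of_nonpos hbase (by linarith)
    have hfac0 : 0 ≤ (1 + s * z.2 * z.1) ^ (-c) := Real.rpow_nonneg (by linarith) _
    have h1 : (0:ℝ) ≤ (1-z.1)^(c-2) := Real.rpow_nonneg hy1.le _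
    have h2 : (0:ℝ) ≤ z.2^(c₁-1) := Real.rpow_nonneg hx0.le _
    have h3 : (0:ℝ) ≤ (1-z.2)^(c₂-1) := Real.rpow_nonneg hx1.le _
    have hcn : (0:ℝ) ≤ c - 1 := by linarith
    rw [Function.uncurry, hF_def]
    simp only [Real.norm_eq_abs]
    rw [abs_of_nonneg (by positivity), abs_of_nonneg (by positivity)]
    calc (c-1) * (1-z.1)^(c-2) * (z.2^(c₁-1) * (1-z.2)^(c₂-1) * (1+s*z.2*z.1)^(-c))
        ≤ (c-1) * (1-z.1)^(c-2) * (z.2^(c₁-1) * (1-z.2)^(c₂-1) * 1) := by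
          apply mul_le_mul_of_nonneg_left _ (by positivity)
          exact mul_le_mul_of_nonneg_left hfac (by positivity)
      _ = (c-1) * (1-z.1)^(c-2) * (z.2^(c₁-1) * (1-z.2)^(c₂-1)) := by ring
  -- main computation
  calc ∫ y in Ioo (0:ℝ) 1, (c-1) * (1-y)^(c-2) * (1+s*y)^(-c₁)
      = ∫ y in Ioo (0:ℝ) 1, B⁻¹ * ∫ x in Ioo (0:ℝ) 1, F y x := by
        refine setIntegral_congr_fun measurableSet_Ioo (fun y hy => ?_)
        have hy0 : (0:ℝ) ≤ s * y := by nlinarith [hy.1.le]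
        have hlemB := lemB hc₁ hc₂ hy0
        rw [← hc_def] at hlemB
        have he : (1 + s*y)^(-c₁) = B⁻¹ * ∫ x in Ioo (0:ℝ) 1,
            x^(c₁-1) * (1-x)^(c₂-1) * (1+(s*y)*x)^(-c) := by
          rw [hlemB, ← hB_def]
          field_simp
        have hFx : (∫ x in Ioo (0:ℝ) 1, F y x)
            = (c-1) * (1-y)^(c-2) * ∫ x in Ioo (0:ℝ) 1,
              x^(c₁-1) * (1-x)^(c₂-1) * (1+(s*y)*x)^(-c) := by
          rw [← MeasureTheory.integral_const_mul]
          refine setIntegral_congr_fun measurableSet_Ioo (fun x hx => ?_)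
          rw [hF_def, show s*y*x = s*x*y by ring]
        rw [he, hFx]
        ring
    _ = B⁻¹ * ∫ y in Ioo (0:ℝ) 1, ∫ x in Ioo (0:ℝ) 1, F y x :=
        MeasureTheory.integral_const_mul _ _
    _ = B⁻¹ * ∫ x in Ioo (0:ℝ) 1, ∫ y in Ioo (0:ℝ) 1, F y x := by
        rw [MeasureTheory.integral_integral_swap hFint]
    _ = B⁻¹ * ∫ x in Ioo (0:ℝ) 1, x^(c₁-1) * (1-x)^(c₂-1) * (1+s*x)⁻¹ := by
        congr 1
        refine setIntegral_congr_fun measurableSet_Ioo (fun x hx => ?_)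
        have hx0 : (0:ℝ) ≤ s * x := by nlinarith [hx.1.le]
        have hlemA := lemA hc hx0
        have h1 : (∫ y in Ioo (0:ℝ) 1, F y x)
            = (x^(c₁-1) * (1-x)^(c₂-1)) * ∫ y in Ioo (0:ℝ) 1,
              (c-1) * (1-y)^(c-2) * (1+(s*x)*y)^(-c) := by
          rw [← MeasureTheory.integral_const_mul]
          refine setIntegral_congr_fun measurableSet_Ioo (fun y hy => ?_)
          rw [hF_def]
          ring
        rw [h1, hlemA]
end
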